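/- arXiv:2508.03136 — 4 statements merged into one kernel-verified Lean document; each statement's English description precedes it below -/
import Mathlib

section
/- (Fixed points of Robust Nash-Iteration are Nash Equilibria.) Assume the multi-agent irreducibility assumption (for every deterministic joint policy d : S → A and every kernel P ∈ 𝒫, the matrix P^d is irreducible) and that each 𝒫^a_s is nonempty, compact, and convex. Suppose a product policy π, constants c_1, …, c_N ∈ ℝ, and vectors h_1, …, h_N : S → ℝ satisfy: (a) h_i(s) + c_i = ∑_a π(a|s) ( r_i(s,a) + σ_{𝒫^a_s}(h_i) ) for every i and s; and (b) for every s, π(·|s) is a Nash equilibrium of the stage game with payoffs Q_i(s,a) = r_i(s,a) + σ_{𝒫^a_s}(h_i), i.e. for every i and every μ ∈ Δ(A_i), ∑_a π(a|s) Q_i(s,a) ≥ ∑_a ( ∏_{j≠i} π_j(a_j|s) ) μ(a_i) Q_i(s,a). Then π is a Nash Equilibrium of the average-reward distributionally robust Markov game: g^{π}_{𝒫,i}(s) ≥ g^{(π_{−i}, μ_i)}_{𝒫,i}(s) for every i, every μ_i : S → Δ(A_i), and every s. -/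
open scoped BigOperators
open Matrix Filter

/-- Support function `σ_Q(V) = min_{p ∈ Q} ∑_{s'} p(s') V(s')` (as an infimum,
which is attained when `Q` is nonempty and compact). -/
noncomputable def suppF {S : Type*} [Fintype S] (Q : Set (S → ℝ)) (V : S → ℝ) : ℝ :=
  sInf ((fun p => ∑ s', p s' * V s') '' Q)

/-- The stochastic matrix `P^π` induced by a stationary policy `π` and a kernel `P`. -/
noncomputable def polMat {S A : Type*} [Fintype S] [Fintype A]
    (π : S → A → ℝ) (P : S → A → S → ℝ) : Matrix S S ℝ :=
  Matrix.of fun s s' => ∑ a, π s a * P s a s'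

/-- The reward vector `r^π`. -/
noncomputable def polRew {S A : Type*} [Fintype A]
    (π : S → A → ℝ) (r : S → A → ℝ) : S → ℝ :=
  fun s => ∑ a, π s a * r s a

/-- The average reward `g^π_P(s) = liminf_n (1/n) ∑_{t<n} ((P^π)^t r^π)(s)`. -/
noncomputable def avgR {S A : Type*} [Fintype S] [DecidableEq S] [Fintype A]
    (π : S → A → ℝ) (P : S → A → S → ℝ) (r : S → A → ℝ) (s : S) : ℝ :=
  Filter.liminf
    (fun n : ℕ => (∑ t ∈ Finset.range n, ((polMat π P ^ t) *ᵥ polRew π r) s) / n)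
    Filter.atTop

/-- The robust average reward `g^π_U(s) = inf_{P ∈ U} g^π_P(s)`. -/
noncomputable def robAvgR {S A : Type*} [Fintype S] [DecidableEq S] [Fintype A]
    (U : S → A → Set (S → ℝ)) (π : S → A → ℝ) (r : S → A → ℝ) (s : S) : ℝ :=
  sInf {x | ∃ P : S → A → S → ℝ, (∀ s' a, P s' a ∈ U s' a) ∧ x = avgR π P r s}

/-- A stochastic matrix is irreducible: all states communicate. -/
def IrredM {S : Type*} [Fintype S] [DecidableEq S] (M : Matrix S S ℝ) : Prop :=
  ∀ s s' : S, ∃ k : ℕ, 1 ≤ k ∧ 0 < (M ^ k) s s'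

/-- Assumption 1: for every deterministic policy `d` and every kernel `P ∈ U`,
the matrix `P^d` is irreducible. -/
def Assump1 {S A : Type*} [Fintype S] [DecidableEq S]
    (U : S → A → Set (S → ℝ)) : Prop :=
  ∀ (d : S → A) (P : S → A → S → ℝ), (∀ s a, P s a ∈ U s a) →
    IrredM (Matrix.of fun s s' => P s (d s) s')

/-- The joint policy `π(a|s) = ∏ i π_i(a_i|s)` of a product policy. -/
noncomputable def jointPol {S : Type*} {N : ℕ} {A : Fin N → Type*}
    (π : ∀ i, S → A i → ℝ) : S → (∀ i, A i) → ℝ :=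
  fun s a => ∏ i, π i s (a i)

lemma suppF_spec {S : Type*} [Fintype S] (Q : Set (S → ℝ)) (hne : Q.Nonempty)
    (hc : IsCompact Q) (V : S → ℝ) :
    (∃ p ∈ Q, ∑ s', p s' * V s' = suppF Q V) ∧
      (∀ q ∈ Q, suppF Q V ≤ ∑ s', q s' * V s') := by
  have hcont : Continuous fun p : S → ℝ => ∑ s', p s' * V s' :=
    continuous_finset_sum _ fun s' _ => (continuous_apply s').mul continuous_const
  obtain ⟨p0, hp0Q, hp0min⟩ := hc.exists_isMinOn hne hcont.continuousOn
  have hmin : ∀ q ∈ Q, (∑ s', p0 s' * V s') ≤ ∑ s', q s' * V s' := fun q hq => hp0min hq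
  have hbdd : BddBelow ((fun p => ∑ s', p s' * V s') '' Q) := by
    refine ⟨∑ s', p0 s' * V s', ?_⟩
    rintro x ⟨q, hq, rfl⟩
    exact hmin q hq
  have heq : suppF Q V = ∑ s', p0 s' * V s' := by
    refine le_antisymm (csInf_le hbdd ⟨p0, hp0Q, rfl⟩) ?_
    refine le_csInf (hne.image _) ?_
    rintro x ⟨q, hq, rfl⟩
    exact hmin q hq
  exact ⟨⟨p0, hp0Q, heq.symm⟩, fun q hq => heq ▸ hmin q hq⟩


lemma jointPol_sum {S : Type*} {N : ℕ} {A : Fin N → Type*} [∀ i, Fintype (A i)]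
    (π : ∀ i, S → A i → ℝ) (hπ : ∀ j s, ∑ a, π j s a = 1) (s : S) :
    ∑ a : (∀ j, A j), jointPol π s a = 1 := by
  classical
  unfold jointPol
  have hps := Finset.prod_univ_sum (fun _ : Fin N => (Finset.univ : Finset _))
    (fun j aj => π j s aj)
  rw [Fintype.piFinset_univ] at hps
  rw [← hps]
  simp [hπ]

lemma polMat_mulVec {S A : Type*} [Fintype S] [Fintype A]
    (π : S → A → ℝ) (P : S → A → S → ℝ) (hh : S → ℝ) (s : S) :
    (polMat π P *ᵥ hh) s = ∑ a, π s a * ∑ s', P s a s' * hh s' := by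
  unfold polMat Matrix.mulVec dotProduct
  simp only [Matrix.of_apply, Finset.sum_mul, Finset.mul_sum]
  rw [Finset.sum_comm]
  exact Finset.sum_congr rfl fun a _ => Finset.sum_congr rfl fun s' _ => by ring

set_option linter.unusedSectionVars false
section helpers
variable {S : Type*} [Fintype S] [DecidableEq S]

lemma stoch_pow (M : Matrix S S ℝ) (h0 : ∀ s s', 0 ≤ M s s') (h1 : ∀ s, ∑ s', M s s' = 1)
    (k : ℕ) : (∀ s s', 0 ≤ (M ^ k) s s') ∧ (∀ s, ∑ s', (M ^ k) s s' = 1) := by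
  induction k with
  | zero =>
    refine ⟨fun s s' => ?_, fun s => ?_⟩
    · rw [pow_zero]; by_cases hss : s = s' <;> simp [Matrix.one_apply, hss]
    · rw [pow_zero]; simp [Matrix.one_apply]
  | succ n ih =>
    rw [pow_succ]
    refine ⟨fun s s' => ?_, fun s => ?_⟩
    · rw [Matrix.mul_apply]
      exact Finset.sum_nonneg fun t _ => mul_nonneg (ih.1 s t) (h0 t s')
    · simp only [Matrix.mul_apply]
      rw [Finset.sum_comm]
      simp only [← Finset.mul_sum, h1, mul_one]
      exact ih.2 s

omit [DecidableEq S] in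
lemma mulVec_mono (M : Matrix S S ℝ) (h0 : ∀ s s', 0 ≤ M s s') {u v : S → ℝ}
    (huv : ∀ s, u s ≤ v s) (s : S) : (M *ᵥ u) s ≤ (M *ᵥ v) s := by
  unfold Matrix.mulVec dotProduct
  exact Finset.sum_le_sum fun t _ => mul_le_mul_of_nonneg_left (huv t) (h0 s t)

omit [DecidableEq S] in
lemma mulVec_abs_le (M : Matrix S S ℝ) (h0 : ∀ s s', 0 ≤ M s s') (h1 : ∀ s, ∑ s', M s s' = 1)
    (u : S → ℝ) (s : S) : |(M *ᵥ u) s| ≤ ∑ s', |u s'| := by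
  unfold Matrix.mulVec dotProduct
  calc |∑ t, M s t * u t| ≤ ∑ t, |M s t * u t| := Finset.abs_sum_le_sum_abs _ _
    _ ≤ ∑ t, |u t| := by
        refine Finset.sum_le_sum fun t _ => ?_
        rw [abs_mul, abs_of_nonneg (h0 s t)]
        have hle1 : M s t ≤ 1 := by
          have h2 : M s t ≤ ∑ s', M s s' :=
            Finset.single_le_sum (fun t' _ => h0 s t') (Finset.mem_univ t)
          linarith [h1 s]
        nlinarith [abs_nonneg (u t)]

lemma key_telescope (M : Matrix S S ℝ) (h0 : ∀ s s', 0 ≤ M s s') (h1 : ∀ s, ∑ s', M s s' = 1)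
    (rr hh : S → ℝ) (cc : ℝ) (hbel : ∀ s, cc + hh s ≤ rr s + (M *ᵥ hh) s) :
    ∀ n s, n * cc + hh s ≤ (∑ t ∈ Finset.range n, ((M ^ t) *ᵥ rr) s) + ((M ^ n) *ᵥ hh) s := by
  intro n
  induction n with
  | zero => intro s; simp
  | succ n ih =>
    intro s
    have step : cc + ((M ^ n) *ᵥ hh) s ≤ ((M ^ n) *ᵥ rr) s + ((M ^ (n+1)) *ᵥ hh) s := by
      have mono := mulVec_mono (M ^ n) (stoch_pow M h0 h1 n).1 hbel s
      have lhs_eq : ((M ^ n) *ᵥ (fun s' => cc + hh s')) s = cc + ((M ^ n) *ᵥ hh) s := by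
        unfold Matrix.mulVec dotProduct
        simp only [mul_add, Finset.sum_add_distrib, ← Finset.sum_mul]
        rw [(stoch_pow M h0 h1 n).2 s]; ring_nf
      have rhs_eq : ((M ^ n) *ᵥ (fun s' => rr s' + (M *ᵥ hh) s')) s
          = ((M ^ n) *ᵥ rr) s + ((M ^ (n+1)) *ᵥ hh) s := by
        have hfe : (fun s' => rr s' + (M *ᵥ hh) s') = rr + (M *ᵥ hh) := rfl
        rw [hfe, Matrix.mulVec_add, Matrix.mulVec_mulVec, ← pow_succ]
        rfl
      rw [lhs_eq, rhs_eq] at mono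
      exact mono
    have hs := ih s
    rw [Finset.sum_range_succ]
    push_cast
    linarith

lemma key_telescope_le (M : Matrix S S ℝ) (h0 : ∀ s s', 0 ≤ M s s') (h1 : ∀ s, ∑ s', M s s' = 1)
    (rr hh : S → ℝ) (cc : ℝ) (hbel : ∀ s, rr s + (M *ᵥ hh) s ≤ cc + hh s) :
    ∀ n s, (∑ t ∈ Finset.range n, ((M ^ t) *ᵥ rr) s) + ((M ^ n) *ᵥ hh) s ≤ n * cc + hh s := by
  intro n s
  have hb : ∀ s, (-cc) + (-hh) s ≤ (-rr) s + (M *ᵥ (-hh)) s := by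
    intro t
    have := hbel t
    rw [Matrix.mulVec_neg]
    simp only [Pi.neg_apply]
    linarith
  have := key_telescope M h0 h1 (-rr) (-hh) (-cc) hb n s
  rw [Matrix.mulVec_neg] at this
  simp only [Pi.neg_apply, Matrix.mulVec_neg, Finset.sum_neg_distrib] at this
  linarith

lemma liminf_ge_const {u : ℕ → ℝ} {cc d B : ℝ}
    (hle : ∀ n : ℕ, 1 ≤ n → cc + d / n ≤ u n) (hub : ∀ n, u n ≤ B) :
    cc ≤ Filter.liminf u Filter.atTop := by
  have hg : Filter.Tendsto (fun n : ℕ => cc + d / n) atTop (nhds cc) := by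
    have := tendsto_const_div_atTop_nhds_zero_nat d
    simpa using Filter.Tendsto.const_add cc this
  have h1 : Filter.liminf (fun n : ℕ => cc + d / n) Filter.atTop = cc := hg.liminf_eq
  rw [← h1]
  refine Filter.liminf_le_liminf ?_ ?_ ?_
  · exact Filter.eventually_atTop.2 ⟨1, hle⟩
  · exact hg.isBoundedUnder_ge
  · exact Filter.isCoboundedUnder_ge_of_le atTop hub

lemma liminf_le_const {u : ℕ → ℝ} {cc d B : ℝ}
    (hle : ∀ n : ℕ, 1 ≤ n → u n ≤ cc + d / n) (hlb : ∀ n, B ≤ u n) :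
    Filter.liminf u Filter.atTop ≤ cc := by
  have hg : Filter.Tendsto (fun n : ℕ => cc + d / n) atTop (nhds cc) := by
    have := tendsto_const_div_atTop_nhds_zero_nat d
    simpa using Filter.Tendsto.const_add cc this
  have h1 : Filter.liminf (fun n : ℕ => cc + d / n) Filter.atTop = cc := hg.liminf_eq
  rw [← h1]
  refine Filter.liminf_le_liminf ?_ ?_ ?_
  · exact Filter.eventually_atTop.2 ⟨1, hle⟩
  · exact isBoundedUnder_of ⟨B, hlb⟩
  · exact hg.isCoboundedUnder_ge

end helpers

section avgRbounds
variable {S A : Type*} [Fintype S] [DecidableEq S] [Fintype A]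

/-- Basic facts about the induced chain, for a stochastic policy and kernel. -/
lemma polMat_stoch (π : S → A → ℝ) (P : S → A → S → ℝ)
    (hπ0 : ∀ s a, 0 ≤ π s a) (hπ1 : ∀ s, ∑ a, π s a = 1)
    (hP : ∀ s a, P s a ∈ stdSimplex ℝ S) :
    (∀ s s', 0 ≤ polMat π P s s') ∧ (∀ s, ∑ s', polMat π P s s' = 1) := by
  constructor
  · intro s s'
    exact Finset.sum_nonneg fun a _ => mul_nonneg (hπ0 s a) ((hP s a).1 s')
  · intro s
    show ∑ s', ∑ a, π s a * P s a s' = 1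
    rw [Finset.sum_comm]
    simp only [← Finset.mul_sum]
    have : ∀ a, ∑ s', P s a s' = 1 := fun a => (hP s a).2
    simp only [this, mul_one]
    exact hπ1 s

lemma polRew_bdd (π : S → A → ℝ) (r : S → A → ℝ)
    (hπ0 : ∀ s a, 0 ≤ π s a) (hπ1 : ∀ s, ∑ a, π s a = 1)
    (hr : ∀ s a, r s a ∈ Set.Icc (0:ℝ) 1) (s : S) :
    0 ≤ polRew π r s ∧ polRew π r s ≤ 1 := by
  constructor
  · exact Finset.sum_nonneg fun a _ => mul_nonneg (hπ0 s a) (hr s a).1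
  · calc ∑ a, π s a * r s a ≤ ∑ a, π s a := by
          refine Finset.sum_le_sum fun a _ => ?_
          nlinarith [(hr s a).2, hπ0 s a]
      _ = 1 := hπ1 s

lemma iter_bdd (M : Matrix S S ℝ) (h0 : ∀ s s', 0 ≤ M s s') (h1 : ∀ s, ∑ s', M s s' = 1)
    (v : S → ℝ) (hv : ∀ s, 0 ≤ v s ∧ v s ≤ 1) (t : ℕ) (s : S) :
    0 ≤ ((M ^ t) *ᵥ v) s ∧ ((M ^ t) *ᵥ v) s ≤ 1 := by
  obtain ⟨hp0, hp1⟩ := stoch_pow M h0 h1 t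
  constructor
  · exact Finset.sum_nonneg fun s' _ => mul_nonneg (hp0 s s') (hv s').1
  · calc ∑ s', (M ^ t) s s' * v s' ≤ ∑ s', (M ^ t) s s' := by
          refine Finset.sum_le_sum fun s' _ => ?_
          nlinarith [(hv s').2, hp0 s s']
      _ = 1 := hp1 s

lemma avgR_ge_of_bellman (π : S → A → ℝ) (P : S → A → S → ℝ) (r : S → A → ℝ)
    (hπ0 : ∀ s a, 0 ≤ π s a) (hπ1 : ∀ s, ∑ a, π s a = 1)
    (hP : ∀ s a, P s a ∈ stdSimplex ℝ S)
    (hr : ∀ s a, r s a ∈ Set.Icc (0:ℝ) 1)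
    (hh : S → ℝ) (cc : ℝ)
    (hbel : ∀ s, cc + hh s ≤ polRew π r s + (polMat π P *ᵥ hh) s) (s : S) :
    cc ≤ avgR π P r s := by
  obtain ⟨h0, h1⟩ := polMat_stoch π P hπ0 hπ1 hP
  set M := polMat π P with hM
  set rπ := polRew π r with hrd
  have hrπ : ∀ s, 0 ≤ rπ s ∧ rπ s ≤ 1 := fun s => polRew_bdd π r hπ0 hπ1 hr s
  refine liminf_ge_const (d := hh s - ∑ s', |hh s'|) (B := 1) ?_ ?_
  · intro n hn
    rw [← hM, ← hrd]
    have htel := key_telescope M h0 h1 rπ hh cc hbel n s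
    have habs := mulVec_abs_le (M ^ n) (stoch_pow M h0 h1 n).1 (stoch_pow M h0 h1 n).2 hh s
    have hnpos : (0:ℝ) < n := by exact_mod_cast hn
    have heq : cc + (hh s - ∑ s', |hh s'|) / (n:ℝ)
        = ((n:ℝ) * cc + (hh s - ∑ s', |hh s'|)) / n := by field_simp
    rw [heq, div_le_div_iff_of_pos_right hnpos]
    obtain ⟨hab1, hab2⟩ := abs_le.mp habs
    linarith
  · intro n
    rcases Nat.eq_zero_or_pos n with hn | hn
    · simp [hn]
    · have hnpos : (0:ℝ) < n := by exact_mod_cast hn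
      rw [← hM, ← hrd, div_le_one hnpos]
      calc (∑ t ∈ Finset.range n, ((M ^ t) *ᵥ rπ) s)
          ≤ ∑ t ∈ Finset.range n, 1 := Finset.sum_le_sum fun t _ =>
            (iter_bdd M h0 h1 rπ hrπ t s).2
        _ = n := by simp

lemma avgR_le_of_bellman (π : S → A → ℝ) (P : S → A → S → ℝ) (r : S → A → ℝ)
    (hπ0 : ∀ s a, 0 ≤ π s a) (hπ1 : ∀ s, ∑ a, π s a = 1)
    (hP : ∀ s a, P s a ∈ stdSimplex ℝ S)
    (hr : ∀ s a, r s a ∈ Set.Icc (0:ℝ) 1)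
    (hh : S → ℝ) (cc : ℝ)
    (hbel : ∀ s, polRew π r s + (polMat π P *ᵥ hh) s ≤ cc + hh s) (s : S) :
    avgR π P r s ≤ cc := by
  obtain ⟨h0, h1⟩ := polMat_stoch π P hπ0 hπ1 hP
  set M := polMat π P with hM
  set rπ := polRew π r with hrd
  have hrπ : ∀ s, 0 ≤ rπ s ∧ rπ s ≤ 1 := fun s => polRew_bdd π r hπ0 hπ1 hr s
  refine liminf_le_const (d := hh s + ∑ s', |hh s'|) (B := 0) ?_ ?_
  · intro n hn
    rw [← hM, ← hrd]
    have htel := key_telescope_le M h0 h1 rπ hh cc hbel n s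
    have habs := mulVec_abs_le (M ^ n) (stoch_pow M h0 h1 n).1 (stoch_pow M h0 h1 n).2 hh s
    have hnpos : (0:ℝ) < n := by exact_mod_cast hn
    have heq : cc + (hh s + ∑ s', |hh s'|) / (n:ℝ)
        = ((n:ℝ) * cc + (hh s + ∑ s', |hh s'|)) / n := by field_simp
    rw [heq, div_le_div_iff_of_pos_right hnpos]
    obtain ⟨hab1, hab2⟩ := abs_le.mp habs
    linarith
  · intro n
    rw [← hM, ← hrd]
    exact div_nonneg (Finset.sum_nonneg fun t _ => (iter_bdd M h0 h1 rπ hrπ t s).1)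
      (Nat.cast_nonneg n)

lemma avgR_nonneg (π : S → A → ℝ) (P : S → A → S → ℝ) (r : S → A → ℝ)
    (hπ0 : ∀ s a, 0 ≤ π s a) (hπ1 : ∀ s, ∑ a, π s a = 1)
    (hP : ∀ s a, P s a ∈ stdSimplex ℝ S)
    (hr : ∀ s a, r s a ∈ Set.Icc (0:ℝ) 1) (s : S) :
    0 ≤ avgR π P r s := by
  obtain ⟨h0, h1⟩ := polMat_stoch π P hπ0 hπ1 hP
  set M := polMat π P with hM
  set rπ := polRew π r with hrd
  have hrπ : ∀ s, 0 ≤ rπ s ∧ rπ s ≤ 1 := fun s => polRew_bdd π r hπ0 hπ1 hr s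
  refine liminf_ge_const (d := 0) (B := 1) ?_ ?_
  · intro n hn
    rw [← hM, ← hrd]
    simp only [zero_div, add_zero]
    exact div_nonneg (Finset.sum_nonneg fun t _ => (iter_bdd M h0 h1 rπ hrπ t s).1)
      (Nat.cast_nonneg n)
  · intro n
    rcases Nat.eq_zero_or_pos n with hn | hn
    · simp [hn]
    · have hnpos : (0:ℝ) < n := by exact_mod_cast hn
      rw [← hM, ← hrd, div_le_one hnpos]
      calc (∑ t ∈ Finset.range n, ((M ^ t) *ᵥ rπ) s)
          ≤ ∑ t ∈ Finset.range n, 1 := Finset.sum_le_sum fun t _ =>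
            (iter_bdd M h0 h1 rπ hrπ t s).2
        _ = n := by simp

end avgRbounds

/-- **Fixed points of Robust Nash-Iteration are Nash Equilibria.**
If a product policy `π`, constants `c_i`, and vectors `h_i` satisfy the robust
Bellman fixed-point equations and `π(·|s)` is a Nash equilibrium of every stage
game with payoffs `Q_i(s,a) = r_i(s,a) + σ_{U^a_s}(h_i)`, then `π` is a Nash
Equilibrium of the average-reward distributionally robust Markov game. -/
theorem stmt13 {S : Type*} [Fintype S] [DecidableEq S] [Nonempty S]
    {N : ℕ} (A : Fin N → Type*) [∀ i, Fintype (A i)] [∀ i, Nonempty (A i)]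
    (r : Fin N → S → (∀ i, A i) → ℝ)
    (hr : ∀ i s a, r i s a ∈ Set.Icc (0 : ℝ) 1)
    (U : S → (∀ i, A i) → Set (S → ℝ))
    (hU : ∀ s a, (U s a).Nonempty ∧ IsCompact (U s a) ∧ Convex ℝ (U s a) ∧
      U s a ⊆ stdSimplex ℝ S)
    (hirr : Assump1 U)
    (π : ∀ i, S → A i → ℝ) (hπ : ∀ i s, π i s ∈ stdSimplex ℝ (A i))
    (c : Fin N → ℝ) (h : Fin N → S → ℝ)
    (hfix : ∀ i s, h i s + c i
      = ∑ a : (∀ j, A j), jointPol π s a * (r i s a + suppF (U s a) (h i)))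
    (hstage : ∀ (s : S) (i : Fin N) (μ : A i → ℝ), μ ∈ stdSimplex ℝ (A i) →
      ∑ a : (∀ j, A j), jointPol π s a * (r i s a + suppF (U s a) (h i))
        ≥ ∑ a : (∀ j, A j),
            ((∏ j ∈ Finset.univ.erase i, π j s (a j)) * μ (a i))
              * (r i s a + suppF (U s a) (h i))) :
    ∀ (i : Fin N) (μ : S → A i → ℝ), (∀ s, μ s ∈ stdSimplex ℝ (A i)) →
      ∀ s, robAvgR U (jointPol (Function.update π i μ)) (r i) s
        ≤ robAvgR U (jointPol π) (r i) s := by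
  classical
  intro i μ hμ s0
  set hi := h i with hid
  have jp0 : ∀ s a, 0 ≤ jointPol π s a := fun s a =>
    Finset.prod_nonneg fun j _ => (hπ j s).1 (a j)
  have jp1 : ∀ s, ∑ a, jointPol π s a = 1 :=
    jointPol_sum π (fun j s => (hπ j s).2)
  set π' := Function.update π i μ with hπ'd
  have hπ'mem : ∀ j s, π' j s ∈ stdSimplex ℝ (A j) := by
    intro j s
    rcases eq_or_ne j i with hj | hj
    · subst hj; rw [hπ'd, Function.update_self]; exact hμ s
    · rw [hπ'd, Function.update_of_ne hj]; exact hπ j s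
  have jp0' : ∀ s a, 0 ≤ jointPol π' s a := fun s a =>
    Finset.prod_nonneg fun j _ => (hπ'mem j s).1 (a j)
  have jp1' : ∀ s, ∑ a, jointPol π' s a = 1 :=
    jointPol_sum π' (fun j s => (hπ'mem j s).2)
  have hfactor : ∀ s (a : ∀ j, A j), jointPol π' s a
      = (∏ j ∈ Finset.univ.erase i, π j s (a j)) * μ s (a i) := by
    intro s a
    unfold jointPol
    rw [← Finset.mul_prod_erase Finset.univ _ (Finset.mem_univ i), mul_comm]
    congr 1
    · refine Finset.prod_congr rfl fun j hj => ?_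
      rw [hπ'd, Function.update_of_ne (Finset.ne_of_mem_erase hj)]
    · rw [hπ'd, Function.update_self]
  -- Bellman inequality for the deviating policy
  have hdev : ∀ s, ∑ a : (∀ j, A j), jointPol π' s a * (r i s a + suppF (U s a) hi)
      ≤ hi s + c i := by
    intro s
    have h1 := hstage s i (μ s) (hμ s)
    have h2 : ∑ a : (∀ j, A j), jointPol π' s a * (r i s a + suppF (U s a) hi)
        = ∑ a : (∀ j, A j), ((∏ j ∈ Finset.univ.erase i, π j s (a j)) * μ s (a i))
            * (r i s a + suppF (U s a) hi) :=
      Finset.sum_congr rfl fun a _ => by rw [hfactor]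
    rw [h2, hid]
    calc _ ≤ ∑ a : (∀ j, A j), jointPol π s a * (r i s a + suppF (U s a) (h i)) := h1
      _ = h i s + c i := (hfix i s).symm
  -- worst-case kernel attaining the support function
  have hex : ∀ s (a : ∀ j, A j), ∃ p, p ∈ U s a ∧ ∑ s', p s' * hi s' = suppF (U s a) hi := by
    intro s a
    obtain ⟨p, hp, he⟩ := (suppF_spec (U s a) (hU s a).1 (hU s a).2.1 hi).1
    exact ⟨p, hp, he⟩
  choose Pstar hPmem hPeq using hex
  have hPsimp : ∀ s (a : ∀ j, A j), Pstar s a ∈ stdSimplex ℝ S :=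
    fun s a => (hU s a).2.2.2 (hPmem s a)
  -- Bellman inequality for π against any kernel in U
  have hbelπ : ∀ P : S → (∀ j, A j) → S → ℝ, (∀ s a, P s a ∈ U s a) → ∀ s,
      c i + hi s ≤ polRew (jointPol π) (r i) s + (polMat (jointPol π) P *ᵥ hi) s := by
    intro P hPU s
    rw [polMat_mulVec]
    have hkey : ∀ a : (∀ j, A j), jointPol π s a * (r i s a + suppF (U s a) hi)
        ≤ jointPol π s a * r i s a + jointPol π s a * (∑ s', P s a s' * hi s') := by
      intro a
      have hσ := (suppF_spec (U s a) (hU s a).1 (hU s a).2.1 hi).2 (P s a) (hPU s a)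
      nlinarith [jp0 s a]
    calc c i + hi s = hi s + c i := add_comm _ _
      _ = ∑ a : (∀ j, A j), jointPol π s a * (r i s a + suppF (U s a) hi) := by
          rw [hid]; exact hfix i s
      _ ≤ ∑ a : (∀ j, A j), (jointPol π s a * r i s a
            + jointPol π s a * (∑ s', P s a s' * hi s')) :=
          Finset.sum_le_sum fun a _ => hkey a
      _ = polRew (jointPol π) (r i) s
            + ∑ a : (∀ j, A j), jointPol π s a * (∑ s', P s a s' * hi s') := by
          rw [Finset.sum_add_distrib]; rfl
  -- Bellman inequality for π' with the worst-case kernel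
  have hbel' : ∀ s, polRew (jointPol π') (r i) s + (polMat (jointPol π') Pstar *ᵥ hi) s
      ≤ c i + hi s := by
    intro s
    rw [polMat_mulVec]
    have heq2 : polRew (jointPol π') (r i) s
          + ∑ a : (∀ j, A j), jointPol π' s a * (∑ s', Pstar s a s' * hi s')
        = ∑ a : (∀ j, A j), jointPol π' s a * (r i s a + suppF (U s a) hi) := by
      unfold polRew
      rw [← Finset.sum_add_distrib]
      refine Finset.sum_congr rfl fun a _ => ?_
      rw [hPeq s a]; ring
    rw [heq2]
    calc _ ≤ hi s + c i := hdev s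
      _ = c i + hi s := add_comm _ _
  -- a default kernel to show nonemptiness
  have hP0 : ∀ s (a : ∀ j, A j), (U s a).Nonempty := fun s a => (hU s a).1
  set P0 : S → (∀ j, A j) → S → ℝ := fun s a => (hP0 s a).choose with hP0d
  have hP0U : ∀ s a, P0 s a ∈ U s a := fun s a => (hP0 s a).choose_spec
  -- conclude
  have hA : c i ≤ robAvgR U (jointPol π) (r i) s0 := by
    refine le_csInf ⟨avgR (jointPol π) P0 (r i) s0, P0, hP0U, rfl⟩ ?_
    rintro x ⟨P, hPU, rfl⟩
    exact avgR_ge_of_bellman (jointPol π) P (r i) jp0 jp1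
      (fun s a => (hU s a).2.2.2 (hPU s a)) (hr i) hi (c i) (hbelπ P hPU) s0
  have hB : robAvgR U (jointPol π') (r i) s0 ≤ c i := by
    have hbdd : BddBelow {x | ∃ P : S → (∀ j, A j) → S → ℝ,
        (∀ s' a, P s' a ∈ U s' a) ∧ x = avgR (jointPol π') P (r i) s0} := by
      refine ⟨0, ?_⟩
      rintro x ⟨P, hPU, rfl⟩
      exact avgR_nonneg (jointPol π') P (r i) jp0' jp1'
        (fun s a => (hU s a).2.2.2 (hPU s a)) (hr i) s0
    refine le_trans (csInf_le hbdd ⟨Pstar, hPmem, rfl⟩) ?_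
    exact avgR_le_of_bellman (jointPol π') Pstar (r i) jp0' jp1' hPsimp (hr i) hi (c i)
      hbel' s0
  exact hB.trans hA
end

section
/- (Sandwich bound for the Nash-Iteration operator under a globally optimal oracle.) Fix vectors h_i, h'_i : S → ℝ for each agent i and define Q_i(s,a,h_i) = r_i(s,a) + σ_{𝒫^a_s}(h_i). Suppose π is a product policy such that for every s, every agent i, and every product distribution ρ on A, ∑_a π(a|s) Q_i(s,a,h_i) ≥ ∑_a ρ(a) Q_i(s,a,h_i), and suppose π' satisfies the analogous property with h'_i in place of h_i. Define T_i(h)(s) = ∑_a π(a|s) Q_i(s,a,h_i) and T_i(h')(s) = ∑_a π'(a|s) Q_i(s,a,h'_i). Then for every agent i and every state s: min_{a∈A} ( σ_{𝒫^a_s}(h_i) − σ_{𝒫^a_s}(h'_i) ) ≤ T_i(h)(s) − T_i(h')(s) ≤ max_{a∈A} ( σ_{𝒫^a_s}(h_i) − σ_{𝒫^a_s}(h'_i) ). -/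
open scoped BigOperators

lemma weighted_bounds {A : Type*} [Fintype A] [Nonempty A] (w d : A → ℝ)
    (hw : ∀ a, 0 ≤ w a) (hw1 : ∑ a, w a = 1) :
    (⨅ b, d b) ≤ ∑ a, w a * d a ∧ ∑ a, w a * d a ≤ ⨆ b, d b := by
  constructor
  · calc (⨅ b, d b) = ∑ a, w a * (⨅ b, d b) := by
          rw [← Finset.sum_mul, hw1, one_mul]
      _ ≤ ∑ a, w a * d a := by
          apply Finset.sum_le_sum
          intro a _
          exact mul_le_mul_of_nonneg_left (ciInf_le (Set.Finite.bddBelow (Set.finite_range d)) a) (hw a)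
  · calc ∑ a, w a * d a ≤ ∑ a, w a * (⨆ b, d b) := by
          apply Finset.sum_le_sum
          intro a _
          exact mul_le_mul_of_nonneg_left (le_ciSup (Set.Finite.bddAbove (Set.finite_range d)) a) (hw a)
      _ = ⨆ b, d b := by rw [← Finset.sum_mul, hw1, one_mul]

lemma joint_nonneg {S : Type*} {N : ℕ} {A : Fin N → Type*} [∀ i, Fintype (A i)]
    (π : ∀ i, S → A i → ℝ) (hπ : ∀ i s, π i s ∈ stdSimplex ℝ (A i)) (s : S)
    (a : ∀ i, A i) : 0 ≤ jointPol π s a :=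
  Finset.prod_nonneg fun i _ => (hπ i s).1 (a i)

lemma joint_sum_one {S : Type*} {N : ℕ} {A : Fin N → Type*} [∀ i, Fintype (A i)]
    (π : ∀ i, S → A i → ℝ) (hπ : ∀ i s, π i s ∈ stdSimplex ℝ (A i)) (s : S) :
    ∑ a : (∀ i, A i), jointPol π s a = 1 := by
  unfold jointPol
  rw [← Fintype.piFinset_univ, ← Finset.prod_univ_sum]
  exact Finset.prod_eq_one fun i _ => (hπ i s).2

/-- **Sandwich bound for the Nash-Iteration operator under a
globally optimal oracle.** -/
theorem stmt14 {S : Type*} [Fintype S] [DecidableEq S] [Nonempty S]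
    {N : ℕ} (A : Fin N → Type*) [∀ i, Fintype (A i)] [∀ i, Nonempty (A i)]
    (r : Fin N → S → (∀ i, A i) → ℝ)
    (hr : ∀ i s a, r i s a ∈ Set.Icc (0 : ℝ) 1)
    (U : S → (∀ i, A i) → Set (S → ℝ))
    (hU : ∀ s a, (U s a).Nonempty ∧ IsCompact (U s a) ∧ U s a ⊆ stdSimplex ℝ S)
    (h h' : Fin N → S → ℝ)
    (π π' : ∀ i, S → A i → ℝ)
    (hπ : ∀ i s, π i s ∈ stdSimplex ℝ (A i))
    (hπ' : ∀ i s, π' i s ∈ stdSimplex ℝ (A i))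
    (hopt : ∀ (s : S) (i : Fin N) (ρ : ∀ j, A j → ℝ),
      (∀ j, ρ j ∈ stdSimplex ℝ (A j)) →
      ∑ a : (∀ j, A j), jointPol π s a * (r i s a + suppF (U s a) (h i))
        ≥ ∑ a : (∀ j, A j), (∏ j, ρ j (a j)) * (r i s a + suppF (U s a) (h i)))
    (hopt' : ∀ (s : S) (i : Fin N) (ρ : ∀ j, A j → ℝ),
      (∀ j, ρ j ∈ stdSimplex ℝ (A j)) →
      ∑ a : (∀ j, A j), jointPol π' s a * (r i s a + suppF (U s a) (h' i))
        ≥ ∑ a : (∀ j, A j), (∏ j, ρ j (a j)) * (r i s a + suppF (U s a) (h' i))) :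
    ∀ (i : Fin N) (s : S),
      (⨅ a : (∀ j, A j), (suppF (U s a) (h i) - suppF (U s a) (h' i)))
        ≤ (∑ a : (∀ j, A j), jointPol π s a * (r i s a + suppF (U s a) (h i)))
          - (∑ a : (∀ j, A j), jointPol π' s a * (r i s a + suppF (U s a) (h' i)))
      ∧ (∑ a : (∀ j, A j), jointPol π s a * (r i s a + suppF (U s a) (h i)))
          - (∑ a : (∀ j, A j), jointPol π' s a * (r i s a + suppF (U s a) (h' i)))
        ≤ ⨆ a : (∀ j, A j), (suppF (U s a) (h i) - suppF (U s a) (h' i)) := by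
  intro i s
  set Q : (∀ j, A j) → ℝ := fun a => r i s a + suppF (U s a) (h i) with hQ
  set Q' : (∀ j, A j) → ℝ := fun a => r i s a + suppF (U s a) (h' i) with hQ'
  have hdiff : ∀ a, Q a - Q' a = suppF (U s a) (h i) - suppF (U s a) (h' i) := by
    intro a; simp only [hQ, hQ']; ring
  have h1 : ∑ a : (∀ j, A j), jointPol π' s a * Q' a ≥ ∑ a : (∀ j, A j), jointPol π s a * Q' a := by
    have := hopt' s i (fun j => π j s) (fun j => hπ j s)
    simpa [jointPol] using this
  have h2 : ∑ a : (∀ j, A j), jointPol π s a * Q a ≥ ∑ a : (∀ j, A j), jointPol π' s a * Q a := by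
    have := hopt s i (fun j => π' j s) (fun j => hπ' j s)
    simpa [jointPol] using this
  have hB := weighted_bounds (jointPol π s) (fun a => suppF (U s a) (h i) - suppF (U s a) (h' i))
    (joint_nonneg π hπ s) (joint_sum_one π hπ s)
  have hB' := weighted_bounds (jointPol π' s) (fun a => suppF (U s a) (h i) - suppF (U s a) (h' i))
    (joint_nonneg π' hπ' s) (joint_sum_one π' hπ' s)
  have key : ∀ (w : (∀ j, A j) → ℝ),
      ∑ a, w a * (suppF (U s a) (h i) - suppF (U s a) (h' i)) = ∑ a, w a * Q a - ∑ a, w a * Q' a := by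
    intro w
    rw [← Finset.sum_sub_distrib]
    apply Finset.sum_congr rfl
    intro a _
    rw [← mul_sub, hdiff]
  constructor
  · calc (⨅ a : (∀ j, A j), (suppF (U s a) (h i) - suppF (U s a) (h' i)))
        ≤ ∑ a, jointPol π' s a * (suppF (U s a) (h i) - suppF (U s a) (h' i)) := hB'.1
      _ = ∑ a, jointPol π' s a * Q a - ∑ a, jointPol π' s a * Q' a := key _
      _ ≤ _ := by exact sub_le_sub h2 le_rfl
  · calc (∑ a : (∀ j, A j), jointPol π s a * Q a) - ∑ a : (∀ j, A j), jointPol π' s a * Q' a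
        ≤ ∑ a, jointPol π s a * Q a - ∑ a, jointPol π s a * Q' a := sub_le_sub le_rfl h1
      _ = ∑ a, jointPol π s a * (suppF (U s a) (h i) - suppF (U s a) (h' i)) := (key _).symm
      _ ≤ _ := hB.2
end

section
/- (Limits of discounted robust Nash Equilibria are average-reward Nash Equilibria.) Assume the multi-agent irreducibility assumption (for every deterministic joint policy d : S → A and every kernel P ∈ 𝒫, the matrix P^d is irreducible) and that each 𝒫^a_s is nonempty, compact, and convex. Let {γ_t} ⊆ [0,1) be a sequence of discount factors with γ_t → 1, and for each t let π_t be a Nash Equilibrium of the γ_t-discounted distributionally robust Markov game, i.e. V^{π_t}_{𝒫,γ_t,i}(s) ≥ V^{((π_t)_{−i}, μ_i)}_{𝒫,γ_t,i}(s) for all i, all μ_i : S → Δ(A_i), and all s. If π_t → π (pointwise convergence of (π_t)_i(a_i|s) for all i, a_i, s), then π is a Nash Equilibrium of the average-reward distributionally robust Markov game: g^{π}_{𝒫,i}(s) ≥ g^{(π_{−i}, μ_i)}_{𝒫,i}(s) for all i, all μ_i, and all s. -/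
open scoped BigOperators
open Matrix Filter

/-- The `γ`-discounted value `V^π_{P,γ}(s) = ∑_{t=0}^∞ γ^t ((P^π)^t r^π)(s)`. -/
noncomputable def discR {S A : Type*} [Fintype S] [DecidableEq S] [Fintype A]
    (π : S → A → ℝ) (P : S → A → S → ℝ) (r : S → A → ℝ) (γ : ℝ) (s : S) : ℝ :=
  ∑' t : ℕ, γ ^ t * ((polMat π P ^ t) *ᵥ polRew π r) s

/-- The robust `γ`-discounted value `V^π_{U,γ}(s) = inf_{P ∈ U} V^π_{P,γ}(s)`. -/
noncomputable def robDiscR {S A : Type*} [Fintype S] [DecidableEq S] [Fintype A]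
    (U : S → A → Set (S → ℝ)) (π : S → A → ℝ) (r : S → A → ℝ) (γ : ℝ) (s : S) : ℝ :=
  sInf {x | ∃ P : S → A → S → ℝ, (∀ s' a, P s' a ∈ U s' a) ∧ x = discR π P r γ s}


set_option linter.unusedSectionVars false
set_option linter.unusedVariables false
set_option maxHeartbeats 2000000

namespace Stmt15aux


variable {S : Type*} [Fintype S] [DecidableEq S] [Nonempty S]

/-- A row-stochastic matrix. -/
def Stoch (M : Matrix S S ℝ) : Prop := (∀ s s', 0 ≤ M s s') ∧ (∀ s, ∑ s', M s s' = 1)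

theorem Stoch.one : Stoch (1 : Matrix S S ℝ) := by
  constructor
  · intro s s'; by_cases h : s = s' <;> simp [Matrix.one_apply, h]
  · intro s; simp [Matrix.one_apply]

theorem Stoch.mul {M N : Matrix S S ℝ} (hM : Stoch M) (hN : Stoch N) : Stoch (M * N) := by
  constructor
  · intro s s'
    rw [Matrix.mul_apply]
    exact Finset.sum_nonneg fun x _ => mul_nonneg (hM.1 _ _) (hN.1 _ _)
  · intro s
    simp only [Matrix.mul_apply]
    rw [Finset.sum_comm]
    have : ∀ x, ∑ s', M s x * N x s' = M s x := by
      intro x; rw [← Finset.mul_sum, hN.2, mul_one]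
    simp only [this]
    exact hM.2 s

theorem Stoch.pow {M : Matrix S S ℝ} (hM : Stoch M) (k : ℕ) : Stoch (M ^ k) := by
  induction k with
  | zero => simpa using Stoch.one
  | succ n ih => rw [pow_succ]; exact ih.mul hM

theorem Stoch.mulVec_le {M : Matrix S S ℝ} (hM : Stoch M) {v : S → ℝ} {b : ℝ}
    (hv : ∀ x, v x ≤ b) (s : S) : (M *ᵥ v) s ≤ b := by
  have : (M *ᵥ v) s ≤ ∑ x, M s x * b := by
    apply Finset.sum_le_sum
    intro x _; exact mul_le_mul_of_nonneg_left (hv x) (hM.1 _ _)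
  simpa [← Finset.sum_mul, hM.2 s] using this

theorem Stoch.le_mulVec {M : Matrix S S ℝ} (hM : Stoch M) {v : S → ℝ} {b : ℝ}
    (hv : ∀ x, b ≤ v x) (s : S) : b ≤ (M *ᵥ v) s := by
  have h := hM.mulVec_le (v := -v) (b := -b) (fun x => by simpa using hv x) s
  have : (M *ᵥ (-v)) s = -((M *ᵥ v) s) := by simp [Matrix.mulVec, dotProduct, Finset.sum_neg_distrib]
  rw [this] at h; linarith


section seqlemmas


theorem summable_geom_mul {γ : ℝ} (h0 : 0 ≤ γ) (h1 : γ < 1) {u : ℕ → ℝ} {C : ℝ}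
    (hu : ∀ t, |u t| ≤ C) : Summable (fun t => γ ^ t * u t) := by
  apply Summable.of_norm_bounded (g := fun t => C * γ ^ t)
  · exact (summable_geometric_of_lt_one h0 h1).mul_left C
  · intro t
    rw [norm_mul, norm_pow, Real.norm_eq_abs, Real.norm_eq_abs, abs_of_nonneg h0]
    calc γ ^ t * |u t| ≤ γ ^ t * C := by
          exact mul_le_mul_of_nonneg_left (hu t) (pow_nonneg h0 t)
      _ = C * γ ^ t := mul_comm _ _

theorem summable_nat_succ_geom {γ : ℝ} (h0 : 0 ≤ γ) (h1 : γ < 1) :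
    Summable (fun n : ℕ => ((n : ℝ) + 1) * γ ^ n) := by
  have h2 : ‖γ‖ < 1 := by rw [Real.norm_eq_abs, abs_of_nonneg h0]; exact h1
  have hA : Summable (fun n : ℕ => (n : ℝ) * γ ^ n) := by
    simpa using summable_pow_mul_geometric_of_norm_lt_one 1 h2
  have hB : Summable (fun n : ℕ => γ ^ n) := summable_geometric_of_lt_one h0 h1
  simpa [add_mul] using hA.add hB

theorem tsum_nat_succ_geom {γ : ℝ} (h0 : 0 ≤ γ) (h1 : γ < 1) :
    ∑' n : ℕ, ((n : ℝ) + 1) * γ ^ n = (1 - γ)⁻¹ ^ 2 := by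
  have h2 : ‖γ‖ < 1 := by rw [Real.norm_eq_abs, abs_of_nonneg h0]; exact h1
  have hA : Summable (fun n : ℕ => (n : ℝ) * γ ^ n) := by
    simpa using summable_pow_mul_geometric_of_norm_lt_one 1 h2
  have hB : Summable (fun n : ℕ => γ ^ n) := summable_geometric_of_lt_one h0 h1
  have e1 : ∑' n : ℕ, (n : ℝ) * γ ^ n = γ / (1 - γ) ^ 2 :=
    tsum_coe_mul_geometric_of_norm_lt_one h2
  have e2 : ∑' n : ℕ, γ ^ n = (1 - γ)⁻¹ := tsum_geometric_of_lt_one h0 h1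
  have hγ : (1 : ℝ) - γ ≠ 0 := by linarith
  calc ∑' n : ℕ, ((n : ℝ) + 1) * γ ^ n
      = ∑' n : ℕ, ((n : ℝ) * γ ^ n + γ ^ n) := by congr 1; funext n; ring
    _ = γ / (1 - γ) ^ 2 + (1 - γ)⁻¹ := by rw [Summable.tsum_add hA hB, e1, e2]
    _ = (1 - γ)⁻¹ ^ 2 := by field_simp; ring

theorem summable_geom_mul_partial {γ : ℝ} (h0 : 0 ≤ γ) (h1 : γ < 1) {u : ℕ → ℝ} {C : ℝ}
    (hC : 0 ≤ C) (hu : ∀ t, |u t| ≤ C) :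
    Summable (fun n : ℕ => γ ^ n * ∑ t ∈ Finset.range (n + 1), u t) := by
  apply Summable.of_norm_bounded (g := fun n : ℕ => C * (((n : ℝ) + 1) * γ ^ n))
    ((summable_nat_succ_geom h0 h1).mul_left C)
  intro n
  rw [norm_mul, norm_pow, Real.norm_eq_abs, Real.norm_eq_abs, abs_of_nonneg h0]
  have hS : |∑ t ∈ Finset.range (n + 1), u t| ≤ ((n : ℝ) + 1) * C := by
    calc |∑ t ∈ Finset.range (n + 1), u t| ≤ ∑ t ∈ Finset.range (n + 1), |u t| :=
          Finset.abs_sum_le_sum_abs _ _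
      _ ≤ ∑ _t ∈ Finset.range (n + 1), C := Finset.sum_le_sum fun t _ => hu t
      _ = ((n : ℝ) + 1) * C := by simp [mul_comm]
  calc γ ^ n * |∑ t ∈ Finset.range (n + 1), u t| ≤ γ ^ n * (((n : ℝ) + 1) * C) :=
        mul_le_mul_of_nonneg_left hS (pow_nonneg h0 n)
    _ = C * (((n : ℝ) + 1) * γ ^ n) := by ring

/-- Abel summation identity : `∑ γ^t u_t = (1-γ) ∑ γ^n S_{n+1}`. -/
theorem abel_eq {γ : ℝ} (h0 : 0 ≤ γ) (h1 : γ < 1) {u : ℕ → ℝ}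
    (hu : ∀ t, |u t| ≤ 1) :
    ∑' t : ℕ, γ ^ t * u t
      = ∑' n : ℕ, (1 - γ) * (γ ^ n * ∑ t ∈ Finset.range (n + 1), u t) := by
  set Sn : ℕ → ℝ := fun n => ∑ t ∈ Finset.range n, u t with hSn
  have key : ∀ N : ℕ, ∑ n ∈ Finset.range N, (1 - γ) * (γ ^ n * Sn (n + 1))
      = (∑ t ∈ Finset.range N, γ ^ t * u t) - γ ^ N * Sn N := by
    intro N
    induction N with
    | zero => simp [hSn]
    | succ N ih =>
      rw [Finset.sum_range_succ, ih, Finset.sum_range_succ (fun t => γ ^ t * u t)]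
      have : Sn (N + 1) = Sn N + u N := Finset.sum_range_succ u N
      rw [this]; ring
  have hsum1 : Summable (fun t : ℕ => γ ^ t * u t) := summable_geom_mul h0 h1 hu
  have hsum2 : Summable (fun n : ℕ => (1 - γ) * (γ ^ n * Sn (n + 1))) :=
    ((summable_geom_mul_partial h0 h1 zero_le_one hu)).mul_left (1 - γ)
  have t1 : Tendsto (fun N => ∑ n ∈ Finset.range N, (1 - γ) * (γ ^ n * Sn (n + 1))) atTop
      (nhds (∑' n : ℕ, (1 - γ) * (γ ^ n * Sn (n + 1)))) := hsum2.hasSum.tendsto_sum_nat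
  have t2 : Tendsto (fun N => ∑ t ∈ Finset.range N, γ ^ t * u t) atTop
      (nhds (∑' t : ℕ, γ ^ t * u t)) := hsum1.hasSum.tendsto_sum_nat
  have t3 : Tendsto (fun N : ℕ => γ ^ N * Sn N) atTop (nhds 0) := by
    apply squeeze_zero_norm (a := fun N : ℕ => (N : ℝ) * γ ^ N)
    · intro N
      rw [norm_mul, norm_pow, Real.norm_eq_abs, Real.norm_eq_abs, abs_of_nonneg h0]
      have hS : |Sn N| ≤ (N : ℝ) := by
        calc |Sn N| ≤ ∑ t ∈ Finset.range N, |u t| := Finset.abs_sum_le_sum_abs _ _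
          _ ≤ ∑ _t ∈ Finset.range N, (1:ℝ) := Finset.sum_le_sum fun t _ => hu t
          _ = (N : ℝ) := by simp
      calc γ ^ N * |Sn N| ≤ γ ^ N * N := mul_le_mul_of_nonneg_left hS (pow_nonneg h0 N)
        _ = (N : ℝ) * γ ^ N := mul_comm _ _
    · exact tendsto_self_mul_const_pow_of_lt_one h0 h1
  have t4 : Tendsto (fun N => ∑ n ∈ Finset.range N, (1 - γ) * (γ ^ n * Sn (n + 1))) atTop
      (nhds (∑' t : ℕ, γ ^ t * u t - 0)) := by
    simp only [key]
    exact t2.sub t3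
  have := tendsto_nhds_unique t1 t4
  rw [this, sub_zero]

/-- Core Abelian upper bound: if the Cesàro partial sums satisfy `S_n ≤ g n`
eventually, then the Abel means are eventually `≤ g + ε` as the discount tends to 1. -/
theorem abel_upper {u : ℕ → ℝ} (hu0 : ∀ t, 0 ≤ u t) (hu1 : ∀ t, u t ≤ 1)
    {β : ℕ → ℝ} (hβ : ∀ k, 0 ≤ β k ∧ β k < 1) (hβ1 : Tendsto β atTop (nhds 1))
    {g ε : ℝ} (hε : 0 < ε)
    (hC : ∀ᶠ n in atTop, (∑ t ∈ Finset.range n, u t) ≤ g * n) :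
    ∀ᶠ k in atTop, (1 - β k) * ∑' t : ℕ, β k ^ t * u t ≤ g + ε := by
  have hu : ∀ t, |u t| ≤ 1 := fun t => abs_le.2 ⟨by linarith [hu0 t], hu1 t⟩
  obtain ⟨m, hm⟩ := eventually_atTop.1 hC
  set D : ℝ := m * (1 + |g|) with hD
  have hD0 : 0 ≤ D := by positivity
  have hSbound : ∀ n : ℕ, (∑ t ∈ Finset.range (n + 1), u t) ≤ g * (n + 1) + D := by
    intro n
    by_cases h : m ≤ n + 1
    · have := hm (n + 1) h
      push_cast at this ⊢
      linarith
    · push_neg at h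
      have h1 : (∑ t ∈ Finset.range (n + 1), u t) ≤ (n : ℝ) + 1 := by
        calc (∑ t ∈ Finset.range (n + 1), u t) ≤ ∑ _t ∈ Finset.range (n + 1), (1:ℝ) :=
              Finset.sum_le_sum fun t _ => hu1 t
          _ = (n : ℝ) + 1 := by simp
      have h2 : ((n : ℝ) + 1) ≤ m := by exact_mod_cast Nat.le_of_lt h
      have h3 : -|g| * ((n:ℝ) + 1) ≤ g * ((n:ℝ)+1) := by
        apply mul_le_mul_of_nonneg_right (neg_abs_le g) (by positivity)
      have h4 : |g| * ((n:ℝ)+1) ≤ |g| * m := by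
        apply mul_le_mul_of_nonneg_left h2 (abs_nonneg g)
      rw [hD]
      nlinarith [abs_nonneg g]
  -- key estimate for each k
  have key : ∀ k, (1 - β k) * ∑' t : ℕ, β k ^ t * u t ≤ g + (1 - β k) * D := by
    intro k
    obtain ⟨hk0, hk1⟩ := hβ k
    have h1γ : (0:ℝ) < 1 - β k := by linarith
    rw [abel_eq hk0 hk1 hu]
    rw [← tsum_mul_left]
    have hsum2 : Summable (fun n : ℕ =>
        (1 - β k) * ((1 - β k) * (β k ^ n * ∑ t ∈ Finset.range (n + 1), u t))) :=
      (((summable_geom_mul_partial hk0 hk1 zero_le_one hu)).mul_left (1 - β k)).mul_left _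
    have hsum3 : Summable (fun n : ℕ =>
        (1 - β k) * ((1 - β k) * (β k ^ n * (g * ((n:ℝ) + 1) + D)))) := by
      apply Summable.mul_left; apply Summable.mul_left
      have hA : Summable (fun n : ℕ => g * (((n:ℝ) + 1) * β k ^ n)) :=
        (summable_nat_succ_geom hk0 hk1).mul_left g
      have hB : Summable (fun n : ℕ => D * β k ^ n) :=
        (summable_geometric_of_lt_one hk0 hk1).mul_left D
      have := hA.add hB
      apply this.congr
      intro n; ring
    have hle : (∑' n : ℕ, (1 - β k) * ((1 - β k) * (β k ^ n * ∑ t ∈ Finset.range (n + 1), u t)))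
        ≤ ∑' n : ℕ, (1 - β k) * ((1 - β k) * (β k ^ n * (g * ((n:ℝ) + 1) + D))) := by
      apply Summable.tsum_le_tsum _ hsum2 hsum3
      intro n
      have := hSbound n
      have hpw : β k ^ n * (∑ t ∈ Finset.range (n + 1), u t) ≤ β k ^ n * (g * ((n:ℝ) + 1) + D) :=
        mul_le_mul_of_nonneg_left (by push_cast; linarith) (pow_nonneg hk0 n)
      have h2 : (0:ℝ) ≤ (1 - β k) * (1 - β k) := by nlinarith
      calc (1 - β k) * ((1 - β k) * (β k ^ n * ∑ t ∈ Finset.range (n + 1), u t))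
          = (1 - β k) * (1 - β k) * (β k ^ n * ∑ t ∈ Finset.range (n + 1), u t) := by ring
        _ ≤ (1 - β k) * (1 - β k) * (β k ^ n * (g * ((n:ℝ) + 1) + D)) :=
            mul_le_mul_of_nonneg_left hpw h2
        _ = (1 - β k) * ((1 - β k) * (β k ^ n * (g * ((n:ℝ) + 1) + D))) := by ring
    have heq : (∑' n : ℕ, (1 - β k) * ((1 - β k) * (β k ^ n * (g * ((n:ℝ) + 1) + D))))
        = g + (1 - β k) * D := by
      have hA : Summable (fun n : ℕ => g * (((n:ℝ) + 1) * β k ^ n)) :=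
        (summable_nat_succ_geom hk0 hk1).mul_left g
      have hB : Summable (fun n : ℕ => D * β k ^ n) :=
        (summable_geometric_of_lt_one hk0 hk1).mul_left D
      have e0 : (fun n : ℕ => (1 - β k) * ((1 - β k) * (β k ^ n * (g * ((n:ℝ) + 1) + D))))
          = fun n : ℕ => (1 - β k)^2 * (g * (((n:ℝ) + 1) * β k ^ n) + D * β k ^ n) := by
        funext n; ring
      rw [e0, tsum_mul_left, Summable.tsum_add hA hB, tsum_mul_left, tsum_mul_left,
        tsum_nat_succ_geom hk0 hk1, tsum_geometric_of_lt_one hk0 hk1]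
      have : (1 - β k) ≠ 0 := ne_of_gt h1γ
      field_simp
    calc (∑' n : ℕ, (1 - β k) * ((1 - β k) * (β k ^ n * ∑ t ∈ Finset.range (n + 1), u t)))
        ≤ _ := hle
      _ = g + (1 - β k) * D := heq
  -- eventually (1-βk) * D ≤ ε
  have hev : ∀ᶠ k in atTop, (1 - β k) * D ≤ ε := by
    have : Tendsto (fun k => (1 - β k) * D) atTop (nhds ((1 - 1) * D)) :=
      ((tendsto_const_nhds.sub hβ1).mul tendsto_const_nhds)
    rw [show ((1:ℝ) - 1) * D = 0 by ring] at this
    exact (this.eventually_le_const hε)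
  filter_upwards [hev] with k hk
  calc (1 - β k) * ∑' t : ℕ, β k ^ t * u t ≤ g + (1 - β k) * D := key k
    _ ≤ g + ε := by linarith

/-- Core Abelian lower bound. -/
theorem abel_lower {u : ℕ → ℝ} (hu0 : ∀ t, 0 ≤ u t) (hu1 : ∀ t, u t ≤ 1)
    {β : ℕ → ℝ} (hβ : ∀ k, 0 ≤ β k ∧ β k < 1) (hβ1 : Tendsto β atTop (nhds 1))
    {g ε : ℝ} (hε : 0 < ε)
    (hC : ∀ᶠ n in atTop, g * n ≤ (∑ t ∈ Finset.range n, u t)) :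
    ∀ᶠ k in atTop, g - ε ≤ (1 - β k) * ∑' t : ℕ, β k ^ t * u t := by
  have h := abel_upper (u := fun t => 1 - u t) (fun t => by simp; linarith [hu1 t])
    (fun t => by simp; linarith [hu0 t]) hβ hβ1 (g := 1 - g) hε ?_
  · filter_upwards [h] with k hk
    obtain ⟨hk0, hk1⟩ := hβ k
    have hsum : Summable (fun t : ℕ => β k ^ t * u t) :=
      summable_geom_mul hk0 hk1 (fun t => abs_le.2 ⟨by linarith [hu0 t], hu1 t⟩)
    have hgeo : Summable (fun t : ℕ => β k ^ t) := summable_geometric_of_lt_one hk0 hk1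
    have e1 : (∑' t : ℕ, β k ^ t * (1 - u t)) = (1 - β k)⁻¹ - ∑' t : ℕ, β k ^ t * u t := by
      have : (fun t : ℕ => β k ^ t * (1 - u t)) = fun t : ℕ => β k ^ t - β k ^ t * u t := by
        funext t; ring
      rw [this, Summable.tsum_sub hgeo hsum, tsum_geometric_of_lt_one hk0 hk1]
    rw [e1] at hk
    have h1γ : (0:ℝ) < 1 - β k := by linarith
    have : (1 - β k) * (1 - β k)⁻¹ = 1 := mul_inv_cancel₀ (ne_of_gt h1γ)
    nlinarith
  · filter_upwards [hC] with n hn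
    have : (∑ t ∈ Finset.range n, (1 - u t)) = n - ∑ t ∈ Finset.range n, u t := by
      rw [Finset.sum_sub_distrib]; simp
    rw [this]
    push_cast
    linarith


end seqlemmas
variable {S : Type*} [Fintype S] [DecidableEq S] [Nonempty S]

variable {S : Type*} [Fintype S] [DecidableEq S] [Nonempty S]

theorem Stoch.norm_mulVec_le {M : Matrix S S ℝ} (hM : Stoch M) (v : S → ℝ) (s : S) :
    |(M *ᵥ v) s| ≤ ‖v‖ := by
  rw [abs_le]
  constructor
  · apply hM.le_mulVec
    intro x
    have := norm_le_pi_norm v x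
    rw [Real.norm_eq_abs] at this
    linarith [abs_le.1 this]
  · apply hM.mulVec_le
    intro x
    have := norm_le_pi_norm v x
    rw [Real.norm_eq_abs] at this
    linarith [abs_le.1 this]

/-- Mean ergodic theorem for a finite stochastic matrix: Cesàro averages of
`(M^t v)(s)` converge. -/
theorem cesaro_tendsto {M : Matrix S S ℝ} (hM : Stoch M) (v : S → ℝ) :
    ∃ w : S → ℝ, ∀ s : S, Tendsto
      (fun n : ℕ => (∑ t ∈ Finset.range n, ((M ^ t) *ᵥ v) s) / n) atTop (nhds (w s)) := by
  classical
  set f : (S → ℝ) →ₗ[ℝ] (S → ℝ) := M.mulVecLin with hf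
  set u : (S → ℝ) →ₗ[ℝ] (S → ℝ) := LinearMap.id - f with hu
  -- ker u ⊓ range u = ⊥
  have hdisj : LinearMap.ker u ⊓ LinearMap.range u = ⊥ := by
    rw [Submodule.eq_bot_iff]
    rintro x ⟨hker, hrange⟩
    obtain ⟨w, hw⟩ := hrange
    have hker' : M *ᵥ x = x := by
      have h0 : u x = 0 := hker
      rw [hu, LinearMap.sub_apply, LinearMap.id_apply, sub_eq_zero, hf] at h0
      exact h0.symm
    have hpow : ∀ t : ℕ, (M ^ t) *ᵥ x = x := by
      intro t
      induction t with
      | zero => simp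
      | succ n ih => rw [pow_succ', ← mulVec_mulVec, ih, hker']
    have htel : ∀ n : ℕ, ∑ t ∈ Finset.range n, ((M ^ t) *ᵥ (w - M *ᵥ w)) = w - (M ^ n) *ᵥ w := by
      intro n
      have : ∀ t : ℕ, (M ^ t) *ᵥ (w - M *ᵥ w) = (M ^ t) *ᵥ w - (M ^ (t+1)) *ᵥ w := by
        intro t
        rw [Matrix.mulVec_sub, pow_succ, ← mulVec_mulVec]
      simp only [this]
      rw [Finset.sum_range_sub' (fun t => (M ^ t) *ᵥ w)]
      simp
    have hwx : w - M *ᵥ w = x := by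
      have := hw
      rw [hu, LinearMap.sub_apply, LinearMap.id_apply, hf, Matrix.mulVecLin_apply] at this
      exact this
    by_contra hx
    have hxn : ‖x‖ > 0 := by
      simpa [norm_pos_iff] using hx
    obtain ⟨n, hn⟩ := exists_nat_gt (2 * ‖w‖ / ‖x‖)
    have hsum : ∑ t ∈ Finset.range n, ((M ^ t) *ᵥ x) = (n : ℝ) • x := by
      simp only [hpow]
      rw [Finset.sum_const, Finset.card_range, Nat.cast_smul_eq_nsmul]
    have hsum2 : (n : ℝ) • x = w - (M ^ n) *ᵥ w := by
      rw [← hsum, ← htel n, hwx]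
    have hnorm : (n : ℝ) * ‖x‖ ≤ 2 * ‖w‖ := by
      have h1 : ‖(n : ℝ) • x‖ = (n : ℝ) * ‖x‖ := by
        rw [norm_smul, Real.norm_natCast]
      have h2 : ‖w - (M ^ n) *ᵥ w‖ ≤ ‖w‖ + ‖(M ^ n) *ᵥ w‖ := norm_sub_le _ _
      have h3 : ‖(M ^ n) *ᵥ w‖ ≤ ‖w‖ := by
        apply pi_norm_le_iff_of_nonneg (norm_nonneg w) |>.2
        intro s
        rw [Real.norm_eq_abs]
        exact (hM.pow n).norm_mulVec_le w s
      rw [← hsum2] at h2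
      rw [h1] at h2
      linarith
    have h5 := (div_lt_iff₀ hxn).1 hn
    nlinarith
  -- ker u ⊔ range u = ⊤
  have htop : LinearMap.ker u ⊔ LinearMap.range u = ⊤ := by
    apply Submodule.eq_top_of_finrank_eq
    have h1 := Submodule.finrank_sup_add_finrank_inf_eq (LinearMap.ker u) (LinearMap.range u)
    have h2 := LinearMap.finrank_range_add_finrank_ker u
    rw [hdisj] at h1
    simp only [finrank_bot, add_zero] at h1
    rw [h1]
    omega
  -- decompose v
  have hv : v ∈ LinearMap.ker u ⊔ LinearMap.range u := by rw [htop]; trivial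
  obtain ⟨y, hy, z, hz, hyz⟩ := Submodule.mem_sup.1 hv
  obtain ⟨w, hw⟩ := hz
  refine ⟨y, fun s => ?_⟩
  have hMy : M *ᵥ y = y := by
    rw [LinearMap.mem_ker, hu, LinearMap.sub_apply, LinearMap.id_apply, sub_eq_zero] at hy
    rw [hf] at hy
    exact hy.symm
  have hpowy : ∀ t : ℕ, (M ^ t) *ᵥ y = y := by
    intro t
    induction t with
    | zero => simp
    | succ n ih => rw [pow_succ', ← mulVec_mulVec, ih, hMy]
  have hwz : w - M *ᵥ w = z := by
    rw [hu, LinearMap.sub_apply, LinearMap.id_apply, hf, Matrix.mulVecLin_apply] at hw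
    exact hw
  have hformula : ∀ n : ℕ, (∑ t ∈ Finset.range n, ((M ^ t) *ᵥ v) s)
      = n * y s + (w s - ((M ^ n) *ᵥ w) s) := by
    intro n
    have hsplit : ∀ t : ℕ, (M ^ t) *ᵥ v = y + ((M ^ t) *ᵥ w - (M ^ (t+1)) *ᵥ w) := by
      intro t
      rw [← hyz, ← hwz, Matrix.mulVec_add, hpowy, Matrix.mulVec_sub, pow_succ, ← mulVec_mulVec]
    have : (∑ t ∈ Finset.range n, ((M ^ t) *ᵥ v) s)
        = ∑ t ∈ Finset.range n, (y s + (((M ^ t) *ᵥ w) s - ((M ^ (t+1)) *ᵥ w) s)) := by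
      apply Finset.sum_congr rfl
      intro t _
      rw [hsplit t]
      simp [Pi.add_apply, Pi.sub_apply]
    rw [this, Finset.sum_add_distrib]
    rw [Finset.sum_range_sub' (fun t => ((M ^ t) *ᵥ w) s)]
    simp [mul_comm]
  have : Tendsto (fun n : ℕ => y s + (w s - ((M ^ n) *ᵥ w) s) / n) atTop (nhds (y s)) := by
    have hb : Tendsto (fun n : ℕ => (w s - ((M ^ n) *ᵥ w) s) / n) atTop (nhds 0) := by
      apply squeeze_zero_norm (a := fun n : ℕ => 2 * ‖w‖ / n)
      · intro n
        rw [Real.norm_eq_abs, abs_div, Nat.abs_cast]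
        rcases Nat.eq_zero_or_pos n with h | h
        · simp [h]
        · have hnum : |w s - ((M ^ n) *ᵥ w) s| ≤ 2 * ‖w‖ := by
            have h1 : |w s| ≤ ‖w‖ := by rw [← Real.norm_eq_abs]; exact norm_le_pi_norm w s
            have h2 : |((M ^ n) *ᵥ w) s| ≤ ‖w‖ := (hM.pow n).norm_mulVec_le w s
            calc |w s - ((M ^ n) *ᵥ w) s| ≤ |w s| + |((M ^ n) *ᵥ w) s| := abs_sub _ _
              _ ≤ 2 * ‖w‖ := by linarith
          have hn0 : (0:ℝ) < n := by exact_mod_cast h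
          gcongr
      · exact tendsto_const_div_atTop_nhds_zero_nat (2 * ‖w‖)
    have h6 := Tendsto.add (tendsto_const_nhds (x := y s) (f := atTop (α := ℕ))) hb
    simpa using h6
  apply this.congr'
  filter_upwards [eventually_ge_atTop 1] with n hn
  rw [hformula n]
  have hn0 : (n : ℝ) ≠ 0 := Nat.cast_ne_zero.2 (by omega)
  field_simp

variable {S : Type*} [Fintype S] [DecidableEq S] [Nonempty S]

/-- The discounted value of a Markov reward process given by stochastic
matrix `Q`, reward `v`, discount `γ`. -/
noncomputable def Vv (Q : Matrix S S ℝ) (v : S → ℝ) (γ : ℝ) (s : S) : ℝ :=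
  ∑' t : ℕ, γ ^ t * ((Q ^ t) *ᵥ v) s

section Vlemmas
variable {Q : Matrix S S ℝ} {v : S → ℝ} {γ : ℝ}
  (hQ : Stoch Q) (hv0 : ∀ x, 0 ≤ v x) (hv1 : ∀ x, v x ≤ 1)
  (hγ0 : 0 ≤ γ) (hγ1 : γ < 1)

include hQ hv0 hv1 in
theorem ut_nonneg (t : ℕ) (s : S) : 0 ≤ ((Q ^ t) *ᵥ v) s :=
  (hQ.pow t).le_mulVec hv0 s

include hQ hv0 hv1 in
theorem ut_le_one (t : ℕ) (s : S) : ((Q ^ t) *ᵥ v) s ≤ 1 :=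
  (hQ.pow t).mulVec_le hv1 s

include hQ hv0 hv1 hγ0 hγ1 in
theorem Vv_summable (s : S) : Summable (fun t : ℕ => γ ^ t * ((Q ^ t) *ᵥ v) s) := by
  apply summable_geom_mul hγ0 hγ1 (C := 1)
  intro t
  rw [abs_le]
  exact ⟨by linarith [ut_nonneg hQ hv0 hv1 t s], ut_le_one hQ hv0 hv1 t s⟩

include hQ hv0 hv1 hγ0 hγ1 in
theorem Vv_nonneg (s : S) : 0 ≤ Vv Q v γ s := by
  apply tsum_nonneg
  intro t
  exact mul_nonneg (pow_nonneg hγ0 t) (ut_nonneg hQ hv0 hv1 t s)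

include hQ hv0 hv1 hγ0 hγ1 in
theorem Vv_le (s : S) : Vv Q v γ s ≤ (1 - γ)⁻¹ := by
  have h := Summable.tsum_le_tsum (f := fun t : ℕ => γ ^ t * ((Q ^ t) *ᵥ v) s) (g := fun t : ℕ => γ ^ t)
    (fun t => by
      have h1 := ut_le_one hQ hv0 hv1 t s
      have h2 := pow_nonneg hγ0 t
      show γ ^ t * ((Q ^ t) *ᵥ v) s ≤ γ ^ t
      nlinarith)
    (Vv_summable hQ hv0 hv1 hγ0 hγ1 s) (summable_geometric_of_lt_one hγ0 hγ1)
  rw [tsum_geometric_of_lt_one hγ0 hγ1] at h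
  exact h

include hQ hv0 hv1 hγ0 hγ1 in
theorem Vv_bellman (s : S) : Vv Q v γ s = v s + γ * (Q *ᵥ Vv Q v γ) s := by
  have hsum := Vv_summable hQ hv0 hv1 hγ0 hγ1 s
  rw [Vv, Summable.tsum_eq_zero_add hsum]
  simp only [pow_zero, one_mul, Matrix.one_mulVec]
  congr 1
  have hstep : ∀ t : ℕ, γ ^ (t+1) * ((Q ^ (t+1)) *ᵥ v) s
      = ∑ x, Q s x * (γ * (γ ^ t * ((Q ^ t) *ᵥ v) x)) := by
    intro t
    rw [show Q ^ (t+1) = Q * Q ^ t from pow_succ' Q t, ← mulVec_mulVec]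
    rw [Matrix.mulVec, dotProduct]
    rw [Finset.mul_sum]
    apply Finset.sum_congr rfl
    intro x _
    ring
  simp only [hstep]
  rw [Summable.tsum_finsetSum (fun x _ => by
    apply Summable.mul_left
    apply Summable.mul_left
    exact Vv_summable hQ hv0 hv1 hγ0 hγ1 x)]
  rw [Matrix.mulVec, dotProduct, Finset.mul_sum]
  apply Finset.sum_congr rfl
  intro x _
  rw [tsum_mul_left, tsum_mul_left]
  rw [Vv]
  ring

end Vlemmas

/-! ### Span seminorm -/

noncomputable def vmax (v : S → ℝ) : ℝ := Finset.univ.sup' Finset.univ_nonempty v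
noncomputable def vmin (v : S → ℝ) : ℝ := Finset.univ.inf' Finset.univ_nonempty v
noncomputable def spanv (v : S → ℝ) : ℝ := vmax v - vmin v

theorem vmin_le (v : S → ℝ) (s : S) : vmin v ≤ v s := Finset.inf'_le _ (Finset.mem_univ s)
theorem le_vmax (v : S → ℝ) (s : S) : v s ≤ vmax v := Finset.le_sup' _ (Finset.mem_univ s)
theorem vmax_le {v : S → ℝ} {b : ℝ} (h : ∀ s, v s ≤ b) : vmax v ≤ b :=
  Finset.sup'_le _ _ fun s _ => h s
theorem le_vmin {v : S → ℝ} {b : ℝ} (h : ∀ s, b ≤ v s) : b ≤ vmin v :=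
  Finset.le_inf' _ _ fun s _ => h s
theorem spanv_nonneg (v : S → ℝ) : 0 ≤ spanv v := by
  obtain ⟨s⟩ := ‹Nonempty S›
  have := vmin_le v s
  have := le_vmax v s
  rw [spanv]; linarith
theorem spanv_le {v : S → ℝ} {b : ℝ} (h : ∀ s s', v s - v s' ≤ b) : spanv v ≤ b := by
  rw [spanv, sub_le_iff_le_add]
  apply vmax_le
  intro s
  rw [← sub_le_iff_le_add']
  apply le_vmin
  intro s'
  linarith [h s s']
theorem sub_le_spanv (v : S → ℝ) (s s' : S) : v s - v s' ≤ spanv v := by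
  have h1 := le_vmax v s
  have h2 := vmin_le v s'
  rw [spanv]; linarith

theorem spanv_abs_bound {v : S → ℝ} {b : ℝ} (h : ∀ s, |v s| ≤ b) : spanv v ≤ 2 * b := by
  apply spanv_le
  intro s s'
  have h1 := abs_le.1 (h s)
  have h2 := abs_le.1 (h s')
  linarith

/-- Dobrushin-type contraction : a stochastic matrix with entries `≥ α`
contracts the span by `1 - card S * α`. -/
theorem spanv_mulVec_le {R : Matrix S S ℝ} (hR : Stoch R) {α : ℝ}
    (hα : ∀ s s', α ≤ R s s') (v : S → ℝ) :
    spanv (R *ᵥ v) ≤ (1 - Fintype.card S * α) * spanv v := by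
  apply spanv_le
  intro s s'
  have key : (R *ᵥ v) s - (R *ᵥ v) s'
      = ∑ x, (R s x - R s' x) * (v x - vmin v) := by
    have h0 : ∑ x, (R s x - R s' x) * (v x - vmin v)
        = (∑ x, (R s x * v x - R s' x * v x)) - ((∑ x, R s x) - (∑ x, R s' x)) * vmin v := by
      rw [sub_mul, Finset.sum_mul, Finset.sum_mul, ← Finset.sum_sub_distrib,
        ← Finset.sum_sub_distrib]
      apply Finset.sum_congr rfl
      intro x _
      ring
    rw [Matrix.mulVec, Matrix.mulVec, dotProduct, dotProduct]
    rw [h0, hR.2 s, hR.2 s', Finset.sum_sub_distrib]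
    ring
  rw [key]
  have hbound : ∀ x, (R s x - R s' x) * (v x - vmin v) ≤ (R s x - α) * spanv v := by
    intro x
    have h1 : R s x - R s' x ≤ R s x - α := by linarith [hα s' x]
    have h2 : 0 ≤ v x - vmin v := by linarith [vmin_le v x]
    have h3 : v x - vmin v ≤ spanv v := by
      have := le_vmax v x; rw [spanv]; linarith
    rcases le_or_gt (R s x - R s' x) 0 with h | h
    · calc (R s x - R s' x) * (v x - vmin v) ≤ 0 := mul_nonpos_of_nonpos_of_nonneg h h2
        _ ≤ (R s x - α) * spanv v := by
            apply mul_nonneg _ (spanv_nonneg v)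
            linarith [hα s x]
    · calc (R s x - R s' x) * (v x - vmin v) ≤ (R s x - R s' x) * spanv v :=
          mul_le_mul_of_nonneg_left h3 (le_of_lt h)
        _ ≤ (R s x - α) * spanv v := mul_le_mul_of_nonneg_right h1 (spanv_nonneg v)
  calc ∑ x, (R s x - R s' x) * (v x - vmin v) ≤ ∑ x, (R s x - α) * spanv v :=
        Finset.sum_le_sum fun x _ => hbound x
    _ = (1 - Fintype.card S * α) * spanv v := by
        rw [← Finset.sum_mul]
        congr 1
        rw [Finset.sum_sub_distrib, hR.2 s]
        simp [Finset.card_univ, mul_comm]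

theorem spanv_add_le (x y : S → ℝ) : spanv (x + y) ≤ spanv x + spanv y := by
  apply spanv_le
  intro s s'
  have h1 := sub_le_spanv x s s'
  have h2 := sub_le_spanv y s s'
  simp only [Pi.add_apply]
  linarith

theorem sum_mulVec' {ι : Type*} (t : Finset ι) (f : ι → Matrix S S ℝ) (v : S → ℝ) :
    (∑ k ∈ t, f k) *ᵥ v = ∑ k ∈ t, (f k) *ᵥ v := by
  classical
  induction t using Finset.induction with
  | empty => simp
  | insert _ _ h ih => rw [Finset.sum_insert h, Finset.sum_insert h, Matrix.add_mulVec, ih]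

/-- Uniform span bound on discounted values from a minorization condition. -/
theorem spanv_Vv_le {Q : Matrix S S ℝ} {v : S → ℝ} {γ : ℝ}
    (hQ : Stoch Q) (hv0 : ∀ x, 0 ≤ v x) (hv1 : ∀ x, v x ≤ 1)
    (hγ0 : 0 ≤ γ) (hγ1 : γ < 1) {K0 : ℕ} (hK0 : 1 ≤ K0) {α : ℝ} (hα : 0 < α)
    (hmin : ∀ s s', α ≤ (∑ k ∈ Finset.Icc 1 K0, Q ^ k) s s') :
    spanv (Vv Q v γ) ≤ 2 * K0 * K0 / (Fintype.card S * α) := by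
  classical
  set V : S → ℝ := Vv Q v γ with hV
  set T : Matrix S S ℝ := ∑ k ∈ Finset.Icc 1 K0, Q ^ k with hT
  set M : Matrix S S ℝ := ((K0 : ℝ))⁻¹ • T with hM
  have hK0R : (0:ℝ) < K0 := by exact_mod_cast hK0
  have hcard : (Finset.Icc 1 K0).card = K0 := by rw [Nat.card_Icc]; omega
  have hMstoch : Stoch M := by
    constructor
    · intro s s'
      rw [hM, Matrix.smul_apply, smul_eq_mul]
      apply mul_nonneg (by positivity)
      rw [hT, Matrix.sum_apply]
      exact Finset.sum_nonneg fun k _ => (hQ.pow k).1 s s'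
    · intro s
      have hTsum : ∑ s', T s s' = (K0:ℝ) := by
        have e : ∀ s', T s s' = ∑ k ∈ Finset.Icc 1 K0, (Q ^ k) s s' := by
          intro s'; rw [hT]; simp [Matrix.sum_apply]
        rw [Finset.sum_congr rfl (fun s' _ => e s'), Finset.sum_comm,
          Finset.sum_congr rfl (fun k _ => (hQ.pow k).2 s), Finset.sum_const, hcard]
        simp
      simp only [hM, Matrix.smul_apply, smul_eq_mul, ← Finset.mul_sum]
      rw [hTsum]
      field_simp
  have hMentry : ∀ s s', α / K0 ≤ M s s' := by
    intro s s'
    rw [hM, Matrix.smul_apply, smul_eq_mul]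
    rw [div_eq_inv_mul]
    exact mul_le_mul_of_nonneg_left (hmin s s') (by positivity)
  -- |(V - M *ᵥ V) s| ≤ K0
  have hVQV : ∀ x, |V x - (Q *ᵥ V) x| ≤ 1 := by
    intro x
    have hbell := Vv_bellman hQ hv0 hv1 hγ0 hγ1 x
    have hQV0 : 0 ≤ (Q *ᵥ V) x := hQ.le_mulVec (fun y => Vv_nonneg hQ hv0 hv1 hγ0 hγ1 y) x
    have hQV1 : (Q *ᵥ V) x ≤ (1-γ)⁻¹ := hQ.mulVec_le (fun y => Vv_le hQ hv0 hv1 hγ0 hγ1 y) x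
    have h1γ : (0:ℝ) < 1 - γ := by linarith
    have hinv : (1-γ) * (1-γ)⁻¹ = 1 := mul_inv_cancel₀ (ne_of_gt h1γ)
    have heq : V x - (Q *ᵥ V) x = v x - (1-γ) * (Q *ᵥ V) x := by
      simp only [hV]
      rw [hbell]; ring
    rw [heq, abs_le]
    constructor
    · have : (1-γ) * (Q *ᵥ V) x ≤ 1 := by
        calc (1-γ) * (Q *ᵥ V) x ≤ (1-γ) * (1-γ)⁻¹ :=
          mul_le_mul_of_nonneg_left hQV1 (le_of_lt h1γ)
        _ = 1 := hinv
      have := hv0 x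
      linarith
    · have : 0 ≤ (1-γ) * (Q *ᵥ V) x := mul_nonneg (le_of_lt h1γ) hQV0
      have := hv1 x
      linarith
  have hVQk : ∀ k, 1 ≤ k → k ≤ K0 → ∀ x, |V x - ((Q ^ k) *ᵥ V) x| ≤ K0 := by
    intro k hk1 hkK x
    have htel : V - (Q ^ k) *ᵥ V = ∑ j ∈ Finset.range k, ((Q ^ j) *ᵥ (V - Q *ᵥ V)) := by
      have hterm : ∀ j, (Q ^ j) *ᵥ (V - Q *ᵥ V) = (Q ^ j) *ᵥ V - (Q ^ (j+1)) *ᵥ V := by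
        intro j
        rw [Matrix.mulVec_sub, pow_succ, ← mulVec_mulVec]
      simp only [hterm]
      rw [Finset.sum_range_sub' (fun j => (Q ^ j) *ᵥ V)]
      simp
    have : V x - ((Q ^ k) *ᵥ V) x = ∑ j ∈ Finset.range k, ((Q ^ j) *ᵥ (V - Q *ᵥ V)) x := by
      have := congrFun htel x
      simpa using this
    rw [this]
    calc |∑ j ∈ Finset.range k, ((Q ^ j) *ᵥ (V - Q *ᵥ V)) x|
        ≤ ∑ j ∈ Finset.range k, |((Q ^ j) *ᵥ (V - Q *ᵥ V)) x| := Finset.abs_sum_le_sum_abs _ _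
      _ ≤ ∑ _j ∈ Finset.range k, (1:ℝ) := by
          apply Finset.sum_le_sum
          intro j _
          rw [abs_le]
          constructor
          · apply (hQ.pow j).le_mulVec
            intro y
            have := abs_le.1 (hVQV y)
            simp only [Pi.sub_apply]
            linarith [this.1]
          · apply (hQ.pow j).mulVec_le
            intro y
            have := abs_le.1 (hVQV y)
            simp only [Pi.sub_apply]
            linarith [this.2]
      _ = k := by simp
      _ ≤ K0 := by exact_mod_cast hkK
  have hIMV : ∀ x, |V x - (M *ᵥ V) x| ≤ K0 := by
    intro x
    have hMV : (M *ᵥ V) = ((K0:ℝ))⁻¹ • (∑ k ∈ Finset.Icc 1 K0, ((Q ^ k) *ᵥ V)) := by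
      rw [hM, hT]
      rw [Matrix.smul_mulVec, sum_mulVec']
    have : V x - (M *ᵥ V) x
        = ((K0:ℝ))⁻¹ * ∑ k ∈ Finset.Icc 1 K0, (V x - ((Q ^ k) *ᵥ V) x) := by
      rw [hMV]
      rw [Finset.sum_sub_distrib]
      have : ∑ _k ∈ Finset.Icc 1 K0, V x = K0 * V x := by
        rw [Finset.sum_const, hcard]; simp [mul_comm]
      rw [this]
      simp only [Pi.smul_apply, smul_eq_mul, Finset.sum_apply]
      field_simp
    rw [this, abs_mul]
    rw [abs_of_nonneg (by positivity : (0:ℝ) ≤ ((K0:ℝ))⁻¹)]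
    calc ((K0:ℝ))⁻¹ * |∑ k ∈ Finset.Icc 1 K0, (V x - ((Q ^ k) *ᵥ V) x)|
        ≤ ((K0:ℝ))⁻¹ * ∑ k ∈ Finset.Icc 1 K0, |V x - ((Q ^ k) *ᵥ V) x| := by
          apply mul_le_mul_of_nonneg_left (Finset.abs_sum_le_sum_abs _ _) (by positivity)
      _ ≤ ((K0:ℝ))⁻¹ * ∑ _k ∈ Finset.Icc 1 K0, (K0:ℝ) := by
          apply mul_le_mul_of_nonneg_left _ (by positivity)
          apply Finset.sum_le_sum
          intro k hk
          obtain ⟨hk1, hkK⟩ := Finset.mem_Icc.1 hk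
          exact hVQk k hk1 hkK x
      _ = K0 := by
          rw [Finset.sum_const, hcard]
          simp
          field_simp
  -- Dobrushin step
  have hdob : spanv (M *ᵥ V) ≤ (1 - Fintype.card S * (α / K0)) * spanv V :=
    spanv_mulVec_le hMstoch hMentry V
  have hsplit : spanv V ≤ spanv (V - M *ᵥ V) + spanv (M *ᵥ V) := by
    have : V = (V - M *ᵥ V) + (M *ᵥ V) := by ring
    calc spanv V = spanv ((V - M *ᵥ V) + (M *ᵥ V)) := by rw [← this]
      _ ≤ _ := spanv_add_le _ _
  have hsp1 : spanv (V - M *ᵥ V) ≤ 2 * K0 := by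
    apply spanv_abs_bound
    intro x
    exact hIMV x
  have hcS : (0:ℝ) < Fintype.card S := by
    have : 0 < Fintype.card S := Fintype.card_pos
    exact_mod_cast this
  have hfinal : Fintype.card S * (α / K0) * spanv V ≤ 2 * K0 := by
    nlinarith [spanv_nonneg V, hdob, hsp1, hsplit]
  rw [le_div_iff₀ (by positivity : (0:ℝ) < Fintype.card S * α)]
  calc spanv V * (Fintype.card S * α)
      = (Fintype.card S * (α / K0) * spanv V) * K0 := by field_simp
    _ ≤ (2 * K0) * K0 := mul_le_mul_of_nonneg_right hfinal (by positivity)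
    _ = 2 * K0 * K0 := by ring

/-- Lipschitz continuity of the (normalized) discounted value in the pair
(reward, transition matrix), uniform in the discount factor. -/
theorem Vv_lip {Q Q' : Matrix S S ℝ} (hQ : Stoch Q) (hQ' : Stoch Q') {v v' : S → ℝ}
    (hv0 : ∀ x, 0 ≤ v x) (hv1 : ∀ x, v x ≤ 1) (hv0' : ∀ x, 0 ≤ v' x) (hv1' : ∀ x, v' x ≤ 1)
    {γ : ℝ} (hγ0 : 0 ≤ γ) (hγ1 : γ < 1) {η η' C : ℝ}
    (hvv : ∀ x, |v x - v' x| ≤ η)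
    (hQQ : ∀ s, ∑ x, |Q s x - Q' s x| ≤ η')
    (hsp : spanv (Vv Q' v' γ) ≤ C) :
    ∀ s, (1 - γ) * |Vv Q v γ s - Vv Q' v' γ s| ≤ η + η' * C := by
  classical
  set V : S → ℝ := Vv Q v γ with hV
  set V' : S → ℝ := Vv Q' v' γ with hV'
  set Δ : ℝ := vmax (fun s => |V s - V' s|) with hΔdef
  obtain ⟨s₀⟩ := ‹Nonempty S›
  have hη' : 0 ≤ η' :=
    le_trans (Finset.sum_nonneg fun x _ => abs_nonneg _) (hQQ s₀)
  have hC : 0 ≤ C := le_trans (spanv_nonneg _) hsp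
  have hΔ0 : 0 ≤ Δ := le_trans (abs_nonneg (V s₀ - V' s₀)) (le_vmax (fun s => |V s - V' s|) s₀)
  have hstep : ∀ s, |V s - V' s| ≤ η + γ * Δ + γ * (η' * C) := by
    intro s
    have hb := Vv_bellman hQ hv0 hv1 hγ0 hγ1 s
    have hb' := Vv_bellman hQ' hv0' hv1' hγ0 hγ1 s
    have hdec : V s - V' s
        = (v s - v' s) + γ * ((Q *ᵥ (V - V')) s + ∑ x, (Q s x - Q' s x) * V' x) := by
      have e1 : (Q *ᵥ (V - V')) s + ∑ x, (Q s x - Q' s x) * V' x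
          = (Q *ᵥ V) s - (Q' *ᵥ V') s := by
        rw [Matrix.mulVec, Matrix.mulVec, Matrix.mulVec, dotProduct,
          dotProduct, dotProduct, ← Finset.sum_add_distrib,
          ← Finset.sum_sub_distrib]
        apply Finset.sum_congr rfl
        intro x _
        simp only [Pi.sub_apply]
        ring
      rw [e1]
      simp only [hV, hV'] at hb hb' ⊢
      rw [hb, hb']
      ring
    have hbound1 : |(Q *ᵥ (V - V')) s| ≤ Δ := by
      rw [abs_le]
      constructor
      · apply hQ.le_mulVec
        intro x
        have h := abs_le.1 (le_vmax (fun s => |V s - V' s|) x)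
        simp only [Pi.sub_apply]
        exact h.1
      · apply hQ.mulVec_le
        intro x
        have h := abs_le.1 (le_vmax (fun s => |V s - V' s|) x)
        simp only [Pi.sub_apply]
        exact h.2
    have hbound2 : |∑ x, (Q s x - Q' s x) * V' x| ≤ η' * C := by
      have hzero : ∑ x, (Q s x - Q' s x) = 0 := by
        rw [Finset.sum_sub_distrib, hQ.2 s, hQ'.2 s]; ring
      have e2 : ∑ x, (Q s x - Q' s x) * V' x
          = ∑ x, (Q s x - Q' s x) * (V' x - vmin V') := by
        have e3 : ∑ x, (Q s x - Q' s x) * (V' x - vmin V')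
            = ∑ x, (Q s x - Q' s x) * V' x - (∑ x, (Q s x - Q' s x)) * vmin V' := by
          rw [Finset.sum_mul, ← Finset.sum_sub_distrib]
          apply Finset.sum_congr rfl
          intro x _
          ring
        rw [e3, hzero]
        ring
      rw [e2]
      calc |∑ x, (Q s x - Q' s x) * (V' x - vmin V')|
          ≤ ∑ x, |(Q s x - Q' s x) * (V' x - vmin V')| := Finset.abs_sum_le_sum_abs _ _
        _ ≤ ∑ x, |Q s x - Q' s x| * C := by
            apply Finset.sum_le_sum
            intro x _
            rw [abs_mul]
            apply mul_le_mul_of_nonneg_left _ (abs_nonneg _)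
            rw [abs_of_nonneg (by linarith [vmin_le V' x] : (0:ℝ) ≤ V' x - vmin V')]
            have h4 : V' x - vmin V' ≤ spanv V' := by
              have := le_vmax V' x; rw [spanv]; linarith
            linarith
        _ = (∑ x, |Q s x - Q' s x|) * C := by rw [Finset.sum_mul]
        _ ≤ η' * C := mul_le_mul_of_nonneg_right (hQQ s) hC
    calc |V s - V' s| = |(v s - v' s) + γ * ((Q *ᵥ (V - V')) s + ∑ x, (Q s x - Q' s x) * V' x)| := by
          rw [← hdec]
      _ ≤ |v s - v' s| + γ * (|(Q *ᵥ (V - V')) s| + |∑ x, (Q s x - Q' s x) * V' x|) := by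
          have h5 := abs_add_le (v s - v' s)
            (γ * ((Q *ᵥ (V - V')) s + ∑ x, (Q s x - Q' s x) * V' x))
          have h6 := abs_add_le ((Q *ᵥ (V - V')) s) (∑ x, (Q s x - Q' s x) * V' x)
          have h7 : |γ * ((Q *ᵥ (V - V')) s + ∑ x, (Q s x - Q' s x) * V' x)|
              = γ * |(Q *ᵥ (V - V')) s + ∑ x, (Q s x - Q' s x) * V' x| := by
            rw [abs_mul, abs_of_nonneg hγ0]
          nlinarith [abs_nonneg ((Q *ᵥ (V - V')) s + ∑ x, (Q s x - Q' s x) * V' x)]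
      _ ≤ η + γ * Δ + γ * (η' * C) := by
          have h8 := hvv s
          nlinarith [hbound1, hbound2]
  have hΔle : Δ ≤ η + γ * Δ + γ * (η' * C) := vmax_le hstep
  intro s
  have h1 : |V s - V' s| ≤ Δ := le_vmax (fun s => |V s - V' s|) s
  have h2 : (1 - γ) * |V s - V' s| ≤ (1 - γ) * Δ :=
    mul_le_mul_of_nonneg_left h1 (by linarith)
  have h3 : γ * (η' * C) ≤ η' * C := by nlinarith [mul_nonneg hη' hC]
  nlinarith


/-! ### Glue lemmas connecting the abstract theory with the game definitions -/

section glue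
variable {A : Type*} [Fintype A] [Nonempty A]

theorem polMat_stoch (ρ : S → A → ℝ) (P : S → A → S → ℝ)
    (hρ : ∀ s, ρ s ∈ stdSimplex ℝ A) (hP : ∀ s a, P s a ∈ stdSimplex ℝ S) :
    Stoch (polMat ρ P) := by
  constructor
  · intro s s'
    apply Finset.sum_nonneg
    intro a _
    exact mul_nonneg ((hρ s).1 a) ((hP s a).1 s')
  · intro s
    have e : ∀ s', polMat ρ P s s' = ∑ a, ρ s a * P s a s' := fun _ => rfl
    calc ∑ s', polMat ρ P s s' = ∑ s', ∑ a, ρ s a * P s a s' :=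
          Finset.sum_congr rfl fun s' _ => e s'
      _ = ∑ a, ∑ s', ρ s a * P s a s' := Finset.sum_comm
      _ = ∑ a, ρ s a := by
          apply Finset.sum_congr rfl
          intro a _
          rw [← Finset.mul_sum, (hP s a).2, mul_one]
      _ = 1 := (hρ s).2

theorem polRew_nonneg (ρ : S → A → ℝ) (r : S → A → ℝ)
    (hρ : ∀ s, ρ s ∈ stdSimplex ℝ A) (hr : ∀ s a, r s a ∈ Set.Icc (0:ℝ) 1) (s : S) :
    0 ≤ polRew ρ r s :=
  Finset.sum_nonneg fun a _ => mul_nonneg ((hρ s).1 a) (hr s a).1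

theorem polRew_le_one (ρ : S → A → ℝ) (r : S → A → ℝ)
    (hρ : ∀ s, ρ s ∈ stdSimplex ℝ A) (hr : ∀ s a, r s a ∈ Set.Icc (0:ℝ) 1) (s : S) :
    polRew ρ r s ≤ 1 := by
  calc polRew ρ r s ≤ ∑ a, ρ s a := by
        apply Finset.sum_le_sum
        intro a _
        calc ρ s a * r s a ≤ ρ s a * 1 :=
            mul_le_mul_of_nonneg_left (hr s a).2 ((hρ s).1 a)
          _ = ρ s a := mul_one _
    _ = 1 := (hρ s).2

theorem discR_eq_Vv (ρ : S → A → ℝ) (P : S → A → S → ℝ) (r : S → A → ℝ) (γ : ℝ) (s : S) :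
    discR ρ P r γ s = Vv (polMat ρ P) (polRew ρ r) γ s := rfl

/-- Nonnegativity of the average reward. -/
theorem avgR_nonneg (ρ : S → A → ℝ) (P : S → A → S → ℝ) (r : S → A → ℝ)
    (hρ : ∀ s, ρ s ∈ stdSimplex ℝ A) (hP : ∀ s a, P s a ∈ stdSimplex ℝ S)
    (hr : ∀ s a, r s a ∈ Set.Icc (0:ℝ) 1) (s : S) :
    0 ≤ avgR ρ P r s := by
  have hQ : Stoch (polMat ρ P) := polMat_stoch ρ P hρ hP
  have hv0 : ∀ x, 0 ≤ polRew ρ r x := polRew_nonneg ρ r hρ hr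
  have hv1 : ∀ x, polRew ρ r x ≤ 1 := polRew_le_one ρ r hρ hr
  have h0 : ∀ n : ℕ, 0 ≤ (∑ t ∈ Finset.range n, ((polMat ρ P ^ t) *ᵥ polRew ρ r) s) / n := by
    intro n
    apply div_nonneg _ (Nat.cast_nonneg n)
    exact Finset.sum_nonneg fun t _ => ut_nonneg hQ hv0 hv1 t s
  apply Filter.le_liminf_of_le
  · apply Filter.IsBoundedUnder.isCoboundedUnder_ge
    refine Filter.isBoundedUnder_of ⟨1, fun n => ?_⟩
    rcases Nat.eq_zero_or_pos n with h | h
    · simp [h]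
    · rw [div_le_one (by exact_mod_cast h)]
      calc (∑ t ∈ Finset.range n, ((polMat ρ P ^ t) *ᵥ polRew ρ r) s)
          ≤ ∑ _t ∈ Finset.range n, (1:ℝ) :=
            Finset.sum_le_sum fun t _ => ut_le_one hQ hv0 hv1 t s
        _ = n := by simp
  · exact Filter.Eventually.of_forall h0

end glue

section glue2
variable {A : Type*} [Fintype A] [Nonempty A]

theorem jointPol_mem {N : ℕ} {B : Fin N → Type*} [∀ i, Fintype (B i)]
    {S' : Type*} (π : ∀ i, S' → B i → ℝ)
    (hπ : ∀ i s, π i s ∈ stdSimplex ℝ (B i)) (s : S') :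
    jointPol π s ∈ stdSimplex ℝ (∀ i, B i) := by
  constructor
  · intro a
    exact Finset.prod_nonneg fun i _ => (hπ i s).1 (a i)
  · have h1 := Finset.prod_univ_sum (fun i : Fin N => (Finset.univ : Finset (B i)))
      (fun i x => π i s x)
    rw [Fintype.piFinset_univ] at h1
    calc ∑ a : ∀ i, B i, jointPol π s a = ∏ i, ∑ x, π i s x := h1.symm
      _ = ∏ i, (1:ℝ) := Finset.prod_congr rfl fun i _ => (hπ i s).2
      _ = 1 := Finset.prod_const_one

theorem update_mem {N : ℕ} {B : Fin N → Type*} {S' : Type*}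
    (π : ∀ i, S' → B i → ℝ) (i : Fin N) (μ : S' → B i → ℝ)
    [∀ i, Fintype (B i)]
    (hπ : ∀ j s, π j s ∈ stdSimplex ℝ (B j)) (hμ : ∀ s, μ s ∈ stdSimplex ℝ (B i)) :
    ∀ j s, (Function.update π i μ) j s ∈ stdSimplex ℝ (B j) := by
  intro j s
  rcases eq_or_ne j i with h | h
  · subst h
    rw [Function.update_self]
    exact hμ s
  · rw [Function.update_of_ne h]
    exact hπ j s

/-- `robDiscR` is at most the value at any admissible kernel. -/
theorem robDiscR_le (U : S → A → Set (S → ℝ))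
    (hUsub : ∀ s a, U s a ⊆ stdSimplex ℝ S)
    (ρ : S → A → ℝ) (hρ : ∀ s, ρ s ∈ stdSimplex ℝ A)
    (r : S → A → ℝ) (hr : ∀ s a, r s a ∈ Set.Icc (0:ℝ) 1)
    {γ : ℝ} (hγ0 : 0 ≤ γ) (hγ1 : γ < 1)
    {P : S → A → S → ℝ} (hP : ∀ s' a, P s' a ∈ U s' a) (s : S) :
    robDiscR U ρ r γ s ≤ discR ρ P r γ s := by
  apply csInf_le
  · refine ⟨0, fun x hx => ?_⟩
    obtain ⟨P', hP', rfl⟩ := hx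
    rw [discR_eq_Vv]
    exact Vv_nonneg (polMat_stoch ρ P' hρ (fun s' a => hUsub s' a (hP' s' a)))
      (polRew_nonneg ρ r hρ hr) (polRew_le_one ρ r hρ hr) hγ0 hγ1 s
  · exact ⟨P, hP, rfl⟩

theorem le_robDiscR (U : S → A → Set (S → ℝ))
    {P₀ : S → A → S → ℝ} (hP₀ : ∀ s' a, P₀ s' a ∈ U s' a)
    (ρ : S → A → ℝ) (r : S → A → ℝ) {γ : ℝ} (s : S) {c : ℝ}
    (h : ∀ P : S → A → S → ℝ, (∀ s' a, P s' a ∈ U s' a) → c ≤ discR ρ P r γ s) :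
    c ≤ robDiscR U ρ r γ s := by
  have hne : Set.Nonempty {x | ∃ P : S → A → S → ℝ, (∀ s' a, P s' a ∈ U s' a) ∧ x = discR ρ P r γ s} :=
    ⟨discR ρ P₀ r γ s, P₀, hP₀, rfl⟩
  apply le_csInf hne
  rintro x ⟨P, hP, rfl⟩
  exact h P hP

theorem robAvgR_le (U : S → A → Set (S → ℝ))
    (hUsub : ∀ s a, U s a ⊆ stdSimplex ℝ S)
    (ρ : S → A → ℝ) (hρ : ∀ s, ρ s ∈ stdSimplex ℝ A)
    (r : S → A → ℝ) (hr : ∀ s a, r s a ∈ Set.Icc (0:ℝ) 1)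
    {P : S → A → S → ℝ} (hP : ∀ s' a, P s' a ∈ U s' a) (s : S) :
    robAvgR U ρ r s ≤ avgR ρ P r s := by
  apply csInf_le
  · refine ⟨0, fun x hx => ?_⟩
    obtain ⟨P', hP', rfl⟩ := hx
    exact avgR_nonneg ρ P' r hρ (fun s' a => hUsub s' a (hP' s' a)) hr s
  · exact ⟨P, hP, rfl⟩

theorem robAvgR_lower (U : S → A → Set (S → ℝ))
    {P₀ : S → A → S → ℝ} (hP₀ : ∀ s' a, P₀ s' a ∈ U s' a)
    (ρ : S → A → ℝ) (r : S → A → ℝ) (s : S) {c : ℝ}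
    (h : ∀ P : S → A → S → ℝ, (∀ s' a, P s' a ∈ U s' a) → c ≤ avgR ρ P r s) :
    c ≤ robAvgR U ρ r s := by
  have hne : Set.Nonempty {x | ∃ P : S → A → S → ℝ, (∀ s' a, P s' a ∈ U s' a) ∧ x = avgR ρ P r s} :=
    ⟨avgR ρ P₀ r s, P₀, hP₀, rfl⟩
  apply le_csInf hne
  rintro x ⟨P, hP, rfl⟩
  exact h P hP

end glue2

section minor
variable {A : Type*} [Fintype A] [Nonempty A]

/-- Uniform minorization: under Assumption 1 and compactness, there are `K0 ≥ 1`
and `α > 0` such that all entries of `∑_{k=1}^{K0} (P^ρ)^k` are at least `α`,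
uniformly over policies and admissible kernels. -/
theorem minor (U : S → A → Set (S → ℝ))
    (hU : ∀ s a, (U s a).Nonempty ∧ IsCompact (U s a) ∧ Convex ℝ (U s a) ∧
      U s a ⊆ stdSimplex ℝ S)
    (hirr : Assump1 U) :
    ∃ K0 : ℕ, 1 ≤ K0 ∧ ∃ α : ℝ, 0 < α ∧
      ∀ (ρ : S → A → ℝ), (∀ s, ρ s ∈ stdSimplex ℝ A) →
      ∀ (P : S → A → S → ℝ), (∀ s a, P s a ∈ U s a) →
      ∀ s s', α ≤ (∑ k ∈ Finset.Icc 1 K0, (polMat ρ P) ^ k) s s' := by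
  classical
  set X : Set ((S → A → ℝ) × (S → A → S → ℝ)) :=
    {x | (∀ s, x.1 s ∈ stdSimplex ℝ A) ∧ (∀ s a, x.2 s a ∈ U s a)} with hX
  have hX1 : IsCompact {ρ : S → A → ℝ | ∀ s, ρ s ∈ stdSimplex ℝ A} := by
    have e : {ρ : S → A → ℝ | ∀ s, ρ s ∈ stdSimplex ℝ A}
        = Set.univ.pi (fun _ : S => stdSimplex ℝ A) := by
      ext ρ; simp [Set.mem_pi]
    rw [e]; exact isCompact_univ_pi fun _ => isCompact_stdSimplex ℝ A
  have hX2 : IsCompact {P : S → A → S → ℝ | ∀ s a, P s a ∈ U s a} := by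
    have e : {P : S → A → S → ℝ | ∀ s a, P s a ∈ U s a}
        = Set.univ.pi (fun s : S => Set.univ.pi (fun a : A => U s a)) := by
      ext P; simp [Set.mem_pi]
    rw [e]; exact isCompact_univ_pi fun s => isCompact_univ_pi fun a => (hU s a).2.1
  have hXc : IsCompact X := by
    have e : X = {ρ : S → A → ℝ | ∀ s, ρ s ∈ stdSimplex ℝ A}
        ×ˢ {P : S → A → S → ℝ | ∀ s a, P s a ∈ U s a} := by
      ext x
      simp only [hX, Set.mem_setOf_eq, Set.mem_prod]
    rw [e]; exact hX1.prod hX2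
  have hcont : ∀ (k : ℕ) (s s' : S),
      Continuous (fun x : (S → A → ℝ) × (S → A → S → ℝ) => ((polMat x.1 x.2) ^ k) s s') := by
    intro k
    induction k with
    | zero =>
      intro s s'
      have e : (fun x : (S → A → ℝ) × (S → A → S → ℝ) => ((polMat x.1 x.2) ^ 0) s s')
          = fun _ => (1 : Matrix S S ℝ) s s' := by
        funext x; rw [pow_zero]
      rw [e]; exact continuous_const
    | succ k ih =>
      intro s s'
      have e : (fun x : (S → A → ℝ) × (S → A → S → ℝ) => ((polMat x.1 x.2) ^ (k+1)) s s')
          = fun x => ∑ y, ((polMat x.1 x.2) ^ k) s y * (polMat x.1 x.2) y s' := by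
        funext x; rw [pow_succ, Matrix.mul_apply]
      rw [e]
      apply continuous_finset_sum
      intro y _
      apply Continuous.mul (ih s y)
      have e2 : (fun x : (S → A → ℝ) × (S → A → S → ℝ) => (polMat x.1 x.2) y s')
          = fun x => ∑ a, x.1 y a * x.2 y a s' := rfl
      rw [e2]
      apply continuous_finset_sum
      intro a _
      apply Continuous.mul
      · exact ((continuous_apply a).comp ((continuous_apply y).comp continuous_fst))
      · exact ((continuous_apply s').comp ((continuous_apply a).comp
          ((continuous_apply y).comp continuous_snd)))
  have hsumcont : ∀ (K : ℕ) (s s' : S),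
      Continuous (fun x : (S → A → ℝ) × (S → A → S → ℝ) =>
        ∑ k ∈ Finset.Icc 1 K, ((polMat x.1 x.2) ^ k) s s') :=
    fun K s s' => continuous_finset_sum _ fun k _ => hcont k s s'
  -- pointwise positivity
  have hpos : ∀ x ∈ X, ∃ K : ℕ, 1 ≤ K ∧
      ∀ s s', 0 < ∑ k ∈ Finset.Icc 1 K, ((polMat x.1 x.2) ^ k) s s' := by
    rintro ⟨ρ, P⟩ ⟨hρ, hP⟩
    have hPsim : ∀ s a, P s a ∈ stdSimplex ℝ S := fun s a => (hU s a).2.2.2 (hP s a)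
    have hQ : Stoch (polMat ρ P) := polMat_stoch ρ P hρ hPsim
    have hsel : ∀ s : S, ∃ a : A, 0 < ρ s a := by
      intro s
      by_contra h
      push_neg at h
      have h1 := (hρ s).2
      have h2 : ∑ a, ρ s a ≤ 0 := Finset.sum_nonpos fun a _ => h a
      linarith
    choose d hd using hsel
    set Md : Matrix S S ℝ := Matrix.of fun s s' => P s (d s) s' with hMd
    have hMdS : Stoch Md := ⟨fun s s' => (hPsim s (d s)).1 s', fun s => (hPsim s (d s)).2⟩
    have hIr : IrredM Md := hirr d P hP
    set c : ℝ := Finset.univ.inf' Finset.univ_nonempty (fun s => ρ s (d s)) with hc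
    have hc0 : 0 < c := (Finset.lt_inf'_iff _).2 fun s _ => hd s
    have hQM : ∀ s s', c * Md s s' ≤ (polMat ρ P) s s' := by
      intro s s'
      have h1 : ρ s (d s) * P s (d s) s' ≤ ∑ a, ρ s a * P s a s' :=
        Finset.single_le_sum (fun a _ => mul_nonneg ((hρ s).1 a) ((hPsim s a).1 s'))
          (Finset.mem_univ (d s))
      have h2 : c * Md s s' ≤ ρ s (d s) * P s (d s) s' :=
        mul_le_mul_of_nonneg_right (Finset.inf'_le _ (Finset.mem_univ s))
          ((hPsim s (d s)).1 s')
      exact le_trans h2 h1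
    have hpowQM : ∀ k s s', c ^ k * (Md ^ k) s s' ≤ ((polMat ρ P) ^ k) s s' := by
      intro k
      induction k with
      | zero => intro s s'; simp
      | succ k ih =>
        intro s s'
        rw [pow_succ, pow_succ, pow_succ, Matrix.mul_apply, Matrix.mul_apply, Finset.mul_sum]
        apply Finset.sum_le_sum
        intro y _
        have hA := ih s y
        have hB := hQM y s'
        have h0a : 0 ≤ c ^ k * (Md ^ k) s y :=
          mul_nonneg (by positivity) ((hMdS.pow k).1 s y)
        have h0b : 0 ≤ c * Md y s' := mul_nonneg (le_of_lt hc0) (hMdS.1 y s')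
        calc c ^ (k+1) * ((Md ^ k) s y * Md y s')
            = (c ^ k * (Md ^ k) s y) * (c * Md y s') := by ring
          _ ≤ ((polMat ρ P) ^ k) s y * ((polMat ρ P) y s') :=
              mul_le_mul hA hB h0b (le_trans h0a hA)
    have hk : ∀ p : S × S, ∃ k, 1 ≤ k ∧ 0 < (Md ^ k) p.1 p.2 := fun p => hIr p.1 p.2
    choose kf hk1 hk2 using hk
    refine ⟨max (Finset.univ.sup kf) 1, le_max_right _ 1, ?_⟩
    intro s s'
    have hmem : kf (s, s') ∈ Finset.Icc 1 (max (Finset.univ.sup kf) 1) :=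
      Finset.mem_Icc.2 ⟨hk1 _, le_trans (Finset.le_sup (Finset.mem_univ (s, s')))
        (le_max_left _ _)⟩
    apply Finset.sum_pos' (fun k _ => (hQ.pow k).1 s s')
    refine ⟨kf (s, s'), hmem, ?_⟩
    calc (0:ℝ) < c ^ (kf (s,s')) * (Md ^ (kf (s,s'))) s s' := by
          apply mul_pos (by positivity) (hk2 (s, s'))
      _ ≤ ((polMat ρ P) ^ (kf (s,s'))) s s' := hpowQM _ s s'
  -- finite subcover
  set O : ℕ → Set ((S → A → ℝ) × (S → A → S → ℝ)) := fun K =>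
    {x | ∀ s s', 0 < ∑ k ∈ Finset.Icc 1 K, ((polMat x.1 x.2) ^ k) s s'} with hO
  have hOopen : ∀ K, IsOpen (O K) := by
    intro K
    have e : O K = ⋂ s, ⋂ s',
        {x : (S → A → ℝ) × (S → A → S → ℝ) |
          0 < ∑ k ∈ Finset.Icc 1 K, ((polMat x.1 x.2) ^ k) s s'} := by
      ext x
      simp only [hO, Set.mem_setOf_eq, Set.mem_iInter]
    rw [e]
    apply isOpen_iInter_of_finite
    intro s
    apply isOpen_iInter_of_finite
    intro s'
    exact isOpen_lt continuous_const (hsumcont K s s')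
  have hcover : X ⊆ ⋃ K, O K := by
    intro x hx
    obtain ⟨K, _, hK⟩ := hpos x hx
    exact Set.mem_iUnion.2 ⟨K, hK⟩
  obtain ⟨F, hF⟩ := hXc.elim_finite_subcover O hOopen hcover
  set K0 : ℕ := F.sup id + 1 with hK0def
  have hK0 : 1 ≤ K0 := by omega
  have hposK0 : ∀ x ∈ X, ∀ s s',
      0 < ∑ k ∈ Finset.Icc 1 K0, ((polMat x.1 x.2) ^ k) s s' := by
    intro x hx s s'
    have hx2 := hF hx
    rw [Set.mem_iUnion₂] at hx2
    obtain ⟨K, hKF, hKx⟩ := hx2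
    have hQ : Stoch (polMat x.1 x.2) :=
      polMat_stoch _ _ hx.1 (fun s a => (hU s a).2.2.2 (hx.2 s a))
    have hsub : Finset.Icc 1 K ⊆ Finset.Icc 1 K0 := by
      apply Finset.Icc_subset_Icc_right
      have : K ≤ F.sup id := Finset.le_sup (f := id) hKF
      omega
    calc (0:ℝ) < ∑ k ∈ Finset.Icc 1 K, ((polMat x.1 x.2) ^ k) s s' := hKx s s'
      _ ≤ ∑ k ∈ Finset.Icc 1 K0, ((polMat x.1 x.2) ^ k) s s' :=
          Finset.sum_le_sum_of_subset_of_nonneg hsub fun k _ _ => (hQ.pow k).1 s s'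
  have hXne : X.Nonempty := by
    refine ⟨⟨fun _ _ => (Fintype.card A : ℝ)⁻¹, fun s a => (hU s a).1.some⟩,
      ⟨?_, fun s a => (hU s a).1.some_mem⟩⟩
    intro s
    constructor
    · intro a; positivity
    · rw [Finset.sum_const, Finset.card_univ]
      have : (0:ℝ) < Fintype.card A := by
        have := Fintype.card_pos (α := A)
        exact_mod_cast this
      rw [nsmul_eq_mul]
      field_simp
  have hmin : ∀ p : S × S, ∃ αp : ℝ, 0 < αp ∧ ∀ x ∈ X,
      αp ≤ ∑ k ∈ Finset.Icc 1 K0, ((polMat x.1 x.2) ^ k) p.1 p.2 := by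
    intro p
    obtain ⟨x0, hx0X, hx0min⟩ := hXc.exists_isMinOn hXne (hsumcont K0 p.1 p.2).continuousOn
    exact ⟨_, hposK0 x0 hx0X p.1 p.2, fun x hx => (isMinOn_iff.1 hx0min) x hx⟩
  choose αf hαf0 hαf using hmin
  refine ⟨K0, hK0, Finset.univ.inf' Finset.univ_nonempty αf,
    (Finset.lt_inf'_iff _).2 fun p _ => hαf0 p, ?_⟩
  intro ρ hρ P hP s s'
  have hx : (ρ, P) ∈ X := ⟨hρ, hP⟩
  have e : (∑ k ∈ Finset.Icc 1 K0, (polMat ρ P) ^ k) s s'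
      = ∑ k ∈ Finset.Icc 1 K0, ((polMat ρ P) ^ k) s s' := by
    simp [Matrix.sum_apply]
  rw [e]
  calc Finset.univ.inf' Finset.univ_nonempty αf ≤ αf (s, s') :=
        Finset.inf'_le _ (Finset.mem_univ _)
    _ ≤ _ := hαf (s, s') _ hx

end minor

section glue3
variable {A : Type*} [Fintype A] [Nonempty A]

theorem polRew_diff {ρ ρ' : S → A → ℝ} (r : S → A → ℝ)
    (hr : ∀ s a, r s a ∈ Set.Icc (0:ℝ) 1) {η : ℝ}
    (hd : ∀ s', ∑ a, |ρ s' a - ρ' s' a| ≤ η) :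
    ∀ s', |polRew ρ r s' - polRew ρ' r s'| ≤ η := by
  intro s'
  have e : polRew ρ r s' - polRew ρ' r s' = ∑ a, (ρ s' a - ρ' s' a) * r s' a := by
    rw [polRew, polRew, ← Finset.sum_sub_distrib]
    apply Finset.sum_congr rfl
    intro a _
    ring
  rw [e]
  calc |∑ a, (ρ s' a - ρ' s' a) * r s' a| ≤ ∑ a, |(ρ s' a - ρ' s' a) * r s' a| :=
        Finset.abs_sum_le_sum_abs _ _
    _ ≤ ∑ a, |ρ s' a - ρ' s' a| := by
        apply Finset.sum_le_sum
        intro a _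
        rw [abs_mul]
        have h1 : |r s' a| ≤ 1 := abs_le.2 ⟨by linarith [(hr s' a).1], (hr s' a).2⟩
        nlinarith [abs_nonneg (ρ s' a - ρ' s' a)]
    _ ≤ η := hd s'

theorem polMat_rowdiff {ρ ρ' : S → A → ℝ} (P : S → A → S → ℝ)
    (hP : ∀ s a, P s a ∈ stdSimplex ℝ S) {η : ℝ}
    (hd : ∀ s', ∑ a, |ρ s' a - ρ' s' a| ≤ η) :
    ∀ s', ∑ x, |polMat ρ P s' x - polMat ρ' P s' x| ≤ η := by
  intro s'
  have e : ∀ x, polMat ρ P s' x - polMat ρ' P s' x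
      = ∑ a, (ρ s' a - ρ' s' a) * P s' a x := by
    intro x
    show (∑ a, ρ s' a * P s' a x) - (∑ a, ρ' s' a * P s' a x) = _
    rw [← Finset.sum_sub_distrib]
    apply Finset.sum_congr rfl
    intro a _
    ring
  calc ∑ x, |polMat ρ P s' x - polMat ρ' P s' x|
      = ∑ x, |∑ a, (ρ s' a - ρ' s' a) * P s' a x| := by
        apply Finset.sum_congr rfl
        intro x _
        rw [e x]
    _ ≤ ∑ x, ∑ a, |(ρ s' a - ρ' s' a) * P s' a x| :=
        Finset.sum_le_sum fun x _ => Finset.abs_sum_le_sum_abs _ _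
    _ = ∑ a, ∑ x, |ρ s' a - ρ' s' a| * P s' a x := by
        rw [Finset.sum_comm]
        apply Finset.sum_congr rfl
        intro a _
        apply Finset.sum_congr rfl
        intro x _
        rw [abs_mul, abs_of_nonneg ((hP s' a).1 x)]
    _ = ∑ a, |ρ s' a - ρ' s' a| := by
        apply Finset.sum_congr rfl
        intro a _
        rw [← Finset.mul_sum, (hP s' a).2, mul_one]
    _ ≤ η := hd s'

theorem kernel_rowdiff {ρ : S → A → ℝ} (hρ : ∀ s, ρ s ∈ stdSimplex ℝ A)
    {P P' : S → A → S → ℝ}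
    (hP : ∀ s a, P s a ∈ stdSimplex ℝ S) {η : ℝ}
    (hd : ∀ s' a, ∑ x, |P s' a x - P' s' a x| ≤ η) :
    ∀ s', ∑ x, |polMat ρ P s' x - polMat ρ P' s' x| ≤ η := by
  intro s'
  have e : ∀ x, polMat ρ P s' x - polMat ρ P' s' x
      = ∑ a, ρ s' a * (P s' a x - P' s' a x) := by
    intro x
    show (∑ a, ρ s' a * P s' a x) - (∑ a, ρ s' a * P' s' a x) = _
    rw [← Finset.sum_sub_distrib]
    apply Finset.sum_congr rfl
    intro a _
    ring
  calc ∑ x, |polMat ρ P s' x - polMat ρ P' s' x|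
      = ∑ x, |∑ a, ρ s' a * (P s' a x - P' s' a x)| := by
        apply Finset.sum_congr rfl
        intro x _
        rw [e x]
    _ ≤ ∑ x, ∑ a, |ρ s' a * (P s' a x - P' s' a x)| :=
        Finset.sum_le_sum fun x _ => Finset.abs_sum_le_sum_abs _ _
    _ = ∑ a, ρ s' a * ∑ x, |P s' a x - P' s' a x| := by
        rw [Finset.sum_comm]
        apply Finset.sum_congr rfl
        intro a _
        rw [Finset.mul_sum]
        apply Finset.sum_congr rfl
        intro x _
        rw [abs_mul, abs_of_nonneg ((hρ s').1 a)]
    _ ≤ ∑ a, ρ s' a * η := by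
        apply Finset.sum_le_sum
        intro a _
        exact mul_le_mul_of_nonneg_left (hd s' a) ((hρ s').1 a)
    _ = η := by rw [← Finset.sum_mul, (hρ s').2, one_mul]

/-- Eventual row-distance bound from entrywise convergence. -/
theorem rowdist_ev {ι : Type*} [Fintype ι] {f : ℕ → ι → ℝ} {g : ι → ℝ}
    (h : ∀ x, Tendsto (fun t => f t x) atTop (nhds (g x))) {η : ℝ} (hη : 0 < η) :
    ∀ᶠ t in atTop, ∑ x, |g x - f t x| ≤ η := by
  have ht : Tendsto (fun t => ∑ x, |g x - f t x|) atTop (nhds (∑ x : ι, (0:ℝ))) := by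
    apply tendsto_finset_sum
    intro x _
    have := (tendsto_const_nhds (x := g x) (f := atTop (α := ℕ))).sub (h x)
    have h2 := this.abs
    simpa using h2
  rw [Finset.sum_const, smul_zero] at ht
  exact ht.eventually_le_const hη

end glue3

end Stmt15aux

/-- Pointwise limits of Nash Equilibria of `γ_t`-discounted
distributionally robust Markov games, as `γ_t → 1`, are Nash Equilibria of the
average-reward distributionally robust Markov game. -/
theorem stmt15 {S : Type*} [Fintype S] [DecidableEq S] [Nonempty S]
    {N : ℕ} (A : Fin N → Type*) [∀ i, Fintype (A i)] [∀ i, Nonempty (A i)]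
    (r : Fin N → S → (∀ i, A i) → ℝ)
    (hr : ∀ i s a, r i s a ∈ Set.Icc (0 : ℝ) 1)
    (U : S → (∀ i, A i) → Set (S → ℝ))
    (hU : ∀ s a, (U s a).Nonempty ∧ IsCompact (U s a) ∧ Convex ℝ (U s a) ∧
      U s a ⊆ stdSimplex ℝ S)
    (hirr : Assump1 U)
    (γ : ℕ → ℝ) (hγ : ∀ t, γ t ∈ Set.Ico (0 : ℝ) 1)
    (hγ1 : Filter.Tendsto γ Filter.atTop (nhds 1))
    (πseq : ℕ → ∀ i, S → A i → ℝ)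
    (hπseq : ∀ t i s, πseq t i s ∈ stdSimplex ℝ (A i))
    (hNEseq : ∀ t (i : Fin N) (μ : S → A i → ℝ), (∀ s, μ s ∈ stdSimplex ℝ (A i)) →
      ∀ s, robDiscR U (jointPol (Function.update (πseq t) i μ)) (r i) (γ t) s
        ≤ robDiscR U (jointPol (πseq t)) (r i) (γ t) s)
    (π : ∀ i, S → A i → ℝ) (hπ : ∀ i s, π i s ∈ stdSimplex ℝ (A i))
    (hconv : ∀ (i : Fin N) (s : S) (a : A i),
      Filter.Tendsto (fun t => πseq t i s a) Filter.atTop (nhds (π i s a))) :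
    ∀ (i : Fin N) (μ : S → A i → ℝ), (∀ s, μ s ∈ stdSimplex ℝ (A i)) →
      ∀ s, robAvgR U (jointPol (Function.update π i μ)) (r i) s
        ≤ robAvgR U (jointPol π) (r i) s := by
  classical
  intro i μ hμ s
  have hUsub : ∀ s' a, U s' a ⊆ stdSimplex ℝ S := fun s' a => (hU s' a).2.2.2
  set ρ : S → (∀ j, A j) → ℝ := jointPol (Function.update π i μ) with hρdef
  set σ : S → (∀ j, A j) → ℝ := jointPol π with hσdef
  have hρS : ∀ s', ρ s' ∈ stdSimplex ℝ (∀ j, A j) :=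
    Stmt15aux.jointPol_mem _ (Stmt15aux.update_mem π i μ hπ hμ)
  have hσS : ∀ s', σ s' ∈ stdSimplex ℝ (∀ j, A j) := Stmt15aux.jointPol_mem _ hπ
  have hρsS : ∀ t s', jointPol (Function.update (πseq t) i μ) s' ∈ stdSimplex ℝ (∀ j, A j) :=
    fun t => Stmt15aux.jointPol_mem _ (Stmt15aux.update_mem (πseq t) i μ (hπseq t) hμ)
  have hσsS : ∀ t s', jointPol (πseq t) s' ∈ stdSimplex ℝ (∀ j, A j) :=
    fun t => Stmt15aux.jointPol_mem _ (hπseq t)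
  obtain ⟨K0, hK0, α, hα, hminor⟩ := Stmt15aux.minor U hU hirr
  set CC : ℝ := 2 * K0 * K0 / (Fintype.card S * α) with hCCdef
  have hcard0 : (0:ℝ) < Fintype.card S := by exact_mod_cast Fintype.card_pos
  have hCC0 : 0 ≤ CC := by positivity
  have hβ : ∀ k, 0 ≤ γ k ∧ γ k < 1 := fun k => ⟨(hγ k).1, (hγ k).2⟩
  have hspan : ∀ (τ : S → (∀ j, A j) → ℝ), (∀ s', τ s' ∈ stdSimplex ℝ (∀ j, A j)) →
      ∀ (P : S → (∀ j, A j) → S → ℝ), (∀ s' a, P s' a ∈ U s' a) →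
      ∀ {γ' : ℝ}, 0 ≤ γ' → γ' < 1 →
      Stmt15aux.spanv (Stmt15aux.Vv (polMat τ P) (polRew τ (r i)) γ') ≤ CC := by
    intro τ hτ P hP γ' h0 h1
    exact Stmt15aux.spanv_Vv_le
      (Stmt15aux.polMat_stoch τ P hτ (fun s' a => hUsub s' a (hP s' a)))
      (Stmt15aux.polRew_nonneg τ (r i) hτ (hr i))
      (Stmt15aux.polRew_le_one τ (r i) hτ (hr i)) h0 h1 hK0 hα (hminor τ hτ P hP)
  obtain ⟨P₀d, hP₀d⟩ : ∃ P : S → (∀ j, A j) → S → ℝ, ∀ s' a, P s' a ∈ U s' a :=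
    ⟨fun s' a => (hU s' a).1.some, fun s' a => (hU s' a).1.some_mem⟩
  -- Lipschitz continuity of the robust discounted value in the policy
  have hroblip : ∀ (τ τ' : S → (∀ j, A j) → ℝ),
      (∀ s', τ s' ∈ stdSimplex ℝ (∀ j, A j)) → (∀ s', τ' s' ∈ stdSimplex ℝ (∀ j, A j)) →
      ∀ (t : ℕ) {η : ℝ}, (∀ s', ∑ a, |τ s' a - τ' s' a| ≤ η) → ∀ s'',
      robDiscR U τ (r i) (γ t) s'' ≤ robDiscR U τ' (r i) (γ t) s''
        + (η + η * CC) / (1 - γ t) := by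
    intro τ τ' hτ hτ' t η hd s''
    obtain ⟨h0, h1⟩ := hβ t
    have h1γ : (0:ℝ) < 1 - γ t := by linarith
    have key : ∀ P : S → (∀ j, A j) → S → ℝ, (∀ s' a, P s' a ∈ U s' a) →
        discR τ P (r i) (γ t) s'' ≤ discR τ' P (r i) (γ t) s''
          + (η + η * CC) / (1 - γ t) := by
      intro P hP
      have hPs : ∀ s' a, P s' a ∈ stdSimplex ℝ S := fun s' a => hUsub s' a (hP s' a)
      have hlip := Stmt15aux.Vv_lip
        (Stmt15aux.polMat_stoch τ P hτ hPs) (Stmt15aux.polMat_stoch τ' P hτ' hPs)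
        (Stmt15aux.polRew_nonneg τ (r i) hτ (hr i))
        (Stmt15aux.polRew_le_one τ (r i) hτ (hr i))
        (Stmt15aux.polRew_nonneg τ' (r i) hτ' (hr i))
        (Stmt15aux.polRew_le_one τ' (r i) hτ' (hr i))
        h0 h1 (Stmt15aux.polRew_diff (r i) (hr i) hd)
        (Stmt15aux.polMat_rowdiff P hPs hd) (hspan τ' hτ' P hP h0 h1) s''
      rw [← Stmt15aux.discR_eq_Vv, ← Stmt15aux.discR_eq_Vv] at hlip
      have h3 : |discR τ P (r i) (γ t) s'' - discR τ' P (r i) (γ t) s''|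
          ≤ (η + η * CC) / (1 - γ t) := by
        rw [le_div_iff₀ h1γ]
        calc |discR τ P (r i) (γ t) s'' - discR τ' P (r i) (γ t) s''| * (1 - γ t)
            = (1 - γ t) * |discR τ P (r i) (γ t) s'' - discR τ' P (r i) (γ t) s''| :=
              mul_comm _ _
          _ ≤ η + η * CC := hlip
      have h4 := le_abs_self (discR τ P (r i) (γ t) s'' - discR τ' P (r i) (γ t) s'')
      linarith
    have hle : robDiscR U τ (r i) (γ t) s'' - (η + η * CC) / (1 - γ t)
        ≤ robDiscR U τ' (r i) (γ t) s'' := by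
      apply Stmt15aux.le_robDiscR U hP₀d
      intro P hP
      have h5 := key P hP
      have h6 := Stmt15aux.robDiscR_le U hUsub τ hτ (r i) (hr i) h0 h1 hP s''
      linarith
    linarith
  -- main ε-argument
  apply le_of_forall_pos_le_add
  intro ε hε
  have hCC1 : (0:ℝ) < 1 + CC := by linarith
  set η : ℝ := ε / (8 * (1 + CC)) with hηdef
  have hη0 : 0 < η := by positivity
  have hηsum : η + η * CC = ε / 8 := by
    rw [hηdef]; field_simp
  -- Step A : near-optimal kernel for the average reward of σ
  have hAvgne : Set.Nonempty {x | ∃ P : S → (∀ j, A j) → S → ℝ,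
      (∀ s' a, P s' a ∈ U s' a) ∧ x = avgR σ P (r i) s} := ⟨_, P₀d, hP₀d, rfl⟩
  obtain ⟨x₀, ⟨P₀, hP₀, rfl⟩, hx₀⟩ := exists_lt_of_csInf_lt hAvgne
    (lt_add_of_pos_right (robAvgR U σ (r i) s) (by positivity : (0:ℝ) < ε/8))
  have hP₀s : ∀ s' a, P₀ s' a ∈ stdSimplex ℝ S := fun s' a => hUsub s' a (hP₀ s' a)
  have hQ₀ : Stmt15aux.Stoch (polMat σ P₀) := Stmt15aux.polMat_stoch σ P₀ hσS hP₀s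
  have hv₀0 : ∀ x, 0 ≤ polRew σ (r i) x := Stmt15aux.polRew_nonneg σ (r i) hσS (hr i)
  have hv₀1 : ∀ x, polRew σ (r i) x ≤ 1 := Stmt15aux.polRew_le_one σ (r i) hσS (hr i)
  obtain ⟨w, hw⟩ := Stmt15aux.cesaro_tendsto hQ₀ (polRew σ (r i))
  have havg : avgR σ P₀ (r i) s = w s := (hw s).liminf_eq
  have hws : w s < robAvgR U σ (r i) s + ε/8 := by rw [← havg]; exact hx₀
  have hu0 : ∀ t', 0 ≤ ((polMat σ P₀ ^ t') *ᵥ polRew σ (r i)) s :=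
    fun t' => Stmt15aux.ut_nonneg hQ₀ hv₀0 hv₀1 t' s
  have hu1 : ∀ t', ((polMat σ P₀ ^ t') *ᵥ polRew σ (r i)) s ≤ 1 :=
    fun t' => Stmt15aux.ut_le_one hQ₀ hv₀0 hv₀1 t' s
  have hCup : ∀ᶠ n in atTop,
      (∑ t' ∈ Finset.range n, ((polMat σ P₀ ^ t') *ᵥ polRew σ (r i)) s)
        ≤ (w s + ε/8) * n := by
    have h1 := (hw s).eventually_le_const
      (lt_add_of_pos_right (w s) (by positivity : (0:ℝ) < ε/8))
    filter_upwards [h1, eventually_ge_atTop 1] with n hn h1n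
    have hn0 : (0:ℝ) < n := by exact_mod_cast h1n
    rw [div_le_iff₀ hn0] at hn
    exact hn
  have habel1 := Stmt15aux.abel_upper hu0 hu1 hβ hγ1 (by positivity : (0:ℝ) < ε/8) hCup
  have hdiscσ : ∀ k, discR σ P₀ (r i) (γ k) s
      = ∑' t' : ℕ, γ k ^ t' * ((polMat σ P₀ ^ t') *ᵥ polRew σ (r i)) s := fun k => rfl
  have hevA : ∀ᶠ t' in atTop, (1 - γ t') * robDiscR U σ (r i) (γ t') s
      ≤ robAvgR U σ (r i) s + 3/8 * ε := by
    filter_upwards [habel1] with k hk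
    have h1 : robDiscR U σ (r i) (γ k) s ≤ discR σ P₀ (r i) (γ k) s :=
      Stmt15aux.robDiscR_le U hUsub σ hσS (r i) (hr i) (hβ k).1 (hβ k).2 hP₀ s
    have h1γ : (0:ℝ) ≤ 1 - γ k := by linarith [(hβ k).2]
    have h2 : (1 - γ k) * robDiscR U σ (r i) (γ k) s
        ≤ (1 - γ k) * discR σ P₀ (r i) (γ k) s := mul_le_mul_of_nonneg_left h1 h1γ
    rw [hdiscσ k] at h2
    linarith
  -- Step B : eventual policy closeness
  have hconvσ : ∀ s' (a : ∀ j, A j),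
      Tendsto (fun t' => jointPol (πseq t') s' a) atTop (nhds (σ s' a)) := by
    intro s' a
    apply tendsto_finset_prod
    intro j _
    exact hconv j s' (a j)
  have hconvρ : ∀ s' (a : ∀ j, A j),
      Tendsto (fun t' => jointPol (Function.update (πseq t') i μ) s' a) atTop
        (nhds (ρ s' a)) := by
    intro s' a
    apply tendsto_finset_prod
    intro j _
    rcases eq_or_ne j i with h | h
    · subst h
      simp only [Function.update_self]
      exact tendsto_const_nhds
    · simp only [Function.update_of_ne h]
      exact hconv j s' (a j)
  have hevBσ : ∀ᶠ t' in atTop, ∀ s',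
      ∑ a, |σ s' a - jointPol (πseq t') s' a| ≤ η :=
    eventually_all.2 fun s' => Stmt15aux.rowdist_ev (hconvσ s') hη0
  have hevBρ : ∀ᶠ t' in atTop, ∀ s',
      ∑ a, |ρ s' a - jointPol (Function.update (πseq t') i μ) s' a| ≤ η :=
    eventually_all.2 fun s' => Stmt15aux.rowdist_ev (hconvρ s') hη0
  -- Step D : the main eventual bound
  have hevMain : ∀ᶠ t' in atTop, (1 - γ t') * robDiscR U ρ (r i) (γ t') s
      ≤ robAvgR U σ (r i) s + 5/8 * ε := by
    filter_upwards [hevA, hevBσ, hevBρ] with t' hA hBσ hBρ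
    obtain ⟨h0, h1⟩ := hβ t'
    have h1γ : (0:ℝ) < 1 - γ t' := by linarith
    have hL1 := hroblip ρ (jointPol (Function.update (πseq t') i μ)) hρS (hρsS t') t' hBρ s
    have hNE := hNEseq t' i μ hμ s
    have hL2 := hroblip (jointPol (πseq t')) σ (hσsS t') hσS t'
      (fun s' => by
        have := hBσ s'
        calc ∑ a, |jointPol (πseq t') s' a - σ s' a|
            = ∑ a, |σ s' a - jointPol (πseq t') s' a| := by
              apply Finset.sum_congr rfl
              intro a _
              rw [abs_sub_comm]
          _ ≤ η := this) s
    have ediv : (1 - γ t') * ((η + η * CC) / (1 - γ t')) = η + η * CC :=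
      mul_div_cancel₀ _ (ne_of_gt h1γ)
    have m1 := mul_le_mul_of_nonneg_left hL1 (le_of_lt h1γ)
    have m2 := mul_le_mul_of_nonneg_left hNE (le_of_lt h1γ)
    have m3 := mul_le_mul_of_nonneg_left hL2 (le_of_lt h1γ)
    rw [mul_add, ediv] at m1 m3
    linarith
  -- Step E : near-minimizing kernels for ρ at each discount
  have hsel : ∀ t', ∃ P : S → (∀ j, A j) → S → ℝ, (∀ s' a, P s' a ∈ U s' a) ∧
      (1 - γ t') * discR ρ P (r i) (γ t') s
        ≤ (1 - γ t') * robDiscR U ρ (r i) (γ t') s + ε/8 := by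
    intro t'
    have h1γ : (0:ℝ) < 1 - γ t' := by linarith [(hβ t').2]
    have hne : Set.Nonempty {x | ∃ P : S → (∀ j, A j) → S → ℝ,
        (∀ s' a, P s' a ∈ U s' a) ∧ x = discR ρ P (r i) (γ t') s} := ⟨_, P₀d, hP₀d, rfl⟩
    obtain ⟨x, ⟨P, hP, rfl⟩, hx⟩ := exists_lt_of_csInf_lt hne
      (lt_add_of_pos_right (robDiscR U ρ (r i) (γ t') s)
        (by positivity : (0:ℝ) < ε/8/(1 - γ t')))
    refine ⟨P, hP, ?_⟩
    have h2 := mul_le_mul_of_nonneg_left (le_of_lt hx) (le_of_lt h1γ)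
    rw [mul_add, mul_div_cancel₀ _ (ne_of_gt h1γ)] at h2
    exact h2
  choose Pf hPfU hPfle using hsel
  -- Step F : compact subsequence of kernels
  have hK2 : IsCompact {P : S → (∀ j, A j) → S → ℝ | ∀ s' a, P s' a ∈ U s' a} := by
    have e : {P : S → (∀ j, A j) → S → ℝ | ∀ s' a, P s' a ∈ U s' a}
        = Set.univ.pi (fun s' : S => Set.univ.pi (fun a : (∀ j, A j) => U s' a)) := by
      ext P; simp [Set.mem_pi]
    rw [e]
    exact isCompact_univ_pi fun s' => isCompact_univ_pi fun a => (hU s' a).2.1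
  obtain ⟨Pstar, hPstarX, φ, hφmono, hφtend⟩ := hK2.tendsto_subseq (fun t' => hPfU t')
  have hPstar : ∀ s' a, Pstar s' a ∈ U s' a := hPstarX
  have hφatTop : Tendsto φ atTop atTop := hφmono.tendsto_atTop
  have hγφ : Tendsto (fun k => γ (φ k)) atTop (nhds 1) := hγ1.comp hφatTop
  have hβφ : ∀ k, 0 ≤ γ (φ k) ∧ γ (φ k) < 1 := fun k => hβ (φ k)
  have hcoord : ∀ s' a x, Tendsto (fun k => Pf (φ k) s' a x) atTop
      (nhds (Pstar s' a x)) := by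
    intro s' a x
    have h1 := tendsto_pi_nhds.1 hφtend s'
    have h2 := tendsto_pi_nhds.1 h1 a
    exact tendsto_pi_nhds.1 h2 x
  have hmatconv : ∀ s' x, Tendsto (fun k => polMat ρ (Pf (φ k)) s' x) atTop
      (nhds (polMat ρ Pstar s' x)) := by
    intro s' x
    have e : ∀ (P' : S → (∀ j, A j) → S → ℝ), polMat ρ P' s' x = ∑ a, ρ s' a * P' s' a x :=
      fun P' => rfl
    rw [e Pstar]
    have e2 : (fun k => polMat ρ (Pf (φ k)) s' x)
        = fun k => ∑ a, ρ s' a * Pf (φ k) s' a x := by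
      funext k; rw [e (Pf (φ k))]
    rw [e2]
    apply tendsto_finset_sum
    intro a _
    exact tendsto_const_nhds.mul (hcoord s' a x)
  have hevK : ∀ᶠ k in atTop, ∀ s',
      ∑ x, |polMat ρ Pstar s' x - polMat ρ (Pf (φ k)) s' x| ≤ η :=
    eventually_all.2 fun s' => Stmt15aux.rowdist_ev (fun x => hmatconv s' x) hη0
  -- Step I : eventual bound for the limit kernel along the subsequence
  have hevI : ∀ᶠ k in atTop, (1 - γ (φ k)) * discR ρ Pstar (r i) (γ (φ k)) s
      ≤ robAvgR U σ (r i) s + 7/8 * ε := by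
    filter_upwards [hevK, hφatTop.eventually hevMain] with k hKk hMk
    obtain ⟨h0, h1⟩ := hβφ k
    have h1γ : (0:ℝ) ≤ 1 - γ (φ k) := by linarith
    have hPfs : ∀ s' a, Pf (φ k) s' a ∈ stdSimplex ℝ S :=
      fun s' a => hUsub s' a (hPfU (φ k) s' a)
    have hlipK := Stmt15aux.Vv_lip
      (Stmt15aux.polMat_stoch ρ Pstar hρS (fun s' a => hUsub s' a (hPstar s' a)))
      (Stmt15aux.polMat_stoch ρ (Pf (φ k)) hρS hPfs)
      (Stmt15aux.polRew_nonneg ρ (r i) hρS (hr i))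
      (Stmt15aux.polRew_le_one ρ (r i) hρS (hr i))
      (Stmt15aux.polRew_nonneg ρ (r i) hρS (hr i))
      (Stmt15aux.polRew_le_one ρ (r i) hρS (hr i))
      h0 h1 (η := 0) (fun x => by simp) hKk
      (hspan ρ hρS (Pf (φ k)) (hPfU (φ k)) h0 h1) s
    rw [← Stmt15aux.discR_eq_Vv, ← Stmt15aux.discR_eq_Vv] at hlipK
    have hηCC : η * CC ≤ ε/8 := by nlinarith
    have h2 := hPfle (φ k)
    have h3 := le_abs_self
      (discR ρ Pstar (r i) (γ (φ k)) s - discR ρ (Pf (φ k)) (r i) (γ (φ k)) s)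
    have h4 := mul_le_mul_of_nonneg_left h3 h1γ
    nlinarith
  -- Step J : conclude for the average reward at Pstar
  have hQs : Stmt15aux.Stoch (polMat ρ Pstar) :=
    Stmt15aux.polMat_stoch ρ Pstar hρS (fun s' a => hUsub s' a (hPstar s' a))
  have hv0' : ∀ x, 0 ≤ polRew ρ (r i) x := Stmt15aux.polRew_nonneg ρ (r i) hρS (hr i)
  have hv1' : ∀ x, polRew ρ (r i) x ≤ 1 := Stmt15aux.polRew_le_one ρ (r i) hρS (hr i)
  have hu0' : ∀ t', 0 ≤ ((polMat ρ Pstar ^ t') *ᵥ polRew ρ (r i)) s :=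
    fun t' => Stmt15aux.ut_nonneg hQs hv0' hv1' t' s
  have hu1' : ∀ t', ((polMat ρ Pstar ^ t') *ᵥ polRew ρ (r i)) s ≤ 1 :=
    fun t' => Stmt15aux.ut_le_one hQs hv0' hv1' t' s
  have hfin : avgR ρ Pstar (r i) s ≤ robAvgR U σ (r i) s + 7/8 * ε + 1/8 * ε := by
    by_contra hcon
    push_neg at hcon
    have hliminf : robAvgR U σ (r i) s + 7/8 * ε + 1/8 * ε
        < Filter.liminf (fun n : ℕ =>
            (∑ t' ∈ Finset.range n, ((polMat ρ Pstar ^ t') *ᵥ polRew ρ (r i)) s) / n)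
          Filter.atTop := hcon
    have hbdd : Filter.IsBoundedUnder (· ≥ ·) Filter.atTop (fun n : ℕ =>
        (∑ t' ∈ Finset.range n, ((polMat ρ Pstar ^ t') *ᵥ polRew ρ (r i)) s) / n) :=
      Filter.isBoundedUnder_of ⟨0, fun n => div_nonneg
        (Finset.sum_nonneg fun t' _ => hu0' t') (Nat.cast_nonneg n)⟩
    have hev2 := Filter.eventually_lt_of_lt_liminf hliminf hbdd
    have hC2 : ∀ᶠ n in atTop, (robAvgR U σ (r i) s + 7/8 * ε + 1/8 * ε) * n
        ≤ ∑ t' ∈ Finset.range n, ((polMat ρ Pstar ^ t') *ᵥ polRew ρ (r i)) s := by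
      filter_upwards [hev2, eventually_ge_atTop 1] with n hn h1n
      have hn0 : (0:ℝ) < n := by exact_mod_cast h1n
      rw [lt_div_iff₀ hn0] at hn
      exact le_of_lt hn
    have habel2 := Stmt15aux.abel_lower hu0' hu1' hβφ hγφ
      (by positivity : (0:ℝ) < ε/16) hC2
    have hdiscρ : ∀ k, discR ρ Pstar (r i) (γ (φ k)) s
        = ∑' t' : ℕ, γ (φ k) ^ t' * ((polMat ρ Pstar ^ t') *ᵥ polRew ρ (r i)) s :=
      fun k => rfl
    obtain ⟨k, hk1, hk2⟩ := (habel2.and hevI).exists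
    rw [← hdiscρ k] at hk1
    linarith
  have hfinal := Stmt15aux.robAvgR_le U hUsub ρ hρS (r i) (hr i) hPstar s
  calc robAvgR U ρ (r i) s ≤ avgR ρ Pstar (r i) s := hfinal
    _ ≤ robAvgR U σ (r i) s + ε := by linarith
end

section
/- (ε-Nash Equilibrium transfer from discounted to average reward.) Assume the multi-agent irreducibility assumption (for every deterministic joint policy d : S → A and every kernel P ∈ 𝒫, the matrix P^d is irreducible) and that each 𝒫^a_s is nonempty, compact, and convex. Then for every ε > 0 there exists γ₀ ∈ [0,1) such that for every discount factor γ ∈ (γ₀, 1), every ε-Nash Equilibrium π of the γ-discounted distributionally robust Markov game—meaning (1−γ) V^{(π_{−i}, μ_i)}_{𝒫,γ,i}(s) ≤ (1−γ) V^{π}_{𝒫,γ,i}(s) + ε for all i, all μ_i : S → Δ(A_i), and all s—is a 3ε-Nash Equilibrium of the average-reward distributionally robust Markov game: g^{(π_{−i}, μ_i)}_{𝒫,i}(s) ≤ g^{π}_{𝒫,i}(s) + 3ε for all i, all μ_i, and all s. -/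
open scoped Topology
set_option linter.unusedSectionVars false
set_option maxHeartbeats 1000000


open scoped BigOperators
open Matrix Filter

section spansec
variable {S : Type*} [Fintype S] [DecidableEq S] [Nonempty S]

def RS (M : Matrix S S ℝ) : Prop := (∀ s s', 0 ≤ M s s') ∧ ∀ s, ∑ s', M s s' = 1

noncomputable def spanv (v : S → ℝ) : ℝ :=
  Finset.univ.sup' Finset.univ_nonempty v - Finset.univ.inf' Finset.univ_nonempty v

lemma inf_le_v (v : S → ℝ) (s : S) : Finset.univ.inf' Finset.univ_nonempty v ≤ v s :=
  Finset.inf'_le _ (Finset.mem_univ s)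

lemma v_le_sup (v : S → ℝ) (s : S) : v s ≤ Finset.univ.sup' Finset.univ_nonempty v :=
  Finset.le_sup' _ (Finset.mem_univ s)


lemma spanv_nonneg (v : S → ℝ) : 0 ≤ spanv v := by
  obtain ⟨s⟩ := (inferInstance : Nonempty S)
  have := inf_le_v v s
  have := v_le_sup v s
  unfold spanv; linarith

lemma sub_le_spanv (v : S → ℝ) (s s' : S) : v s - v s' ≤ spanv v := by
  have := v_le_sup v s
  have := inf_le_v v s'
  unfold spanv; linarith

lemma dot_mem (v : S → ℝ) {w : S → ℝ} (hw : w ∈ stdSimplex ℝ S) :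
    Finset.univ.inf' Finset.univ_nonempty v ≤ ∑ u, w u * v u ∧
    ∑ u, w u * v u ≤ Finset.univ.sup' Finset.univ_nonempty v := by
  constructor
  · calc Finset.univ.inf' Finset.univ_nonempty v
        = ∑ u, w u * Finset.univ.inf' Finset.univ_nonempty v := by
          rw [← Finset.sum_mul, hw.2, one_mul]
      _ ≤ ∑ u, w u * v u :=
          Finset.sum_le_sum fun u _ => mul_le_mul_of_nonneg_left (inf_le_v v u) (hw.1 u)
  · calc ∑ u, w u * v u
        ≤ ∑ u, w u * Finset.univ.sup' Finset.univ_nonempty v :=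
          Finset.sum_le_sum fun u _ => mul_le_mul_of_nonneg_left (v_le_sup v u) (hw.1 u)
      _ = Finset.univ.sup' Finset.univ_nonempty v := by
          rw [← Finset.sum_mul, hw.2, one_mul]

lemma abs_sub_dot_le_spanv (v : S → ℝ) {w : S → ℝ} (hw : w ∈ stdSimplex ℝ S) (s : S) :
    |v s - ∑ u, w u * v u| ≤ spanv v := by
  obtain ⟨h1, h2⟩ := dot_mem v hw
  have := v_le_sup v s
  have := inf_le_v v s
  rw [abs_sub_le_iff]
  unfold spanv; constructor <;> linarith

/-- Doeblin contraction of the span seminorm. -/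
lemma spanv_doeblin {Q : Matrix S S ℝ} (hQ : RS Q) {δ : ℝ} (hδ : 0 ≤ δ)
    (h : ∀ s s', δ ≤ Q s s') (v : S → ℝ) :
    spanv (Q *ᵥ v) ≤ (1 - Fintype.card S * δ) * spanv v := by
  -- R := Q - δ, rows sum to 1 - |S|δ
  set c := (1 : ℝ) - Fintype.card S * δ with hc
  have hRsum : ∀ s, ∑ s', (Q s s' - δ) = c := by
    intro s
    rw [Finset.sum_sub_distrib, hQ.2 s]
    simp [hc, mul_comm]
  have hcnn : 0 ≤ c := by
    have := hRsum (Classical.arbitrary S)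
    have h0 : (0:ℝ) ≤ ∑ s', (Q (Classical.arbitrary S) s' - δ) :=
      Finset.sum_nonneg fun t _ => by linarith [h (Classical.arbitrary S) t]
    linarith
  -- (Q v) s = δ * Σ v + (R v) s
  have key : ∀ s, (Q *ᵥ v) s = δ * ∑ u, v u + ∑ u, (Q s u - δ) * v u := by
    intro s
    simp only [Matrix.mulVec, dotProduct]
    rw [Finset.mul_sum]
    rw [← Finset.sum_add_distrib]
    congr 1; ext u; ring
  have hRv_le : ∀ s, ∑ u, (Q s u - δ) * v u ≤ c * Finset.univ.sup' Finset.univ_nonempty v := by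
    intro s
    calc ∑ u, (Q s u - δ) * v u
        ≤ ∑ u, (Q s u - δ) * Finset.univ.sup' Finset.univ_nonempty v :=
          Finset.sum_le_sum fun u _ =>
            mul_le_mul_of_nonneg_left (v_le_sup v u) (by linarith [h s u])
      _ = c * Finset.univ.sup' Finset.univ_nonempty v := by rw [← Finset.sum_mul, hRsum s]
  have hRv_ge : ∀ s, c * Finset.univ.inf' Finset.univ_nonempty v ≤ ∑ u, (Q s u - δ) * v u := by
    intro s
    calc c * Finset.univ.inf' Finset.univ_nonempty v
        = ∑ u, (Q s u - δ) * Finset.univ.inf' Finset.univ_nonempty v := by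
          rw [← Finset.sum_mul, hRsum s]
      _ ≤ ∑ u, (Q s u - δ) * v u :=
          Finset.sum_le_sum fun u _ =>
            mul_le_mul_of_nonneg_left (inf_le_v v u) (by linarith [h s u])
  -- conclude
  have hsub : ∀ s s', (Q *ᵥ v) s - (Q *ᵥ v) s' ≤ c * spanv v := by
    intro s s'
    rw [key s, key s']
    have := hRv_le s
    have := hRv_ge s'
    unfold spanv
    rw [mul_sub]
    linarith
  obtain ⟨s₁, -, hs₁⟩ := Finset.exists_mem_eq_sup' (Finset.univ_nonempty (α := S)) (Q *ᵥ v)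
  obtain ⟨s₂, -, hs₂⟩ := Finset.exists_mem_eq_inf' (Finset.univ_nonempty (α := S)) (Q *ᵥ v)
  have h12 := hsub s₁ s₂
  rw [← hs₁, ← hs₂] at h12
  unfold spanv at h12 ⊢
  linarith

end spansec

section key
variable {S : Type*} [Fintype S] [DecidableEq S] [Nonempty S]

lemma RS.mulVec_le' {M : Matrix S S ℝ} (hM : RS M) {v : S → ℝ} {b : ℝ}
    (hv : ∀ s, v s ≤ b) (s : S) : (M *ᵥ v) s ≤ b := by
  have h1 : (M *ᵥ v) s ≤ ∑ s', M s s' * b :=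
    Finset.sum_le_sum fun t _ => mul_le_mul_of_nonneg_left (hv t) (hM.1 s t)
  simpa [← Finset.sum_mul, hM.2 s] using h1

lemma RS.le_mulVec' {M : Matrix S S ℝ} (hM : RS M) {v : S → ℝ} {a : ℝ}
    (hv : ∀ s, a ≤ v s) (s : S) : a ≤ (M *ᵥ v) s := by
  have h1 : ∑ s', M s s' * a ≤ (M *ᵥ v) s :=
    Finset.sum_le_sum fun t _ => mul_le_mul_of_nonneg_left (hv t) (hM.1 s t)
  simpa [← Finset.sum_mul, hM.2 s] using h1

lemma RS.pow' {M : Matrix S S ℝ} (hM : RS M) (n : ℕ) : RS (M ^ n) := by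
  induction n with
  | zero =>
    refine ⟨fun s s' => ?_, fun s => ?_⟩
    · by_cases h : s = s' <;> simp [pow_zero, Matrix.one_apply, h]
    · simp [pow_zero, Matrix.one_apply]
  | succ n ih =>
    rw [pow_succ]
    refine ⟨fun s s' => ?_, fun s => ?_⟩
    · rw [Matrix.mul_apply]
      exact Finset.sum_nonneg fun t _ => mul_nonneg (ih.1 s t) (hM.1 t s')
    · simp only [Matrix.mul_apply]
      rw [Finset.sum_comm]
      calc ∑ t, ∑ s', (M^n) s t * M t s' = ∑ t, (M^n) s t * ∑ s', M t s' := by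
            simp [Finset.mul_sum]
        _ = 1 := by simp [hM.2, ih.2 s]

lemma iter_dev {B : Matrix S S ℝ} (hB : RS B) {x : S → ℝ} {η : ℝ}
    (hx : ∀ s, |x s - (B *ᵥ x) s| ≤ η) (j : ℕ) (s : S) :
    |x s - ((B ^ j) *ᵥ x) s| ≤ j * η := by
  induction j generalizing s with
  | zero => simp
  | succ j ih =>
    have hps : (B ^ (j+1)) *ᵥ x = (B ^ j) *ᵥ (B *ᵥ x) := by
      rw [Matrix.mulVec_mulVec, ← pow_succ]
    have hd : (B ^ j) *ᵥ x - (B ^ j) *ᵥ (B *ᵥ x) = (B ^ j) *ᵥ (x - B *ᵥ x) := by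
      rw [Matrix.mulVec_sub]
    have hb1 : ((B ^ j) *ᵥ (x - B *ᵥ x)) s ≤ η :=
      (hB.pow' j).mulVec_le' (fun u => by have := hx u; rw [abs_le] at this; exact this.2) s
    have hb2 : -η ≤ ((B ^ j) *ᵥ (x - B *ᵥ x)) s :=
      (hB.pow' j).le_mulVec' (fun u => by have := hx u; rw [abs_le] at this; exact this.1) s
    have heq : x s - ((B ^ (j+1)) *ᵥ x) s
        = (x s - ((B ^ j) *ᵥ x) s) + ((B ^ j) *ᵥ (x - B *ᵥ x)) s := by
      rw [hps]
      have := congrFun hd s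
      simp only [Pi.sub_apply] at this
      linarith
    rw [heq]
    have := ih s
    rw [abs_le] at this ⊢
    push_cast
    constructor <;> [nlinarith [this.1]; nlinarith [this.2]]

/-- Key span bound: a near-fixed vector of a Doeblin-after-K-steps chain has small span. -/
lemma key_span {B : Matrix S S ℝ} (hB : RS B) {x : S → ℝ} {η δ : ℝ} {K : ℕ}
    (hη : 0 ≤ η) (hδ : 0 < δ)
    (hx : ∀ s, |x s - (B *ᵥ x) s| ≤ η)
    (hK : ∀ s s', δ ≤ (B ^ K) s s') :
    spanv x ≤ 2 * K * η / (Fintype.card S * δ) := by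
  have hcard : (0:ℝ) < Fintype.card S := by
    exact_mod_cast Fintype.card_pos
  have hα : (0:ℝ) < Fintype.card S * δ := mul_pos hcard hδ
  have hdoeb := spanv_doeblin (hB.pow' K) hδ.le hK x
  -- spanv x ≤ spanv (B^K x) + 2Kη
  have hstep : spanv x ≤ spanv ((B ^ K) *ᵥ x) + 2 * K * η := by
    obtain ⟨s₁, -, hs₁⟩ := Finset.exists_mem_eq_sup' (Finset.univ_nonempty (α := S)) x
    obtain ⟨s₂, -, hs₂⟩ := Finset.exists_mem_eq_inf' (Finset.univ_nonempty (α := S)) x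
    have h1 := iter_dev hB hx K s₁
    have h2 := iter_dev hB hx K s₂
    rw [abs_le] at h1 h2
    have h3 : ((B ^ K) *ᵥ x) s₁ - ((B ^ K) *ᵥ x) s₂ ≤ spanv ((B ^ K) *ᵥ x) :=
      sub_le_spanv _ s₁ s₂
    unfold spanv at *
    rw [hs₁, hs₂]
    linarith [h1.2, h2.1]
  have hfin : Fintype.card S * δ * spanv x ≤ 2 * K * η := by nlinarith [spanv_nonneg x]
  rw [le_div_iff₀ hα]
  linarith

lemma RS.entry_le_one {M : Matrix S S ℝ} (hM : RS M) (s s' : S) : M s s' ≤ 1 := by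
  have := Finset.single_le_sum (f := fun u => M s u) (fun u _ => hM.1 s u) (Finset.mem_univ s')
  rw [hM.2 s] at this
  exact this

lemma exists_stationary {M : Matrix S S ℝ} (hM : RS M) :
    ∃ ν ∈ stdSimplex ℝ S, ∀ s', ∑ s, ν s * M s s' = ν s' := by
  classical
  obtain ⟨s₀⟩ := (inferInstance : Nonempty S)
  set ν : ℕ → S → ℝ := fun n s' => (∑ t ∈ Finset.range (n+1), (M ^ t) s₀ s') / (n+1) with hν
  have hmem : ∀ n, ν n ∈ stdSimplex ℝ S := by
    intro n
    constructor
    · intro s'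
      apply div_nonneg _ (by positivity)
      exact Finset.sum_nonneg fun t _ => (hM.pow' t).1 s₀ s'
    · simp only [hν]
      rw [← Finset.sum_div, Finset.sum_comm]
      rw [Finset.sum_congr rfl (fun t (_ : t ∈ Finset.range (n+1)) => (hM.pow' t).2 s₀)]
      simp only [Finset.sum_const, Finset.card_range, nsmul_eq_mul, mul_one]
      have : ((n:ℝ)+1) ≠ 0 := by positivity
      field_simp
      norm_cast
  obtain ⟨x, hx, φ, hφ, hconv⟩ := (isCompact_stdSimplex ℝ S).tendsto_subseq hmem
  refine ⟨x, hx, ?_⟩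
  set G : (S → ℝ) → S → ℝ := fun w s' => ∑ s, w s * M s s' with hG
  have hGcont : Continuous G :=
    continuous_pi fun s' => continuous_finset_sum _ fun s _ =>
      (continuous_apply s).mul continuous_const
  have hid : ∀ n s', G (ν n) s'
      = ν n s' + ((M ^ (n+1)) s₀ s' - (M ^ 0) s₀ s') / (n+1) := by
    intro n s'
    have h1 : G (ν n) s' = (∑ t ∈ Finset.range (n+1), (M ^ (t+1)) s₀ s') / (n+1) := by
      calc G (ν n) s'
          = ∑ s, (∑ t ∈ Finset.range (n+1), (M ^ t) s₀ s * M s s') / (n+1) := by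
            simp only [hG, hν]
            exact Finset.sum_congr rfl fun s _ => by rw [div_mul_eq_mul_div, Finset.sum_mul]
        _ = (∑ s, ∑ t ∈ Finset.range (n+1), (M ^ t) s₀ s * M s s') / (n+1) := by
            rw [← Finset.sum_div]
        _ = (∑ t ∈ Finset.range (n+1), ∑ s, (M ^ t) s₀ s * M s s') / (n+1) := by
            rw [Finset.sum_comm]
        _ = (∑ t ∈ Finset.range (n+1), (M ^ (t+1)) s₀ s') / (n+1) := by
            have hss : ∀ t ∈ Finset.range (n+1),
                (∑ s, (M ^ t) s₀ s * M s s') = (M ^ (t+1)) s₀ s' :=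
              fun t _ => by rw [pow_succ, Matrix.mul_apply]
            rw [Finset.sum_congr rfl hss]
    have h2 : ∑ t ∈ Finset.range (n+1), (M ^ (t+1)) s₀ s'
        = ∑ t ∈ Finset.range (n+1), (M ^ t) s₀ s' + ((M ^ (n+1)) s₀ s' - (M ^ 0) s₀ s') := by
      have h3 := Finset.sum_range_succ' (fun t => (M ^ t) s₀ s') (n+1)
      have h4 := Finset.sum_range_succ (fun t => (M ^ t) s₀ s') (n+1)
      rw [h4] at h3
      linarith
    rw [h1, h2, hν]
    ring
  intro s'
  have ha : Tendsto (fun k => ν (φ k) s') atTop (𝓝 (x s')) :=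
    (tendsto_pi_nhds.mp hconv) s'
  have hb : Tendsto (fun k => G (ν (φ k)) s') atTop (𝓝 (G x s')) :=
    (tendsto_pi_nhds.mp ((hGcont.tendsto x).comp hconv)) s'
  have hd : Tendsto (fun k => ((M ^ (φ k + 1)) s₀ s' - (M ^ 0) s₀ s') / (φ k + 1))
      atTop (𝓝 0) := by
    have h0 : Tendsto (fun k : ℕ => 2 / ((k : ℝ) + 1)) atTop (𝓝 0) := by
      have := tendsto_natCast_atTop_atTop (R := ℝ)
      exact Tendsto.div_atTop tendsto_const_nhds (this.atTop_add tendsto_const_nhds)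
    refine squeeze_zero_norm (fun k => ?_) h0
    have hb1 : |(M ^ (φ k + 1)) s₀ s' - (M ^ 0) s₀ s'| ≤ 2 := by
      have e1 := (hM.pow' (φ k + 1)).1 s₀ s'
      have e2 := (hM.pow' (φ k + 1)).entry_le_one s₀ s'
      have e3 := (hM.pow' 0).1 s₀ s'
      have e4 := (hM.pow' 0).entry_le_one s₀ s'
      rw [abs_le]; constructor <;> linarith
    have hpk : (k : ℝ) + 1 ≤ (φ k : ℝ) + 1 := by
      have h5 := hφ.le_apply (x := k)
      have h6 := (Nat.cast_le (α := ℝ)).2 h5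
      linarith
    rw [Real.norm_eq_abs, abs_div, abs_of_pos (by positivity : (0:ℝ) < (φ k : ℝ) + 1)]
    calc |(M ^ (φ k + 1)) s₀ s' - (M ^ 0) s₀ s'| / ((φ k : ℝ) + 1)
        ≤ 2 / ((φ k : ℝ) + 1) :=
          div_le_div_of_nonneg_right hb1 (by positivity) |>.trans_eq rfl
      _ ≤ 2 / ((k : ℝ) + 1) :=
          div_le_div_of_nonneg_left (by norm_num) (by positivity) hpk
  have hc : Tendsto (fun k => G (ν (φ k)) s') atTop (𝓝 (x s' + 0)) := by
    have : (fun k => G (ν (φ k)) s')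
        = fun k => ν (φ k) s' + ((M ^ (φ k + 1)) s₀ s' - (M ^ 0) s₀ s') / (φ k + 1) := by
      funext k; exact hid (φ k) s'
    rw [this]
    exact ha.add hd
  have := tendsto_nhds_unique hb hc
  rw [add_zero] at this
  rw [hG] at this
  exact this

end key

section master
variable {S : Type*} [Fintype S] [DecidableEq S] [Nonempty S]

noncomputable def lz (M : Matrix S S ℝ) : Matrix S S ℝ := (2:ℝ)⁻¹ • (1 + M)

lemma RS.lz {M : Matrix S S ℝ} (hM : RS M) : RS (_root_.lz M) := by
  constructor
  · intro s s'
    have h1 : (0:ℝ) ≤ (1 : Matrix S S ℝ) s s' := by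
      by_cases h : s = s' <;> simp [Matrix.one_apply, h]
    have h2 := hM.1 s s'
    simp only [_root_.lz, Matrix.smul_apply, Matrix.add_apply, smul_eq_mul]
    nlinarith
  · intro s
    simp only [_root_.lz, Matrix.smul_apply, Matrix.add_apply, smul_eq_mul]
    rw [← Finset.mul_sum, Finset.sum_add_distrib]
    have h1 : ∑ s', (1 : Matrix S S ℝ) s s' = 1 := by
      simp [Matrix.one_apply]
    rw [h1, hM.2 s]
    norm_num

lemma lz_mulVec (M : Matrix S S ℝ) (x : S → ℝ) (s : S) :
    ((_root_.lz M) *ᵥ x) s = (x s + (M *ᵥ x) s) / 2 := by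
  simp only [_root_.lz, Matrix.smul_mulVec, Matrix.add_mulVec, Matrix.one_mulVec,
    Pi.smul_apply, Pi.add_apply, smul_eq_mul]
  ring

lemma lz_dev {M : Matrix S S ℝ} {x : S → ℝ} {η : ℝ}
    (h : ∀ s, |x s - (M *ᵥ x) s| ≤ η) (s : S) :
    |x s - ((_root_.lz M) *ᵥ x) s| ≤ η / 2 := by
  rw [lz_mulVec]
  have h2 := h s
  rw [abs_le] at h2 ⊢
  constructor <;> [linarith [h2.1]; linarith [h2.2]]

lemma stat_dot {ν : S → ℝ} {M : Matrix S S ℝ}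
    (hν : ∀ s', ∑ s, ν s * M s s' = ν s') (w : S → ℝ) :
    ∑ s, ν s * (M *ᵥ w) s = ∑ s, ν s * w s := by
  calc ∑ s, ν s * (M *ᵥ w) s
      = ∑ s, ∑ u, ν s * M s u * w u := by
        refine Finset.sum_congr rfl fun s _ => ?_
        simp only [Matrix.mulVec, dotProduct]
        rw [Finset.mul_sum]
        exact Finset.sum_congr rfl fun u _ => by ring
    _ = ∑ u, ∑ s, ν s * M s u * w u := Finset.sum_comm
    _ = ∑ u, (∑ s, ν s * M s u) * w u := by
        refine Finset.sum_congr rfl fun u _ => ?_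
        rw [Finset.sum_mul]
    _ = ∑ u, ν u * w u := by
        refine Finset.sum_congr rfl fun u _ => ?_
        rw [hν u]

lemma stat_dot_pow {ν : S → ℝ} {M : Matrix S S ℝ}
    (hν : ∀ s', ∑ s, ν s * M s s' = ν s') (ρ : S → ℝ) (t : ℕ) :
    ∑ s, ν s * ((M ^ t) *ᵥ ρ) s = ∑ s, ν s * ρ s := by
  induction t with
  | zero => simp
  | succ t ih =>
    have h1 : (M ^ (t+1)) *ᵥ ρ = M *ᵥ ((M ^ t) *ᵥ ρ) := by
      rw [Matrix.mulVec_mulVec, ← pow_succ']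
    rw [h1, stat_dot hν]
    exact ih


end master
section master2
variable {S : Type*} [Fintype S] [DecidableEq S] [Nonempty S]

lemma vec_mem {M : Matrix S S ℝ} {ρ : S → ℝ} (hM : RS M)
    (hρ : ∀ s, 0 ≤ ρ s ∧ ρ s ≤ 1) (t : ℕ) (s : S) :
    0 ≤ ((M ^ t) *ᵥ ρ) s ∧ ((M ^ t) *ᵥ ρ) s ≤ 1 :=
  ⟨(hM.pow' t).le_mulVec' (fun u => (hρ u).1) s,
   (hM.pow' t).mulVec_le' (fun u => (hρ u).2) s⟩

/-- Master analytic lemma: under a Doeblin condition on the lazy chain, the Cesàro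
averages converge to a limit `L` and the normalized Abel sums are uniformly close to `L`. -/
lemma master {M : Matrix S S ℝ} {ρ : S → ℝ} {K : ℕ} {δ : ℝ}
    (hM : RS M) (hρ : ∀ s, 0 ≤ ρ s ∧ ρ s ≤ 1) (hδ : 0 < δ)
    (hK : ∀ s s', δ ≤ ((lz M) ^ K) s s') :
    ∃ L, 0 ≤ L ∧ L ≤ 1 ∧
      (∀ s, Filter.liminf
        (fun n : ℕ => (∑ t ∈ Finset.range n, ((M ^ t) *ᵥ ρ) s) / n) Filter.atTop = L) ∧
      ∀ γ : ℝ, 0 ≤ γ → γ < 1 → ∀ s,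
        |(1 - γ) * ∑' t : ℕ, γ ^ t * ((M ^ t) *ᵥ ρ) s - L|
          ≤ (K : ℝ) * (1 - γ) / (Fintype.card S * δ) := by
  classical
  obtain ⟨ν, hνmem, hνstat⟩ := exists_stationary hM
  set L : ℝ := ∑ s, ν s * ρ s with hL
  have hcard : (0:ℝ) < Fintype.card S := by exact_mod_cast Fintype.card_pos
  have hα : (0:ℝ) < Fintype.card S * δ := mul_pos hcard hδ
  have hL0 : 0 ≤ L := Finset.sum_nonneg fun s _ => mul_nonneg (hνmem.1 s) (hρ s).1
  have hL1 : L ≤ 1 := by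
    calc L ≤ ∑ s, ν s * 1 :=
          Finset.sum_le_sum fun s _ => mul_le_mul_of_nonneg_left (hρ s).2 (hνmem.1 s)
      _ = 1 := by simp [hνmem.2]
  refine ⟨L, hL0, hL1, ?_, ?_⟩
  · -- Cesàro part
    intro s
    set A : ℕ → S → ℝ := fun n s => (∑ t ∈ Finset.range n, ((M ^ t) *ᵥ ρ) s) / n with hA
    have hMA : ∀ n : ℕ, M *ᵥ A n = fun u => (∑ t ∈ Finset.range n, ((M ^ (t+1)) *ᵥ ρ) u) / n := by
      intro n
      funext u
      simp only [hA, Matrix.mulVec, dotProduct]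
      calc ∑ v, M u v * ((∑ t ∈ Finset.range n, ((M ^ t) *ᵥ ρ) v) / n)
          = ∑ v, (∑ t ∈ Finset.range n, M u v * ((M ^ t) *ᵥ ρ) v) / n := by
            refine Finset.sum_congr rfl fun v _ => ?_
            rw [← mul_div_assoc, Finset.mul_sum]
        _ = (∑ v, ∑ t ∈ Finset.range n, M u v * ((M ^ t) *ᵥ ρ) v) / n := by
            rw [← Finset.sum_div]
        _ = (∑ t ∈ Finset.range n, ∑ v, M u v * ((M ^ t) *ᵥ ρ) v) / n := by
            rw [Finset.sum_comm]
        _ = (∑ t ∈ Finset.range n, ((M ^ (t+1)) *ᵥ ρ) u) / n := by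
            congr 1
            refine Finset.sum_congr rfl fun t _ => ?_
            have : (M ^ (t+1)) *ᵥ ρ = M *ᵥ ((M ^ t) *ᵥ ρ) := by
              rw [Matrix.mulVec_mulVec, ← pow_succ']
            rw [this]
            rfl
    have hdev : ∀ n : ℕ, 1 ≤ n → ∀ u, |A n u - (M *ᵥ A n) u| ≤ 1 / n := by
      intro n hn u
      rw [hMA n]
      have htel : ∑ t ∈ Finset.range n, ((M ^ t) *ᵥ ρ) u
          - ∑ t ∈ Finset.range n, ((M ^ (t+1)) *ᵥ ρ) u
          = ((M ^ 0) *ᵥ ρ) u - ((M ^ n) *ᵥ ρ) u := by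
        have h3 := Finset.sum_range_succ' (fun t => ((M ^ t) *ᵥ ρ) u) n
        have h4 := Finset.sum_range_succ (fun t => ((M ^ t) *ᵥ ρ) u) n
        rw [h3] at h4
        linarith
      have h5 : A n u - (∑ t ∈ Finset.range n, ((M ^ (t+1)) *ᵥ ρ) u) / n
          = (((M ^ 0) *ᵥ ρ) u - ((M ^ n) *ᵥ ρ) u) / n := by
        rw [hA]
        rw [div_sub_div_same, htel]
      rw [h5, abs_div]
      have hnp : (0:ℝ) < n := by exact_mod_cast hn
      rw [abs_of_pos hnp]
      apply div_le_div_of_nonneg_right _ hnp.le |>.trans_eq rfl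
      have e1 := vec_mem hM hρ 0 u
      have e2 := vec_mem hM hρ n u
      rw [abs_le]; constructor <;> [linarith [e1.1, e2.2]; linarith [e1.2, e2.1]]
    have hpin : ∀ n : ℕ, 1 ≤ n → ∑ u, ν u * A n u = L := by
      intro n hn
      have hnp : (0:ℝ) < n := by exact_mod_cast hn
      calc ∑ u, ν u * A n u
          = ∑ u, (∑ t ∈ Finset.range n, ν u * ((M ^ t) *ᵥ ρ) u) / n := by
            refine Finset.sum_congr rfl fun u _ => ?_
            rw [hA]
            rw [← mul_div_assoc, Finset.mul_sum]
        _ = (∑ u, ∑ t ∈ Finset.range n, ν u * ((M ^ t) *ᵥ ρ) u) / n := by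
            rw [← Finset.sum_div]
        _ = (∑ t ∈ Finset.range n, ∑ u, ν u * ((M ^ t) *ᵥ ρ) u) / n := by
            rw [Finset.sum_comm]
        _ = (∑ t ∈ Finset.range n, L) / n := by
            congr 1
            exact Finset.sum_congr rfl fun t _ => stat_dot_pow hνstat ρ t
        _ = L := by
            rw [Finset.sum_const, Finset.card_range, nsmul_eq_mul]
            field_simp
    have hbound : ∀ n : ℕ, 1 ≤ n → ∀ u, |A n u - L| ≤ ((K : ℝ) / (Fintype.card S * δ)) / n := by
      intro n hn u
      have hnp : (0:ℝ) < n := by exact_mod_cast hn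
      have hspan : spanv (A n) ≤ 2 * K * (1 / n / 2) / (Fintype.card S * δ) := by
        apply key_span hM.lz (by positivity) hδ _ hK
        intro u'
        exact lz_dev (fun u'' => hdev n hn u'') u'
      have habs : |A n u - ∑ v, ν v * A n v| ≤ spanv (A n) :=
        abs_sub_dot_le_spanv (A n) hνmem u
      rw [hpin n hn] at habs
      calc |A n u - L| ≤ 2 * K * (1 / n / 2) / (Fintype.card S * δ) := habs.trans hspan
        _ = ((K : ℝ) / (Fintype.card S * δ)) / n := by
            field_simp
    -- convergence
    have htend : Filter.Tendsto (fun n : ℕ => A n s) Filter.atTop (𝓝 L) := by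
      have h0 : Filter.Tendsto (fun n : ℕ => A n s - L) Filter.atTop (𝓝 0) := by
        have hev : ∀ᶠ n : ℕ in Filter.atTop,
            ‖A n s - L‖ ≤ ((K : ℝ) / (Fintype.card S * δ)) / n := by
          filter_upwards [Filter.eventually_ge_atTop 1] with n hn
          exact hbound n hn s
        exact squeeze_zero_norm' hev (tendsto_const_div_atTop_nhds_zero_nat _)
      have := h0.add (tendsto_const_nhds (x := L))
      simpa using this
    exact htend.liminf_eq
  · -- Abel part
    intro γ hγ0 hγ1 s
    have hγpow : ∀ t : ℕ, (0:ℝ) ≤ γ ^ t := fun t => pow_nonneg hγ0 t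
    have hsum : ∀ u, Summable (fun t : ℕ => γ ^ t * ((M ^ t) *ᵥ ρ) u) := by
      intro u
      refine Summable.of_nonneg_of_le
        (fun t => mul_nonneg (hγpow t) (vec_mem hM hρ t u).1)
        (fun t => ?_)
        (summable_geometric_of_lt_one hγ0 hγ1)
      have := (vec_mem hM hρ t u).2
      nlinarith [hγpow t, (vec_mem hM hρ t u).1]
    set x : S → ℝ := fun u => (1 - γ) * ∑' t : ℕ, γ ^ t * ((M ^ t) *ᵥ ρ) u with hx
    have hgeo : ∑' t : ℕ, γ ^ t = (1 - γ)⁻¹ := tsum_geometric_of_lt_one hγ0 hγ1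
    have hxmem : ∀ u, 0 ≤ x u ∧ x u ≤ 1 := by
      intro u
      constructor
      · apply mul_nonneg (by linarith)
        exact tsum_nonneg fun t => mul_nonneg (hγpow t) (vec_mem hM hρ t u).1
      · have h1 : ∑' t : ℕ, γ ^ t * ((M ^ t) *ᵥ ρ) u ≤ (1 - γ)⁻¹ := by
          rw [← hgeo]
          refine Summable.tsum_le_tsum (fun t => ?_) (hsum u) (summable_geometric_of_lt_one hγ0 hγ1)
          have := (vec_mem hM hρ t u).2
          nlinarith [hγpow t, (vec_mem hM hρ t u).1]
        rw [hx]
        calc (1 - γ) * ∑' t : ℕ, γ ^ t * ((M ^ t) *ᵥ ρ) u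
            ≤ (1 - γ) * (1 - γ)⁻¹ := by
              apply mul_le_mul_of_nonneg_left h1 (by linarith)
          _ = 1 := mul_inv_cancel₀ (by linarith)
    -- Bellman equation
    have hMx : ∀ u, (M *ᵥ x) u = (1 - γ) * ∑ v, M u v * ∑' t : ℕ, γ ^ t * ((M ^ t) *ᵥ ρ) v := by
      intro u
      simp only [hx, Matrix.mulVec, dotProduct]
      rw [Finset.mul_sum]
      exact Finset.sum_congr rfl fun v _ => by ring
    have hshift : ∀ u, ∑' t : ℕ, γ ^ t * ((M ^ t) *ᵥ ρ) u
        = ρ u + γ * ∑ v, M u v * ∑' t : ℕ, γ ^ t * ((M ^ t) *ᵥ ρ) v := by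
      intro u
      rw [Summable.tsum_eq_zero_add (hsum u)]
      have hz : γ ^ 0 * ((M ^ 0) *ᵥ ρ) u = ρ u := by
        simp [Matrix.one_mulVec]
      rw [hz]
      congr 1
      have hterm : ∀ t : ℕ, γ ^ (t+1) * ((M ^ (t+1)) *ᵥ ρ) u
          = ∑ v, M u v * (γ * (γ ^ t * ((M ^ t) *ᵥ ρ) v)) := by
        intro t
        have h1 : (M ^ (t+1)) *ᵥ ρ = M *ᵥ ((M ^ t) *ᵥ ρ) := by
          rw [Matrix.mulVec_mulVec, ← pow_succ']
        rw [h1]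
        simp only [Matrix.mulVec, dotProduct]
        rw [Finset.mul_sum]
        exact Finset.sum_congr rfl fun v _ => by ring
      calc ∑' t : ℕ, γ ^ (t+1) * ((M ^ (t+1)) *ᵥ ρ) u
          = ∑' t : ℕ, ∑ v, M u v * (γ * (γ ^ t * ((M ^ t) *ᵥ ρ) v)) := tsum_congr hterm
        _ = ∑ v, ∑' t : ℕ, M u v * (γ * (γ ^ t * ((M ^ t) *ᵥ ρ) v)) := by
            apply Summable.tsum_finsetSum
            intro v _
            exact ((hsum v).mul_left γ).mul_left (M u v)
        _ = ∑ v, M u v * (γ * ∑' t : ℕ, γ ^ t * ((M ^ t) *ᵥ ρ) v) := by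
            refine Finset.sum_congr rfl fun v _ => ?_
            rw [tsum_mul_left, tsum_mul_left]
        _ = γ * ∑ v, M u v * ∑' t : ℕ, γ ^ t * ((M ^ t) *ᵥ ρ) v := by
            rw [Finset.mul_sum]
            exact Finset.sum_congr rfl fun v _ => by ring
    have hbell : ∀ u, x u = (1 - γ) * ρ u + γ * (M *ᵥ x) u := by
      intro u
      have hxu : x u = (1 - γ) * ∑' t : ℕ, γ ^ t * ((M ^ t) *ᵥ ρ) u := rfl
      rw [hxu, hMx u, hshift u]
      ring
    have hdev : ∀ u, |x u - (M *ᵥ x) u| ≤ 1 - γ := by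
      intro u
      have h1 : x u - (M *ᵥ x) u = (1 - γ) * (ρ u - (M *ᵥ x) u) := by
        rw [hbell u]; ring
      rw [h1, abs_mul, abs_of_nonneg (by linarith : (0:ℝ) ≤ 1 - γ)]
      have h2 : |ρ u - (M *ᵥ x) u| ≤ 1 := by
        have e1 := hρ u
        have e2 : 0 ≤ (M *ᵥ x) u := hM.le_mulVec' (fun v => (hxmem v).1) u
        have e3 : (M *ᵥ x) u ≤ 1 := hM.mulVec_le' (fun v => (hxmem v).2) u
        rw [abs_le]; constructor <;> linarith [e1.1, e1.2]
      nlinarith [abs_nonneg (ρ u - (M *ᵥ x) u)]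
    have hspan : spanv x ≤ 2 * K * ((1 - γ) / 2) / (Fintype.card S * δ) := by
      apply key_span hM.lz (by linarith) hδ _ hK
      intro u
      exact lz_dev hdev u
    have hpin : ∑ u, ν u * x u = L := by
      calc ∑ u, ν u * x u
          = (1 - γ) * ∑ u, ∑' t : ℕ, ν u * (γ ^ t * ((M ^ t) *ᵥ ρ) u) := by
            rw [Finset.mul_sum]
            refine Finset.sum_congr rfl fun u _ => ?_
            have hxu : x u = (1 - γ) * ∑' t : ℕ, γ ^ t * ((M ^ t) *ᵥ ρ) u := rfl
            rw [hxu, tsum_mul_left]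
            ring
        _ = (1 - γ) * ∑' t : ℕ, ∑ u, ν u * (γ ^ t * ((M ^ t) *ᵥ ρ) u) := by
            congr 1
            exact (Summable.tsum_finsetSum fun u _ => (hsum u).mul_left (ν u)).symm
        _ = (1 - γ) * ∑' t : ℕ, γ ^ t * L := by
            congr 1
            refine tsum_congr fun t => ?_
            calc ∑ u, ν u * (γ ^ t * ((M ^ t) *ᵥ ρ) u)
                = γ ^ t * ∑ u, ν u * ((M ^ t) *ᵥ ρ) u := by
                  rw [Finset.mul_sum]
                  exact Finset.sum_congr rfl fun u _ => by ring
              _ = γ ^ t * L := by rw [stat_dot_pow hνstat ρ t]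
        _ = L := by
            rw [tsum_mul_right, hgeo]
            have hne : (1:ℝ) - γ ≠ 0 := by linarith
            field_simp
    have habs : |x s - L| ≤ spanv x := by
      have := abs_sub_dot_le_spanv x hνmem s
      rwa [hpin] at this
    calc |(1 - γ) * ∑' t : ℕ, γ ^ t * ((M ^ t) *ᵥ ρ) s - L| = |x s - L| := by rw [hx]
      _ ≤ 2 * K * ((1 - γ) / 2) / (Fintype.card S * δ) := habs.trans hspan
      _ = (K : ℝ) * (1 - γ) / (Fintype.card S * δ) := by ring

end master2


section comb
variable {S : Type*} [Fintype S] [DecidableEq S] [Nonempty S]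

lemma lz_nonneg {M : Matrix S S ℝ} (hM0 : ∀ s s', 0 ≤ M s s') (s s' : S) :
    0 ≤ lz M s s' := by
  have h1 : (0:ℝ) ≤ (1 : Matrix S S ℝ) s s' := by
    by_cases h : s = s' <;> simp [Matrix.one_apply, h]
  have := hM0 s s'
  simp only [lz, Matrix.smul_apply, Matrix.add_apply, smul_eq_mul]
  nlinarith

lemma lz_diag_pos {M : Matrix S S ℝ} (hM0 : ∀ s s', 0 ≤ M s s') (s : S) :
    0 < lz M s s := by
  have := hM0 s s
  simp only [lz, Matrix.smul_apply, Matrix.add_apply, smul_eq_mul, Matrix.one_apply_eq]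
  nlinarith

lemma pow_nonneg_mat {B : Matrix S S ℝ} (hB : ∀ s s', 0 ≤ B s s') (n : ℕ) (s s' : S) :
    0 ≤ (B ^ n) s s' := by
  induction n generalizing s s' with
  | zero => by_cases h : s = s' <;> simp [pow_zero, Matrix.one_apply, h]
  | succ n ih =>
    rw [pow_succ, Matrix.mul_apply]
    exact Finset.sum_nonneg fun u _ => mul_nonneg (ih s u) (hB u s')

lemma pow_succ_pos_of_pos {B : Matrix S S ℝ} (hB : ∀ s s', 0 ≤ B s s')
    (hdiag : ∀ s, 0 < B s s) {n : ℕ} {s s' : S} (h : 0 < (B ^ n) s s') :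
    0 < (B ^ (n+1)) s s' := by
  rw [pow_succ, Matrix.mul_apply]
  have h1 : (B ^ n) s s' * B s' s' ≤ ∑ u, (B ^ n) s u * B u s' :=
    Finset.single_le_sum
      (f := fun u => (B ^ n) s u * B u s')
      (fun u _ => mul_nonneg (pow_nonneg_mat hB n s u) (hB u s'))
      (Finset.mem_univ s')
  nlinarith [hdiag s']

lemma pow_pos_mono {B : Matrix S S ℝ} (hB : ∀ s s', 0 ≤ B s s')
    (hdiag : ∀ s, 0 < B s s) {n m : ℕ} (hnm : n ≤ m) {s s' : S}
    (h : 0 < (B ^ n) s s') : 0 < (B ^ m) s s' := by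
  induction m with
  | zero =>
    have hn0 : n = 0 := Nat.le_zero.mp hnm
    subst hn0; exact h
  | succ m ih =>
    rcases Nat.lt_or_ge n (m+1) with h1 | h1
    · exact pow_succ_pos_of_pos hB hdiag (ih (by omega))
    · have : n = m + 1 := by omega
      exact this ▸ h

lemma lzpow_ge {M : Matrix S S ℝ} (hM0 : ∀ s s', 0 ≤ M s s') (k : ℕ) (s s' : S) :
    ((2:ℝ)⁻¹) ^ k * (M ^ k) s s' ≤ ((lz M) ^ k) s s' := by
  induction k generalizing s s' with
  | zero => simp
  | succ k ih =>
    rw [pow_succ, pow_succ, pow_succ, Matrix.mul_apply, Matrix.mul_apply, Finset.mul_sum]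
    apply Finset.sum_le_sum
    intro u _
    have h1 : (2:ℝ)⁻¹ * M u s' ≤ lz M u s' := by
      have h2 : (0:ℝ) ≤ (1 : Matrix S S ℝ) u s' := by
        by_cases h : u = s' <;> simp [Matrix.one_apply, h]
      simp only [lz, Matrix.smul_apply, Matrix.add_apply, smul_eq_mul]
      nlinarith
    have h3 := ih s u
    have h4 : (0:ℝ) ≤ (2:ℝ)⁻¹ ^ k * (M ^ k) s u :=
      mul_nonneg (by positivity) (pow_nonneg_mat hM0 k s u)
    have h5 : (0:ℝ) ≤ (2:ℝ)⁻¹ * M u s' :=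
      mul_nonneg (by norm_num) (hM0 u s')
    have h6 : (0:ℝ) ≤ ((lz M) ^ k) s u := pow_nonneg_mat (lz_nonneg hM0) k s u
    calc (2:ℝ)⁻¹ ^ k * (2:ℝ)⁻¹ * ((M ^ k) s u * M u s')
        = ((2:ℝ)⁻¹ ^ k * (M ^ k) s u) * ((2:ℝ)⁻¹ * M u s') := by ring
      _ ≤ ((lz M) ^ k) s u * ((2:ℝ)⁻¹ * M u s') := mul_le_mul_of_nonneg_right h3 h5
      _ ≤ ((lz M) ^ k) s u * lz M u s' := mul_le_mul_of_nonneg_left h1 h6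

/-- Uniform positivity exponent. -/
lemma lzpow_pos_of_irred {M : Matrix S S ℝ} (hM0 : ∀ s s', 0 ≤ M s s')
    (hirr : IrredM M) (s s' : S) :
    0 < ((lz M) ^ (Fintype.card S * Fintype.card S)) s s' := by
  classical
  set B := lz M with hBdef
  set K := Fintype.card S * Fintype.card S with hKdef
  have hB : ∀ s s', 0 ≤ B s s' := lz_nonneg hM0
  have hdiag : ∀ s, 0 < B s s := lz_diag_pos hM0
  set F : ℕ → Finset (S × S) :=
    fun n => Finset.univ.filter (fun p : S × S => 0 < (B ^ n) p.1 p.2) with hF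
  have hFmem : ∀ n p, p ∈ F n ↔ 0 < (B ^ n) p.1 p.2 := by
    intro n p
    simp [hF]
  have hFmono : ∀ n, F n ⊆ F (n+1) := by
    intro n p hp
    rw [hFmem] at hp ⊢
    exact pow_succ_pos_of_pos hB hdiag hp
  -- propagation of stabilization
  have hprop : ∀ n, F (n+1) = F n → ∀ m, n ≤ m → F m = F n := by
    intro n heq m hm
    induction m with
    | zero =>
      have : n = 0 := Nat.le_zero.mp hm
      rw [this]
    | succ m ih =>
      rcases Nat.lt_or_ge n (m+1) with h1 | h1
      · have hFm : F m = F n := ih (by omega)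
        -- show F (m+1) = F m
        have hsub : F (m+1) ⊆ F m := by
          intro p hp
          rw [hFmem] at hp
          rw [pow_succ, Matrix.mul_apply] at hp
          obtain ⟨u, -, hu⟩ := Finset.exists_lt_of_sum_lt (f := fun _ => (0:ℝ))
            (by simpa using hp)
          have hu1 : 0 < (B ^ m) p.1 u ∧ 0 < B u p.2 := by
            have h2 := pow_nonneg_mat hB m p.1 u
            have h3 := hB u p.2
            constructor <;> nlinarith
          -- (p.1, u) ∈ F m = F n, so (p.1,u) ∈ F (n+1) = F n as well; climb:
          have hmem1 : (p.1, u) ∈ F m := (hFmem m _).2 hu1.1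
          rw [hFm, ← heq] at hmem1
          have hpos1 : 0 < (B ^ (n+1)) p.1 u := (hFmem (n+1) _).1 hmem1
          -- then B^(n+2) p.1 p.2 ≥ B^(n+1) p.1 u * B u p.2 > 0, i.e. (p) ∈ F (n+2)?
          -- better: directly show 0 < (B ^ m) p.1 p.2 via F m = F n trick:
          -- 0 < B^(n+1) p.1 u and 0 < B u p.2 gives 0 < B^(n+2)... not ≤ m.
          -- Instead: from hu1: (B^m) p.1 u > 0 and B u p.2 > 0 ⇒ 0 < B^(m+1) p.1 p.2 (already known hp).
          -- We need p ∈ F m: use hmem1 ∈ F n, i.e. 0 < B^n p.1 u; then 0 < B^(n+1) p.1 p.2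
          have hposn : 0 < (B ^ n) p.1 u := by
            rw [heq] at hmem1
            exact (hFmem n _).1 hmem1
          have hpos2 : 0 < (B ^ (n+1)) p.1 p.2 := by
            rw [pow_succ, Matrix.mul_apply]
            have hle : (B ^ n) p.1 u * B u p.2 ≤ ∑ v, (B ^ n) p.1 v * B v p.2 :=
              Finset.single_le_sum
                (f := fun v => (B ^ n) p.1 v * B v p.2)
                (fun v _ => mul_nonneg (pow_nonneg_mat hB n p.1 v) (hB v p.2))
                (Finset.mem_univ u)
            nlinarith [hu1.2]
          have : p ∈ F (n+1) := (hFmem (n+1) _).2 hpos2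
          rw [heq] at this
          rw [hFm]
          exact this
        exact le_antisymm (hsub.trans (le_of_eq hFm)) ((hFm ▸ hFmono m : F n ⊆ F (m+1)))
      · have : n = m + 1 := by omega
        rw [this]
  -- pigeonhole: some step stabilizes before K
  have hpig : ∃ n, n ≤ K ∧ F (n+1) = F n := by
    by_contra hcon
    push_neg at hcon
    have hgrow : ∀ n, n ≤ K + 1 → n ≤ (F n).card := by
      intro n hn
      induction n with
      | zero => omega
      | succ n ih =>
        have h1 := ih (by omega)
        have h2 : F n ⊂ F (n+1) :=
          (hFmono n).ssubset_of_ne (fun h => hcon n (by omega) h.symm)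
        have := Finset.card_lt_card h2
        omega
    have h5 := hgrow (K+1) (le_refl _)
    have h6 : (F (K+1)).card ≤ Fintype.card S * Fintype.card S := by
      have := Finset.card_le_card (Finset.subset_univ (F (K+1)))
      simpa [Fintype.card_prod] using this.trans_eq (by simp [Fintype.card_prod])
    omega
  obtain ⟨n, hnK, hstab⟩ := hpig
  -- irreducibility gives some k ≥ 1 with M^k positive
  obtain ⟨k, hk1, hkpos⟩ := hirr s s'
  have hBk : 0 < (B ^ k) s s' := by
    have := lzpow_ge hM0 k s s'
    have h7 : (0:ℝ) < (2:ℝ)⁻¹ ^ k * (M ^ k) s s' := by positivity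
    linarith
  rcases le_or_gt k K with hkK | hkK
  · exact pow_pos_mono hB hdiag hkK hBk
  · have h8 : F k = F n := hprop n hstab k (by omega)
    have h9 : F K = F n := hprop n hstab K hnK
    have h10 : (s, s') ∈ F k := (hFmem k _).2 hBk
    rw [h8, ← h9] at h10
    exact (hFmem K _).1 h10
end comb

section pol
variable {S : Type*} [Fintype S] [DecidableEq S] [Nonempty S]
variable {N : ℕ} {A : Fin N → Type*} [∀ i, Fintype (A i)] [∀ i, Nonempty (A i)]

lemma jointPol_mem {π : ∀ i, S → A i → ℝ} (hπ : ∀ i s, π i s ∈ stdSimplex ℝ (A i)) (s : S) :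
    jointPol π s ∈ stdSimplex ℝ (∀ i, A i) := by
  constructor
  · intro a
    exact Finset.prod_nonneg fun i _ => (hπ i s).1 (a i)
  · calc ∑ a : ∀ i, A i, jointPol π s a
        = ∏ i, ∑ x : A i, π i s x := (Fintype.prod_sum fun i x => π i s x).symm
      _ = 1 := by
        rw [Finset.prod_congr rfl fun i _ => (hπ i s).2]
        simp

lemma polMat_RS {Q : Type*} [Fintype Q] {π : S → Q → ℝ} {P : S → Q → S → ℝ}
    (hπ : ∀ s, π s ∈ stdSimplex ℝ Q) (hP : ∀ s a, P s a ∈ stdSimplex ℝ S) :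
    RS (polMat π P) := by
  constructor
  · intro s s'
    exact Finset.sum_nonneg fun a _ => mul_nonneg ((hπ s).1 a) ((hP s a).1 s')
  · intro s
    simp only [polMat, Matrix.of_apply]
    rw [Finset.sum_comm]
    calc ∑ a, ∑ s', π s a * P s a s' = ∑ a, π s a * ∑ s', P s a s' := by
          simp [Finset.mul_sum]
      _ = 1 := by
        rw [Finset.sum_congr rfl fun a _ => by rw [(hP s a).2, mul_one]]
        exact (hπ s).2

lemma polRew_mem {Q : Type*} [Fintype Q] {π : S → Q → ℝ} {r : S → Q → ℝ}
    (hπ : ∀ s, π s ∈ stdSimplex ℝ Q) (hr : ∀ s a, 0 ≤ r s a ∧ r s a ≤ 1) (s : S) :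
    0 ≤ (∑ a, π s a * r s a) ∧ (∑ a, π s a * r s a) ≤ 1 := by
  constructor
  · exact Finset.sum_nonneg fun a _ => mul_nonneg ((hπ s).1 a) (hr s a).1
  · calc ∑ a, π s a * r s a ≤ ∑ a, π s a * 1 :=
        Finset.sum_le_sum fun a _ => mul_le_mul_of_nonneg_left (hr s a).2 ((hπ s).1 a)
      _ = 1 := by rw [Finset.sum_congr rfl fun a _ => mul_one _]; exact (hπ s).2

lemma pow_nonneg_mat' {B : Matrix S S ℝ} (hB : ∀ s s', 0 ≤ B s s') (n : ℕ) (s s' : S) :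
    0 ≤ (B ^ n) s s' := by
  induction n generalizing s s' with
  | zero => by_cases h : s = s' <;> simp [pow_zero, Matrix.one_apply, h]
  | succ n ih =>
    rw [pow_succ, Matrix.mul_apply]
    exact Finset.sum_nonneg fun u _ => mul_nonneg (ih s u) (hB u s')

/-- Entrywise domination passes to powers. -/
lemma pow_dom {X Y : Matrix S S ℝ} {c : ℝ} (hc : 0 ≤ c)
    (hY : ∀ s s', 0 ≤ Y s s') (hX : ∀ s s', 0 ≤ X s s')
    (h : ∀ s s', c * Y s s' ≤ X s s') (k : ℕ) (s s' : S) :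
    c ^ k * (Y ^ k) s s' ≤ (X ^ k) s s' := by
  induction k generalizing s s' with
  | zero => simp
  | succ k ih =>
    rw [pow_succ, pow_succ, pow_succ, Matrix.mul_apply, Matrix.mul_apply, Finset.mul_sum]
    apply Finset.sum_le_sum
    intro u _
    have hYk : 0 ≤ (Y ^ k) s u := pow_nonneg_mat' hY k s u
    have hXk : 0 ≤ (X ^ k) s u := pow_nonneg_mat' hX k s u
    calc c ^ k * c * ((Y ^ k) s u * Y u s')
        = (c ^ k * (Y ^ k) s u) * (c * Y u s') := by ring
      _ ≤ (X ^ k) s u * (c * Y u s') :=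
          mul_le_mul_of_nonneg_right (ih s u) (mul_nonneg hc (hY u s'))
      _ ≤ (X ^ k) s u * X u s' := mul_le_mul_of_nonneg_left (h u s') hXk

end pol


section pol2
variable {S : Type*} [Fintype S] [DecidableEq S] [Nonempty S]

lemma polMat_irred {Q : Type*} [Fintype Q] [Nonempty Q] {π : S → Q → ℝ} {P : S → Q → S → ℝ}
    (hπ : ∀ s, π s ∈ stdSimplex ℝ Q) (hP : ∀ s a, P s a ∈ stdSimplex ℝ S)
    (hd : ∀ d : S → Q, IrredM (Matrix.of fun s s' => P s (d s) s')) :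
    IrredM (polMat π P) := by
  classical
  have hex : ∀ s, ∃ a, 0 < π s a := by
    intro s
    by_contra hcon
    push_neg at hcon
    have : ∑ a, π s a ≤ 0 := Finset.sum_nonpos fun a _ => hcon a
    rw [(hπ s).2] at this
    linarith
  set d : S → Q := fun s => Classical.choose (hex s) with hdd
  have hdpos : ∀ s, 0 < π s (d s) := fun s => Classical.choose_spec (hex s)
  set c : ℝ := Finset.univ.inf' Finset.univ_nonempty (fun s => π s (d s)) with hcc
  have hc : 0 < c := by
    rw [hcc, Finset.lt_inf'_iff]
    exact fun s _ => hdpos s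
  set Y : Matrix S S ℝ := Matrix.of fun s s' => P s (d s) s' with hY
  have hY0 : ∀ s s', 0 ≤ Y s s' := fun s s' => (hP s (d s)).1 s'
  have hX0 : ∀ s s', 0 ≤ polMat π P s s' :=
    fun s s' => Finset.sum_nonneg fun a _ => mul_nonneg ((hπ s).1 a) ((hP s a).1 s')
  have hdom : ∀ s s', c * Y s s' ≤ polMat π P s s' := by
    intro s s'
    have h1 : π s (d s) * P s (d s) s' ≤ ∑ a, π s a * P s a s' :=
      Finset.single_le_sum
        (f := fun a => π s a * P s a s')
        (fun a _ => mul_nonneg ((hπ s).1 a) ((hP s a).1 s'))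
        (Finset.mem_univ (d s))
    have h2 : c * Y s s' ≤ π s (d s) * P s (d s) s' := by
      apply mul_le_mul_of_nonneg_right _ (hY0 s s')
      exact Finset.inf'_le _ (Finset.mem_univ s)
    exact h2.trans h1
  intro s s'
  obtain ⟨k, hk1, hkpos⟩ := hd d s s'
  refine ⟨k, hk1, ?_⟩
  have h3 := pow_dom hc.le hY0 hX0 hdom k s s'
  have h4 : 0 < c ^ k * (Y ^ k) s s' := mul_pos (pow_pos hc k) hkpos
  linarith
end pol2


/-- **ε-Nash Equilibrium transfer from discounted to average
reward.** For every `ε > 0` there is a threshold `γ₀ < 1` such that for every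
discount factor `γ ∈ (γ₀, 1)`, every `ε`-Nash Equilibrium of the `γ`-discounted
distributionally robust Markov game (for the normalized values `(1−γ)V`) is a
`3ε`-Nash Equilibrium of the average-reward game. -/
theorem stmt16 {S : Type*} [Fintype S] [DecidableEq S] [Nonempty S]
    {N : ℕ} (A : Fin N → Type*) [∀ i, Fintype (A i)] [∀ i, Nonempty (A i)]
    (r : Fin N → S → (∀ i, A i) → ℝ)
    (hr : ∀ i s a, r i s a ∈ Set.Icc (0 : ℝ) 1)
    (U : S → (∀ i, A i) → Set (S → ℝ))
    (hU : ∀ s a, (U s a).Nonempty ∧ IsCompact (U s a) ∧ Convex ℝ (U s a) ∧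
      U s a ⊆ stdSimplex ℝ S)
    (hirr : Assump1 U) :
    ∀ ε > (0 : ℝ), ∃ γ₀ ∈ Set.Ico (0 : ℝ) 1, ∀ γ : ℝ, γ₀ < γ → γ < 1 →
      ∀ π : ∀ i, S → A i → ℝ, (∀ i s, π i s ∈ stdSimplex ℝ (A i)) →
      (∀ (i : Fin N) (μ : S → A i → ℝ), (∀ s, μ s ∈ stdSimplex ℝ (A i)) →
        ∀ s, (1 - γ) * robDiscR U (jointPol (Function.update π i μ)) (r i) γ s
          ≤ (1 - γ) * robDiscR U (jointPol π) (r i) γ s + ε) →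
      ∀ (i : Fin N) (μ : S → A i → ℝ), (∀ s, μ s ∈ stdSimplex ℝ (A i)) →
        ∀ s, robAvgR U (jointPol (Function.update π i μ)) (r i) s
          ≤ robAvgR U (jointPol π) (r i) s + 3 * ε := by
  classical
  intro ε hε
  set K : ℕ := Fintype.card S * Fintype.card S with hKdef
  set PolSet : Set (∀ i, S → A i → ℝ) :=
    Set.pi Set.univ (fun i => Set.pi Set.univ fun _s : S => stdSimplex ℝ (A i)) with hPolSetdef
  set KerSet : Set (S → (∀ i, A i) → S → ℝ) :=
    Set.pi Set.univ (fun s => Set.pi Set.univ fun a => U s a) with hKerSetdef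
  have hPolC : IsCompact PolSet :=
    isCompact_univ_pi fun i => isCompact_univ_pi fun _s => isCompact_stdSimplex ℝ _
  have hKerC : IsCompact KerSet :=
    isCompact_univ_pi fun s => isCompact_univ_pi fun a => (hU s a).2.1
  have hPolmem : ∀ π' : ∀ i, S → A i → ℝ,
      π' ∈ PolSet ↔ ∀ i s, π' i s ∈ stdSimplex ℝ (A i) := by
    intro π'
    simp [hPolSetdef, Set.mem_pi]
  have hKermem : ∀ P : S → (∀ i, A i) → S → ℝ,
      P ∈ KerSet ↔ ∀ s a, P s a ∈ U s a := by
    intro P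
    simp [hKerSetdef, Set.mem_pi]
  set Φ : (∀ i, S → A i → ℝ) × (S → (∀ i, A i) → S → ℝ) → Matrix S S ℝ :=
    fun q => polMat (jointPol q.1) q.2 with hΦdef
  have hΦc : Continuous Φ := by
    apply continuous_matrix
    intro u u'
    simp only [hΦdef, polMat, jointPol, Matrix.of_apply]
    apply continuous_finset_sum
    intro a _
    have h1 : Continuous fun q : (∀ i, S → A i → ℝ) × (S → (∀ i, A i) → S → ℝ) =>
        ∏ j, q.1 j u (a j) := by
      apply continuous_finset_prod
      intro j _
      exact (continuous_apply (a j)).comp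
        ((continuous_apply u).comp ((continuous_apply j).comp continuous_fst))
    have h2 : Continuous fun q : (∀ i, S → A i → ℝ) × (S → (∀ i, A i) → S → ℝ) =>
        q.2 u a u' :=
      (continuous_apply u').comp
        ((continuous_apply a).comp ((continuous_apply u).comp continuous_snd))
    exact h1.mul h2
  have hlzc : ∀ k : ℕ, Continuous fun q => (lz (Φ q)) ^ k := by
    intro k
    induction k with
    | zero => simpa [pow_zero] using (continuous_const : Continuous fun _ => (1 : Matrix S S ℝ))
    | succ k ih =>
      have hlz : Continuous fun q => lz (Φ q) := by
        have : Continuous fun q => (2:ℝ)⁻¹ • ((1 : Matrix S S ℝ) + Φ q) :=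
          Continuous.const_smul (g := fun q => (1 : Matrix S S ℝ) + Φ q) (continuous_const.add hΦc) ((2:ℝ)⁻¹)
        simpa [lz] using this
      simpa [pow_succ] using ih.matrix_mul hlz
  have hQfacts : ∀ q ∈ PolSet ×ˢ KerSet, RS (Φ q) ∧ ∀ u u', 0 < ((lz (Φ q)) ^ K) u u' := by
    rintro ⟨π', P⟩ ⟨hπ', hP⟩
    have hπ'2 : ∀ j u, π' j u ∈ stdSimplex ℝ (A j) := (hPolmem π').1 hπ'
    have hP2 : ∀ u a, P u a ∈ U u a := (hKermem P).1 hP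
    have hPs : ∀ u a, P u a ∈ stdSimplex ℝ S := fun u a => (hU u a).2.2.2 (hP2 u a)
    have hRS : RS (polMat (jointPol π') P) := polMat_RS (jointPol_mem hπ'2) hPs
    refine ⟨hRS, ?_⟩
    have hirr2 : IrredM (polMat (jointPol π') P) :=
      polMat_irred (jointPol_mem hπ'2) hPs (fun d => hirr d P hP2)
    exact lzpow_pos_of_irred hRS.1 hirr2
  obtain ⟨P₀, hP₀⟩ : ∃ P₀ : S → (∀ i, A i) → S → ℝ, ∀ u a, P₀ u a ∈ U u a :=
    ⟨fun u a => (hU u a).1.choose, fun u a => (hU u a).1.choose_spec⟩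
  set π₀ : ∀ i, S → A i → ℝ := fun i _ _ => (Fintype.card (A i) : ℝ)⁻¹ with hπ₀def
  have hπ₀mem : ∀ j u, π₀ j u ∈ stdSimplex ℝ (A j) := by
    intro j u
    constructor
    · intro a
      simp only [hπ₀def]
      positivity
    · simp only [hπ₀def, Finset.sum_const, Finset.card_univ, nsmul_eq_mul]
      have hcard : (0:ℝ) < Fintype.card (A j) := by exact_mod_cast Fintype.card_pos
      field_simp
  have hne : (PolSet ×ˢ KerSet).Nonempty :=
    ⟨(π₀, P₀), (hPolmem π₀).2 hπ₀mem, (hKermem P₀).2 hP₀⟩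
  have hmins : ∀ p : S × S, ∃ m : ℝ, 0 < m ∧
      ∀ q ∈ PolSet ×ˢ KerSet, m ≤ ((lz (Φ q)) ^ K) p.1 p.2 := by
    intro p
    have hfc : Continuous fun q => ((lz (Φ q)) ^ K) p.1 p.2 :=
      (hlzc K).matrix_elem p.1 p.2
    obtain ⟨q₀, hq₀, hqmin⟩ := (hPolC.prod hKerC).exists_isMinOn hne hfc.continuousOn
    exact ⟨_, (hQfacts q₀ hq₀).2 p.1 p.2, fun q hq => hqmin hq⟩
  choose δf hδfpos hδfle using hmins
  set δ : ℝ := Finset.univ.inf' Finset.univ_nonempty δf with hδdef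
  have hδpos : 0 < δ := by
    rw [hδdef, Finset.lt_inf'_iff]
    exact fun p _ => hδfpos p
  have hδall : ∀ q ∈ PolSet ×ˢ KerSet, ∀ u u', δ ≤ ((lz (Φ q)) ^ K) u u' := by
    intro q hq u u'
    exact le_trans (Finset.inf'_le _ (Finset.mem_univ (u, u'))) (hδfle (u, u') q hq)
  set α : ℝ := (Fintype.card S : ℝ) * δ with hαdef
  have hα : 0 < α := mul_pos (by exact_mod_cast Fintype.card_pos) hδpos
  set C : ℝ := K / α with hCdef
  have hC0 : 0 ≤ C := div_nonneg (by positivity) hα.le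
  refine ⟨max (1/2) (1 - ε / (C + 1)), ⟨le_trans (by norm_num) (le_max_left _ _), ?_⟩, ?_⟩
  · apply max_lt (by norm_num)
    have : 0 < ε / (C + 1) := div_pos hε (by linarith)
    linarith
  intro γ hγl hγu π hπ hNE i μ hμ s
  have hγhalf : (1:ℝ)/2 < γ := lt_of_le_of_lt (le_max_left _ _) hγl
  have hγ0 : (0:ℝ) ≤ γ := by linarith
  have h1γ : (0:ℝ) < 1 - γ := by linarith
  have heb : C * (1 - γ) ≤ ε := by
    have h1 : 1 - ε / (C + 1) ≤ max (1/2) (1 - ε / (C + 1)) := le_max_right _ _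
    have h2 : 1 - γ ≤ ε / (C + 1) := by linarith
    have h3 : C * (1 - γ) ≤ C * (ε / (C + 1)) := mul_le_mul_of_nonneg_left h2 hC0
    have h4 : C * (ε / (C + 1)) ≤ ε := by
      rw [mul_div_assoc', div_le_iff₀ (by linarith : (0:ℝ) < C + 1)]
      nlinarith
    linarith
  have key : ∀ (π' : ∀ i, S → A i → ℝ), (∀ j u, π' j u ∈ stdSimplex ℝ (A j)) →
      ∀ (P : S → (∀ i, A i) → S → ℝ), (∀ u a, P u a ∈ U u a) →
      ∃ L, 0 ≤ L ∧ L ≤ 1 ∧ (∀ u, avgR (jointPol π') P (r i) u = L) ∧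
        (∀ u, |(1 - γ) * discR (jointPol π') P (r i) γ u - L| ≤ C * (1 - γ)) := by
    intro π' hπ' P hP
    have hq : (π', P) ∈ PolSet ×ˢ KerSet := ⟨(hPolmem π').2 hπ', (hKermem P).2 hP⟩
    obtain ⟨hRS, -⟩ := hQfacts (π', P) hq
    have hδq := hδall (π', P) hq
    have hΦeq : Φ (π', P) = polMat (jointPol π') P := rfl
    rw [hΦeq] at hRS hδq
    have hρ : ∀ u, 0 ≤ polRew (jointPol π') (r i) u ∧ polRew (jointPol π') (r i) u ≤ 1 :=
      polRew_mem (jointPol_mem hπ') (fun u a => ⟨(hr i u a).1, (hr i u a).2⟩)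
    obtain ⟨L, h0, h1, hces, habel⟩ := master hRS hρ hδpos hδq
    refine ⟨L, h0, h1, fun u => hces u, fun u => ?_⟩
    have hb := habel γ hγ0 hγu u
    calc |(1 - γ) * discR (jointPol π') P (r i) γ u - L|
        ≤ (K : ℝ) * (1 - γ) / ((Fintype.card S : ℝ) * δ) := hb
      _ = C * (1 - γ) := by rw [hCdef, hαdef]; ring
  have hdisc0 : ∀ (π' : ∀ i, S → A i → ℝ), (∀ j u, π' j u ∈ stdSimplex ℝ (A j)) →
      ∀ (P : S → (∀ i, A i) → S → ℝ), (∀ u a, P u a ∈ U u a) →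
      0 ≤ discR (jointPol π') P (r i) γ s := by
    intro π' hπ' P hP
    have hRS : RS (polMat (jointPol π') P) :=
      polMat_RS (jointPol_mem hπ') (fun u a => (hU u a).2.2.2 (hP u a))
    have hρ : ∀ u, 0 ≤ polRew (jointPol π') (r i) u ∧ polRew (jointPol π') (r i) u ≤ 1 :=
      polRew_mem (jointPol_mem hπ') (fun u a => ⟨(hr i u a).1, (hr i u a).2⟩)
    apply tsum_nonneg
    intro t
    exact mul_nonneg (pow_nonneg hγ0 t)
      ((hRS.pow' t).le_mulVec' (fun v => (hρ v).1) s)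
  have hrob : ∀ (π' : ∀ i, S → A i → ℝ), (∀ j u, π' j u ∈ stdSimplex ℝ (A j)) →
      robAvgR U (jointPol π') (r i) s ≤ (1 - γ) * robDiscR U (jointPol π') (r i) γ s + ε ∧
      (1 - γ) * robDiscR U (jointPol π') (r i) γ s ≤ robAvgR U (jointPol π') (r i) s + ε := by
    intro π' hπ'
    set SA := {x | ∃ P : S → (∀ i, A i) → S → ℝ,
      (∀ u a, P u a ∈ U u a) ∧ x = avgR (jointPol π') P (r i) s} with hSAdef
    set SD := {x | ∃ P : S → (∀ i, A i) → S → ℝ,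
      (∀ u a, P u a ∈ U u a) ∧ x = discR (jointPol π') P (r i) γ s} with hSDdef
    have hAv : robAvgR U (jointPol π') (r i) s = sInf SA := rfl
    have hDv : robDiscR U (jointPol π') (r i) γ s = sInf SD := rfl
    have hSAne : SA.Nonempty := ⟨_, P₀, hP₀, rfl⟩
    have hSDne : SD.Nonempty := ⟨_, P₀, hP₀, rfl⟩
    have hSAbdd : BddBelow SA := by
      refine ⟨0, ?_⟩
      rintro x ⟨P, hP, rfl⟩
      obtain ⟨L, h0, h1, hces, -⟩ := key π' hπ' P hP
      rw [hces s]
      exact h0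
    have hSDbdd : BddBelow SD := by
      refine ⟨0, ?_⟩
      rintro x ⟨P, hP, rfl⟩
      exact hdisc0 π' hπ' P hP
    rw [hAv, hDv]
    constructor
    · have hstep : ∀ x ∈ SD, sInf SA - ε ≤ (1 - γ) * x := by
        rintro x ⟨P, hP, rfl⟩
        obtain ⟨L, h0, h1, hces, habel⟩ := key π' hπ' P hP
        have hinf : sInf SA ≤ L := csInf_le hSAbdd ⟨P, hP, (hces s).symm⟩
        have hb := habel s
        rw [abs_le] at hb
        linarith [hb.1, heb]
      have h2 : (sInf SA - ε) / (1 - γ) ≤ sInf SD := by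
        apply le_csInf hSDne
        intro x hx
        rw [div_le_iff₀ h1γ]
        have := hstep x hx
        linarith [mul_comm (1 - γ) x ▸ this]
      rw [div_le_iff₀ h1γ] at h2
      nlinarith [h2]
    · have hstep : ∀ x ∈ SA, (1 - γ) * sInf SD - ε ≤ x := by
        rintro x ⟨P, hP, rfl⟩
        obtain ⟨L, h0, h1, hces, habel⟩ := key π' hπ' P hP
        have hd : sInf SD ≤ discR (jointPol π') P (r i) γ s := csInf_le hSDbdd ⟨P, hP, rfl⟩
        have hmul : (1 - γ) * sInf SD ≤ (1 - γ) * discR (jointPol π') P (r i) γ s :=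
          mul_le_mul_of_nonneg_left hd h1γ.le
        have hb := habel s
        rw [abs_le] at hb
        rw [hces s]
        linarith [hb.2, heb]
      have := le_csInf hSAne hstep
      linarith
  have hupd : ∀ j u, Function.update π i μ j u ∈ stdSimplex ℝ (A j) := by
    intro j u
    by_cases hji : j = i
    · subst hji
      rw [Function.update_self]
      exact hμ u
    · rw [Function.update_of_ne hji]
      exact hπ j u
  obtain ⟨hA1, -⟩ := hrob (Function.update π i μ) hupd
  obtain ⟨-, hB2⟩ := hrob π hπ
  have hNE' := hNE i μ hμ s
  linarith
end
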